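/- arXiv:2310.14144 — 6 statements merged into one kernel-verified Lean document; each statement's English description precedes it below -/
import Mathlib

section
/- Let (A, B, C, D, E, F, K) solve the Riccati ODE system on [0, T]. Then for every t ∈ [0, T] the 2×2 matrix with rows (A_t, B_t) and (B_t, C_t) is positive semidefinite and 0 ≤ C_t ≤ 1/λ_t; moreover B_t + λ_t C_t > 0 for every t ∈ [0, T). -/
open Set MeasureTheory Matrix Filter Topology

/-- Market parameters: time horizon `T > 0` and bounded measurable coefficient functions
`β, λ, ε, θ, σ : [0,T] → ℝ` with `β > 0`, `σ ≥ 0`, `λ` and `ε` positive and bounded away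
from zero, `λ` differentiable with bounded derivative `lam'`, and the no-arbitrage
condition `2β_t + γ̇_t > 0` where `γ = log λ` (so `γ̇ = λ'/λ`). -/
structure Params where
  T : ℝ
  beta : ℝ → ℝ
  lam : ℝ → ℝ
  lam' : ℝ → ℝ
  eps : ℝ → ℝ
  theta : ℝ → ℝ
  sigma : ℝ → ℝ
  hT : 0 < T
  hbeta_meas : Measurable beta
  htheta_meas : Measurable theta
  hsigma_meas : Measurable sigma
  heps_meas : Measurable eps
  hbeta_bdd : ∃ M, ∀ t ∈ Icc 0 T, |beta t| ≤ M
  htheta_bdd : ∃ M, ∀ t ∈ Icc 0 T, |theta t| ≤ M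
  hsigma_bdd : ∃ M, ∀ t ∈ Icc 0 T, |sigma t| ≤ M
  hbeta_pos : ∀ t ∈ Icc 0 T, 0 < beta t
  hsigma_nonneg : ∀ t ∈ Icc 0 T, 0 ≤ sigma t
  heps_lb : ∃ c, 0 < c ∧ ∀ t ∈ Icc 0 T, c ≤ eps t
  heps_ub : ∃ M, ∀ t ∈ Icc 0 T, eps t ≤ M
  hlam_lb : ∃ c, 0 < c ∧ ∀ t ∈ Icc 0 T, c ≤ lam t
  hlam_ub : ∃ M, ∀ t ∈ Icc 0 T, lam t ≤ M
  hlam_deriv : ∀ t, HasDerivAt lam (lam' t) t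
  hlam'_bdd : ∃ M, ∀ t, |lam' t| ≤ M
  hnoarb : ∀ t ∈ Icc 0 T, 0 < 2 * beta t + lam' t / lam t

/-- `γ̇_t = λ'_t / λ_t`, the derivative of `γ = log λ`. -/
noncomputable def gammaDot (P : Params) (t : ℝ) : ℝ := P.lam' t / P.lam t

/-- The backward Riccati ODE system on `[0,T]` with its terminal conditions. -/
def IsRiccatiSol (P : Params) (A B C D E F K : ℝ → ℝ) : Prop :=
  (∀ t ∈ Icc (0:ℝ) P.T,
      HasDerivAt A ((P.eps t)⁻¹ * (A t + P.lam t * B t) ^ 2) t) ∧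
  A P.T = P.lam P.T ∧
  (∀ t ∈ Icc (0:ℝ) P.T,
      HasDerivAt B ((P.eps t)⁻¹ * (A t + P.lam t * B t) * (B t + P.lam t * C t)
        + P.beta t * B t) t) ∧
  B P.T = -1 ∧
  (∀ t ∈ Icc (0:ℝ) P.T,
      HasDerivAt C ((P.eps t)⁻¹ * (B t + P.lam t * C t) ^ 2 + 2 * P.beta t * C t
        - (P.lam t)⁻¹ * (2 * P.beta t + gammaDot P t)) t) ∧
  C P.T = (P.lam P.T)⁻¹ ∧
  (∀ t ∈ Icc (0:ℝ) P.T,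
      HasDerivAt D ((P.eps t)⁻¹ * (A t + P.lam t * B t) * (D t + P.lam t * E t)
        - P.theta t * (A t - D t)) t) ∧
  D P.T = 0 ∧
  (∀ t ∈ Icc (0:ℝ) P.T,
      HasDerivAt E ((P.eps t)⁻¹ * (B t + P.lam t * C t) * (D t + P.lam t * E t)
        - P.theta t * (B t - E t) + P.beta t * E t) t) ∧
  E P.T = 0 ∧
  (∀ t ∈ Icc (0:ℝ) P.T,
      HasDerivAt F ((P.eps t)⁻¹ * (D t + P.lam t * E t) ^ 2
        - 2 * P.theta t * (D t - F t)) t) ∧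
  F P.T = 0 ∧
  (∀ t ∈ Icc (0:ℝ) P.T,
      HasDerivAt K (-(P.sigma t) ^ 2 * (A t - 2 * D t + F t) / 2) t) ∧
  K P.T = 0

lemma Params.lam_pos (P : Params) : ∀ t ∈ Icc (0:ℝ) P.T, 0 < P.lam t := by
  obtain ⟨c, hc, h⟩ := P.hlam_lb
  exact fun t ht => lt_of_lt_of_le hc (h t ht)

lemma Params.eps_pos (P : Params) : ∀ t ∈ Icc (0:ℝ) P.T, 0 < P.eps t := by
  obtain ⟨c, hc, h⟩ := P.heps_lb
  exact fun t ht => lt_of_lt_of_le hc (h t ht)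

lemma C_le_inv (P : Params) (A B C : ℝ → ℝ)
    (hC : ∀ t ∈ Icc (0:ℝ) P.T,
      HasDerivAt C ((P.eps t)⁻¹ * (B t + P.lam t * C t) ^ 2 + 2 * P.beta t * C t
        - (P.lam t)⁻¹ * (2 * P.beta t + gammaDot P t)) t)
    (hCT : C P.T = (P.lam P.T)⁻¹) :
    ∀ t ∈ Icc (0:ℝ) P.T, C t ≤ (P.lam t)⁻¹ := by
  intro t₀ ht₀
  by_contra hcon
  push_neg at hcon
  obtain ⟨u, hu_def⟩ : ∃ u : ℝ → ℝ, u = fun t => (P.lam t)⁻¹ - C t := ⟨_, rfl⟩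
  have hu : ∀ t ∈ Icc (0:ℝ) P.T, HasDerivAt u
      (2 * P.beta t * u t - (P.eps t)⁻¹ * (B t + P.lam t * C t)^2) t := by
    intro t ht
    have hne : P.lam t ≠ 0 := ne_of_gt (P.lam_pos t ht)
    have h1 : HasDerivAt (fun s => (P.lam s)⁻¹) (-(P.lam' t) / (P.lam t)^2) t :=
      (P.hlam_deriv t).inv hne
    have h2 := h1.sub (hC t ht)
    rw [hu_def]
    refine h2.congr_deriv ?_
    simp only [hu_def, gammaDot]
    field_simp
    ring
  have huT : u P.T = 0 := by simp [hu_def, hCT]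
  have hu_neg : u t₀ < 0 := by rw [hu_def]; simp only []; linarith only [hcon]
  have hu_cont : ∀ t ∈ Icc (0:ℝ) P.T, ContinuousAt u t := fun t ht => (hu t ht).continuousAt
  have hIccsub : Icc t₀ P.T ⊆ Icc 0 P.T := Icc_subset_Icc ht₀.1 le_rfl
  set S := {t | t ∈ Icc t₀ P.T ∧ 0 ≤ u t} with hS_def
  have hSsub : S ⊆ Icc t₀ P.T := fun t ht => ht.1
  have hScl : IsClosed S := by
    have hSeq : S = Icc t₀ P.T ∩ u ⁻¹' (Ici 0) := by ext t; simp [hS_def]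
    rw [hSeq]
    exact ContinuousOn.preimage_isClosed_of_isClosed
      (fun t ht => (hu_cont t (hIccsub ht)).continuousWithinAt) isClosed_Icc isClosed_Ici
  have hScomp : IsCompact S := isCompact_Icc.of_isClosed_subset hScl hSsub
  have hSne : S.Nonempty := ⟨P.T, ⟨⟨ht₀.2, le_rfl⟩, le_of_eq huT.symm⟩⟩
  set s := sInf S with hs_def
  have hsS : s ∈ S := hScomp.sInf_mem hSne
  have hs_lb : ∀ t, t₀ ≤ t → t ≤ P.T → t < s → u t < 0 := by
    intro t h1 h2 hts
    by_contra h; push_neg at h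
    exact absurd (csInf_le hScomp.bddBelow ⟨⟨h1, h2⟩, h⟩) (not_le.2 hts)
  have ht₀s : t₀ < s := by
    rcases lt_or_eq_of_le hsS.1.1 with h | h
    · exact h
    · exact absurd hsS.2 (not_le.2 (by rw [← h]; exact hu_neg))
  have hsub2 : Icc t₀ s ⊆ Icc 0 P.T := Icc_subset_Icc ht₀.1 hsS.1.2
  have hanti : AntitoneOn u (Icc t₀ s) := by
    apply antitoneOn_of_deriv_nonpos (convex_Icc _ _)
    · exact fun t ht => (hu_cont t (hsub2 ht)).continuousWithinAt
    · intro x hx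
      rw [interior_Icc] at hx
      exact ((hu x (hsub2 (Ioo_subset_Icc_self hx))).differentiableAt).differentiableWithinAt
    · intro x hx
      rw [interior_Icc] at hx
      have hx' : x ∈ Icc (0:ℝ) P.T := hsub2 (Ioo_subset_Icc_self hx)
      rw [(hu x hx').deriv]
      have hux : u x < 0 := hs_lb x (le_of_lt hx.1) hx'.2 hx.2
      have hβ := P.hbeta_pos x hx'
      have hε : 0 ≤ (P.eps x)⁻¹ := le_of_lt (inv_pos.2 (P.eps_pos x hx'))
      have h1 : 2 * P.beta x * u x < 0 := by
        have := mul_neg_of_pos_of_neg hβ hux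
        linarith only [this]
      linarith only [h1, mul_nonneg hε (sq_nonneg (B x + P.lam x * C x))]
  have := hanti (left_mem_Icc.2 (le_of_lt ht₀s)) (right_mem_Icc.2 (le_of_lt ht₀s)) (le_of_lt ht₀s)
  linarith only [hsS.2, this, hu_neg]

lemma slope_neg_right {q : ℝ → ℝ} {q' s : ℝ} (h : HasDerivAt q q' s) (hq' : q' < 0) :
    ∀ᶠ t in 𝓝[>] s, q t < q s := by
  have h2 : Tendsto (slope q s) (𝓝[>] s) (𝓝 q') :=
    (hasDerivAt_iff_tendsto_slope.1 h).mono_left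
      (nhdsWithin_mono _ (fun t ht => ne_of_gt ht))
  filter_upwards [h2.eventually_lt_const hq', self_mem_nhdsWithin] with t hlt (ht : s < t)
  have := mul_neg_of_neg_of_pos hlt (sub_pos.2 ht)
  rw [slope_def_field] at this
  have h3 : t - s ≠ 0 := by linarith
  rw [div_mul_cancel₀ _ h3] at this
  linarith

lemma slope_neg_left {q : ℝ → ℝ} {q' s : ℝ} (h : HasDerivAt q q' s) (hq' : q' < 0) :
    ∀ᶠ t in 𝓝[<] s, q s < q t := by
  have h2 : Tendsto (slope q s) (𝓝[<] s) (𝓝 q') :=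
    (hasDerivAt_iff_tendsto_slope.1 h).mono_left
      (nhdsWithin_mono _ (fun t ht => ne_of_lt ht))
  filter_upwards [h2.eventually_lt_const hq', self_mem_nhdsWithin] with t hlt (ht : t < s)
  have := mul_pos_of_neg_of_neg hlt (sub_neg.2 ht)
  rw [slope_def_field] at this
  have h3 : t - s ≠ 0 := by intro h'; rw [h'] at this; simp at this
  rw [div_mul_cancel₀ _ h3] at this
  linarith

lemma quad_pos {a b c x₁ x₂ : ℝ} (ha : 0 < a) (hd : 0 < a*c - b^2) (hx : 0 < x₁^2 + x₂^2) :
    0 < (a*x₁^2 + b*(2*x₁*x₂)) + c*x₂^2 := by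
  rcases eq_or_ne x₂ 0 with h | h
  · subst h
    have : x₁^2 > 0 := by nlinarith
    nlinarith
  · have h2 : 0 < x₂^2 := by positivity
    nlinarith [sq_nonneg (a*x₁ + b*x₂), mul_pos hd h2]

set_option maxHeartbeats 2000000 in
lemma psd_aux (P : Params) (A B C : ℝ → ℝ)
    (hA : ∀ t ∈ Icc (0:ℝ) P.T,
      HasDerivAt A ((P.eps t)⁻¹ * (A t + P.lam t * B t) ^ 2) t)
    (hAT : A P.T = P.lam P.T)
    (hBT : B P.T = -1)
    (hB : ∀ t ∈ Icc (0:ℝ) P.T,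
      HasDerivAt B ((P.eps t)⁻¹ * (A t + P.lam t * B t) * (B t + P.lam t * C t)
        + P.beta t * B t) t)
    (hC : ∀ t ∈ Icc (0:ℝ) P.T,
      HasDerivAt C ((P.eps t)⁻¹ * (B t + P.lam t * C t) ^ 2 + 2 * P.beta t * C t
        - (P.lam t)⁻¹ * (2 * P.beta t + gammaDot P t)) t)
    (hCT : C P.T = (P.lam P.T)⁻¹) :
    ∀ t ∈ Icc (0:ℝ) P.T, 0 ≤ A t ∧ 0 ≤ C t ∧ (B t)^2 ≤ A t * C t := by
  obtain ⟨ε₀, hε₀, hεlb⟩ := P.heps_lb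
  obtain ⟨Λ₀, hΛ₀⟩ := P.hlam_ub
  obtain ⟨Λ, hΛ_def⟩ : ∃ Λ : ℝ, Λ = max Λ₀ 1 := ⟨_, rfl⟩
  have hΛ1 : (1:ℝ) ≤ Λ := by rw [hΛ_def]; exact le_max_right _ _
  have hΛub : ∀ t ∈ Icc (0:ℝ) P.T, P.lam t ≤ Λ := by
    intro t ht; rw [hΛ_def]; exact le_trans (hΛ₀ t ht) (le_max_left _ _)
  obtain ⟨η₀, hη₀_def⟩ : ∃ η₀ : ℝ, η₀ = ε₀ / (Real.exp P.T * (1 + Λ^2)) := ⟨_, rfl⟩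
  have hη₀pos : 0 < η₀ := by rw [hη₀_def]; positivity
  have key : ∀ η : ℝ, 0 < η → η < η₀ → ∀ t ∈ Icc (0:ℝ) P.T,
      0 < A t + η * Real.exp (P.T - t) ∧ 0 < C t + η * Real.exp (P.T - t) ∧
      0 < (A t + η * Real.exp (P.T - t)) * (C t + η * Real.exp (P.T - t)) - (B t)^2 := by
    intro η hη hηs
    obtain ⟨δ, hδ_def⟩ : ∃ δ : ℝ → ℝ, δ = fun t => η * Real.exp (P.T - t) := ⟨_, rfl⟩
    have hδ_pos : ∀ t, 0 < δ t := by intro t; simp only [hδ_def]; positivity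
    have hδ_deriv : ∀ t, HasDerivAt δ (-δ t) t := by
      rw [hδ_def]; intro t
      have h1 : HasDerivAt (fun x : ℝ => P.T - x) (-1) t := (hasDerivAt_id t).const_sub P.T
      have h2 := (h1.exp).const_mul η
      refine h2.congr_deriv ?_
      ring
    have hδ_le : ∀ t, 0 ≤ t → δ t ≤ η * Real.exp P.T := by
      intro t ht
      simp only [hδ_def]
      have : Real.exp (P.T - t) ≤ Real.exp P.T := Real.exp_le_exp.2 (by linarith only [ht])
      exact mul_le_mul_of_nonneg_left this (le_of_lt hη)
    obtain ⟨At, hAt_def⟩ : ∃ f : ℝ → ℝ, f = fun t => A t + δ t := ⟨_, rfl⟩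
    obtain ⟨Ct, hCt_def⟩ : ∃ f : ℝ → ℝ, f = fun t => C t + δ t := ⟨_, rfl⟩
    obtain ⟨Dt, hDt_def⟩ : ∃ f : ℝ → ℝ, f = fun t => At t * Ct t - (B t)^2 := ⟨_, rfl⟩
    have hAt_eq : ∀ t, At t = A t + δ t := by intro t; rw [hAt_def]
    have hCt_eq : ∀ t, Ct t = C t + δ t := by intro t; rw [hCt_def]
    have hDt_eq : ∀ t, Dt t = At t * Ct t - (B t)^2 := by intro t; rw [hDt_def]
    have hAt_deriv : ∀ t ∈ Icc (0:ℝ) P.T,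
        HasDerivAt At ((P.eps t)⁻¹ * (A t + P.lam t * B t) ^ 2 + -δ t) t := by
      intro t ht; rw [hAt_def]; exact (hA t ht).add (hδ_deriv t)
    have hCt_deriv : ∀ t ∈ Icc (0:ℝ) P.T,
        HasDerivAt Ct (((P.eps t)⁻¹ * (B t + P.lam t * C t) ^ 2 + 2 * P.beta t * C t
          - (P.lam t)⁻¹ * (2 * P.beta t + gammaDot P t)) + -δ t) t := by
      intro t ht; rw [hCt_def]; exact (hC t ht).add (hδ_deriv t)
    have hTmem : P.T ∈ Icc (0:ℝ) P.T := ⟨le_of_lt P.hT, le_rfl⟩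
    have hlambT : 0 < P.lam P.T := P.lam_pos P.T hTmem
    -- terminal positivity
    have hAtT : 0 < At P.T := by rw [hAt_eq, hAT]; linarith only [hδ_pos P.T, hlambT]
    have hCtT : 0 < Ct P.T := by rw [hCt_eq, hCT]; have := inv_pos.2 hlambT; linarith only [this, hδ_pos P.T]
    have hDtT : 0 < Dt P.T := by
      rw [hDt_eq, hAt_eq, hCt_eq, hAT, hBT, hCT]
      have h1 : P.lam P.T * (P.lam P.T)⁻¹ = 1 := mul_inv_cancel₀ (ne_of_gt hlambT)
      have h2 := hδ_pos P.T
      have h3 := inv_pos.2 hlambT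
      nlinarith only [h1, mul_pos h2 hlambT, mul_pos h2 h3, sq_nonneg (δ P.T)]
    suffices hgood : ∀ t ∈ Icc (0:ℝ) P.T, ¬(At t ≤ 0 ∨ Ct t ≤ 0 ∨ Dt t ≤ 0) by
      intro t ht
      have h := hgood t ht
      push_neg at h
      obtain ⟨g1, g2, g3⟩ := h
      rw [hAt_eq t] at g1
      rw [hCt_eq t] at g2
      rw [hDt_eq t, hAt_eq t, hCt_eq t] at g3
      simp only [hδ_def] at g1 g2 g3
      exact ⟨g1, g2, g3⟩
    intro t₁ ht₁ hbad₁
    -- continuity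
    have hcontA : ∀ t ∈ Icc (0:ℝ) P.T, ContinuousAt At t := fun t ht => (hAt_deriv t ht).continuousAt
    have hcontC : ∀ t ∈ Icc (0:ℝ) P.T, ContinuousAt Ct t := fun t ht => (hCt_deriv t ht).continuousAt
    have hcontB : ∀ t ∈ Icc (0:ℝ) P.T, ContinuousAt B t := fun t ht => (hB t ht).continuousAt
    have hcontD : ∀ t ∈ Icc (0:ℝ) P.T, ContinuousAt Dt t := by
      intro t ht
      rw [hDt_def]
      exact ((hcontA t ht).mul (hcontC t ht)).sub ((hcontB t ht).pow 2)
    obtain ⟨S, hS_def⟩ : ∃ S : Set ℝ, S = {t | t ∈ Icc (0:ℝ) P.T ∧ (At t ≤ 0 ∨ Ct t ≤ 0 ∨ Dt t ≤ 0)} := ⟨_, rfl⟩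
    have hSsub : S ⊆ Icc (0:ℝ) P.T := by rw [hS_def]; exact fun t ht => ht.1
    have hScl : IsClosed S := by
      have hSeq : S = Icc (0:ℝ) P.T ∩ (fun t => min (At t) (min (Ct t) (Dt t))) ⁻¹' (Iic 0) := by
        rw [hS_def]; ext t
        simp only [mem_setOf_eq, mem_inter_iff, mem_preimage, mem_Iic, min_le_iff]
      rw [hSeq]
      exact ContinuousOn.preimage_isClosed_of_isClosed
        (fun t ht => ContinuousAt.continuousWithinAt (((hcontA t ht).min ((hcontC t ht).min (hcontD t ht)))))
        isClosed_Icc isClosed_Iic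
    have hScomp : IsCompact S := isCompact_Icc.of_isClosed_subset hScl hSsub
    have hSne : S.Nonempty := ⟨t₁, by rw [hS_def]; exact ⟨ht₁, hbad₁⟩⟩
    obtain ⟨s, hs_def⟩ : ∃ s : ℝ, s = sSup S := ⟨_, rfl⟩
    have hsS : s ∈ S := by rw [hs_def]; exact hScomp.sSup_mem hSne
    have hsIcc : s ∈ Icc (0:ℝ) P.T := hSsub hsS
    have hsbad : At s ≤ 0 ∨ Ct s ≤ 0 ∨ Dt s ≤ 0 := by rw [hS_def] at hsS; exact hsS.2
    have hsT : s < P.T := by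
      rcases lt_or_eq_of_le hsIcc.2 with h | h
      · exact h
      · exfalso; rw [h] at hsbad
        rcases hsbad with h' | h' | h'
        · linarith only [h', hAtT]
        · linarith only [h', hCtT]
        · linarith only [h', hDtT]
    have hub : ∀ t, s < t → t ≤ P.T → 0 < At t ∧ 0 < Ct t ∧ 0 < Dt t := by
      intro t hst htT
      have htIcc : t ∈ Icc (0:ℝ) P.T := ⟨le_trans hsIcc.1 (le_of_lt hst), htT⟩
      by_contra hcon
      have : t ∈ S := by
        rw [hS_def]
        refine ⟨htIcc, ?_⟩
        push_neg at hcon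
        rcases le_or_gt (At t) 0 with h | h
        · exact Or.inl h
        rcases le_or_gt (Ct t) 0 with h' | h'
        · exact Or.inr (Or.inl h')
        exact Or.inr (Or.inr (hcon h h'))
      have h9 := le_csSup hScomp.bddAbove this
      rw [← hs_def] at h9
      linarith only [h9, hst]
    have hIoo : Ioo s P.T ∈ 𝓝[>] s := Ioo_mem_nhdsGT_of_mem ⟨le_rfl, hsT⟩
    have htends : ∀ f : ℝ → ℝ, ContinuousAt f s → Tendsto f (𝓝[>] s) (𝓝 (f s)) :=
      fun f hf => hf.tendsto.mono_left nhdsWithin_le_nhds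
    have hAs : 0 ≤ At s := by
      refine ge_of_tendsto (htends At (hcontA s hsIcc)) ?_
      filter_upwards [hIoo] with t ht
      exact le_of_lt (hub t ht.1 (le_of_lt ht.2)).1
    have hCs : 0 ≤ Ct s := by
      refine ge_of_tendsto (htends Ct (hcontC s hsIcc)) ?_
      filter_upwards [hIoo] with t ht
      exact le_of_lt (hub t ht.1 (le_of_lt ht.2)).2.1
    have hDs : 0 ≤ Dt s := by
      refine ge_of_tendsto (htends Dt (hcontD s hsIcc)) ?_
      filter_upwards [hIoo] with t ht
      exact le_of_lt (hub t ht.1 (le_of_lt ht.2)).2.2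
    -- choose the null vector
    obtain ⟨x₁, x₂, hx, h1, h2⟩ : ∃ x₁ x₂ : ℝ, 0 < x₁^2 + x₂^2 ∧
        A s * x₁ + B s * x₂ = -(δ s * x₁) ∧ B s * x₁ + C s * x₂ = -(δ s * x₂) := by
      rcases le_or_gt (At s) 0 with hA0 | hApos
      · have hA0' : At s = 0 := le_antisymm hA0 hAs
        have hB0 : B s = 0 := by
          have h5 := hDs
          rw [hDt_eq, hA0'] at h5
          have h6 : B s ^ 2 = 0 := le_antisymm (by linarith only [h5]) (sq_nonneg _)
          exact sq_eq_zero_iff.1 h6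
        refine ⟨1, 0, by norm_num, ?_, ?_⟩
        · have h5 := hA0'; rw [hAt_eq] at h5
          rw [hB0]; linear_combination h5
        · rw [hB0]; ring
      rcases le_or_gt (Ct s) 0 with hC0 | hCpos
      · have hC0' : Ct s = 0 := le_antisymm hC0 hCs
        have hB0 : B s = 0 := by
          have h5 := hDs
          rw [hDt_eq, hC0'] at h5
          have h6 : B s ^ 2 = 0 := le_antisymm (by linarith only [h5]) (sq_nonneg _)
          exact sq_eq_zero_iff.1 h6
        refine ⟨0, 1, by norm_num, ?_, ?_⟩
        · rw [hB0]; ring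
        · have h5 := hC0'; rw [hCt_eq] at h5
          rw [hB0]; linear_combination h5
      · have hD0 : Dt s = 0 := by
          rcases hsbad with h' | h' | h'
          · exact absurd h' (not_le.2 hApos)
          · exact absurd h' (not_le.2 hCpos)
          · exact le_antisymm h' hDs
        have hD0' : (A s + δ s) * (C s + δ s) - (B s)^2 = 0 := by
          rw [hDt_eq, hAt_eq, hCt_eq] at hD0; exact hD0
        refine ⟨-(B s), A s + δ s, ?_, by ring, by linear_combination hD0'⟩
        have : 0 < A s + δ s := by rw [hAt_eq] at hApos; exact hApos
        positivity
    -- the quadratic form along the flow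
    obtain ⟨q, hq_def⟩ : ∃ q : ℝ → ℝ, q = fun t => (At t * x₁^2 + B t * (2*x₁*x₂)) + Ct t * x₂^2 := ⟨_, rfl⟩
    have hq_pos : ∀ t, s < t → t ≤ P.T → 0 < q t := by
      intro t hst htT
      obtain ⟨hA', hC', hD'⟩ := hub t hst htT
      rw [hq_def]
      show 0 < (At t * x₁^2 + B t * (2*x₁*x₂)) + Ct t * x₂^2
      exact quad_pos hA' (by rw [hDt_eq] at hD'; linarith only [hD']) hx
    have hqs : q s = 0 := by
      rw [hq_def]
      show (At s * x₁^2 + B s * (2*x₁*x₂)) + Ct s * x₂^2 = 0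
      rw [hAt_eq, hCt_eq]
      linear_combination x₁ * h1 + x₂ * h2
    have hq_deriv : HasDerivAt q
        ((((P.eps s)⁻¹ * (A s + P.lam s * B s) ^ 2 + -δ s) * x₁^2
          + ((P.eps s)⁻¹ * (A s + P.lam s * B s) * (B s + P.lam s * C s) + P.beta s * B s) * (2*x₁*x₂))
          + (((P.eps s)⁻¹ * (B s + P.lam s * C s) ^ 2 + 2 * P.beta s * C s
            - (P.lam s)⁻¹ * (2 * P.beta s + gammaDot P s) + -δ s)) * x₂^2) s := by
      rw [hq_def]
      exact (((hAt_deriv s hsIcc).mul_const _).add ((hB s hsIcc).mul_const _)).add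
        ((hCt_deriv s hsIcc).mul_const _)
    -- show the derivative is negative
    have hlambs : 0 < P.lam s := P.lam_pos s hsIcc
    have hβs : 0 < P.beta s := P.hbeta_pos s hsIcc
    have hgs : 0 < (P.lam s)⁻¹ * (2 * P.beta s + gammaDot P s) := by
      rw [gammaDot]
      exact mul_pos (inv_pos.2 hlambs) (P.hnoarb s hsIcc)
    have h3 : (A s + P.lam s * B s) * x₁ + (B s + P.lam s * C s) * x₂
        = -(δ s * (x₁ + P.lam s * x₂)) := by
      linear_combination h1 + P.lam s * h2
    have hkey_id : (((P.eps s)⁻¹ * (A s + P.lam s * B s) ^ 2 + -δ s) * x₁^2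
          + ((P.eps s)⁻¹ * (A s + P.lam s * B s) * (B s + P.lam s * C s) + P.beta s * B s) * (2*x₁*x₂))
          + (((P.eps s)⁻¹ * (B s + P.lam s * C s) ^ 2 + 2 * P.beta s * C s
            - (P.lam s)⁻¹ * (2 * P.beta s + gammaDot P s) + -δ s)) * x₂^2
        = (P.eps s)⁻¹ * (δ s * (x₁ + P.lam s * x₂))^2 - 2 * P.beta s * δ s * x₂^2
          - (P.lam s)⁻¹ * (2 * P.beta s + gammaDot P s) * x₂^2 - δ s * (x₁^2 + x₂^2) := by
      linear_combination ((P.eps s)⁻¹ * (((A s + P.lam s * B s) * x₁ + (B s + P.lam s * C s) * x₂)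
        - δ s * (x₁ + P.lam s * x₂))) * h3 + (2 * P.beta s * x₂) * h2
    have hQneg : (((P.eps s)⁻¹ * (A s + P.lam s * B s) ^ 2 + -δ s) * x₁^2
          + ((P.eps s)⁻¹ * (A s + P.lam s * B s) * (B s + P.lam s * C s) + P.beta s * B s) * (2*x₁*x₂))
          + (((P.eps s)⁻¹ * (B s + P.lam s * C s) ^ 2 + 2 * P.beta s * C s
            - (P.lam s)⁻¹ * (2 * P.beta s + gammaDot P s) + -δ s)) * x₂^2 < 0 := by
      rw [hkey_id]
      have hδs := hδ_pos s
      have hεs := P.eps_pos s hsIcc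
      have hεinv : (P.eps s)⁻¹ ≤ ε₀⁻¹ := inv_anti₀ hε₀ (hεlb s hsIcc)
      have hlambΛ : P.lam s ≤ Λ := hΛub s hsIcc
      have hll : P.lam s * P.lam s ≤ Λ * Λ :=
        mul_le_mul hlambΛ hlambΛ (le_of_lt hlambs) (by linarith only [hΛ1])
      have hZ2 : (x₁ + P.lam s * x₂)^2 ≤ (1 + Λ^2) * (x₁^2 + x₂^2) := by
        nlinarith only [sq_nonneg (P.lam s * x₁ - x₂),
          mul_nonneg (sub_nonneg.2 hll) (add_nonneg (sq_nonneg x₁) (sq_nonneg x₂))]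
      have hδη : δ s ≤ η * Real.exp P.T := hδ_le s hsIcc.1
      have hηε : η * Real.exp P.T * (1 + Λ^2) < ε₀ := by
        rw [hη₀_def] at hηs
        have hden : 0 < Real.exp P.T * (1 + Λ^2) := by positivity
        rw [lt_div_iff₀ hden] at hηs
        linarith only [hηs]
      have hmain : (P.eps s)⁻¹ * (δ s * (x₁ + P.lam s * x₂))^2 < δ s * (x₁^2 + x₂^2) := by
        have step1 : (P.eps s)⁻¹ * (δ s * (x₁ + P.lam s * x₂))^2
            ≤ ε₀⁻¹ * ((δ s)^2 * ((1 + Λ^2) * (x₁^2 + x₂^2))) := by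
          have e1 : (δ s * (x₁ + P.lam s * x₂))^2 = (δ s)^2 * (x₁ + P.lam s * x₂)^2 := by ring
          rw [e1]
          have e2 : (δ s)^2 * (x₁ + P.lam s * x₂)^2 ≤ (δ s)^2 * ((1 + Λ^2) * (x₁^2 + x₂^2)) :=
            mul_le_mul_of_nonneg_left hZ2 (sq_nonneg _)
          calc (P.eps s)⁻¹ * ((δ s)^2 * (x₁ + P.lam s * x₂)^2)
              ≤ ε₀⁻¹ * ((δ s)^2 * (x₁ + P.lam s * x₂)^2) := by
                apply mul_le_mul_of_nonneg_right hεinv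
                positivity
            _ ≤ ε₀⁻¹ * ((δ s)^2 * ((1 + Λ^2) * (x₁^2 + x₂^2))) := by
                apply mul_le_mul_of_nonneg_left e2
                positivity
        have step2 : ε₀⁻¹ * ((δ s)^2 * ((1 + Λ^2) * (x₁^2 + x₂^2))) < δ s * (x₁^2 + x₂^2) := by
          have e3 : ε₀⁻¹ * ((δ s)^2 * ((1 + Λ^2) * (x₁^2 + x₂^2)))
              = (ε₀⁻¹ * (δ s * (1 + Λ^2))) * (δ s * (x₁^2 + x₂^2)) := by ring
          rw [e3]
          have e4 : ε₀⁻¹ * (δ s * (1 + Λ^2)) < 1 := by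
            rw [inv_mul_lt_iff₀ hε₀, mul_one]
            calc δ s * (1 + Λ^2) ≤ (η * Real.exp P.T) * (1 + Λ^2) := by
                  apply mul_le_mul_of_nonneg_right hδη
                  positivity
              _ < ε₀ := hηε
          have h6 := mul_lt_mul_of_pos_right e4 (mul_pos hδs hx)
          rwa [one_mul] at h6
        linarith only [step1, step2]
      have hd1 : 0 ≤ 2 * P.beta s * δ s * x₂^2 := by positivity
      have hd2 : 0 ≤ (P.lam s)⁻¹ * (2 * P.beta s + gammaDot P s) * x₂^2 :=
        mul_nonneg (le_of_lt hgs) (sq_nonneg _)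
      linarith only [hmain, hd1, hd2]
    -- contradiction
    have hev := slope_neg_right hq_deriv hQneg
    rw [hqs] at hev
    have : ∃ t, q t < 0 ∧ t ∈ Ioo s P.T := (hev.and hIoo).exists
    obtain ⟨t, hqt, htIoo⟩ := this
    exact absurd (hq_pos t htIoo.1 (le_of_lt htIoo.2)) (not_lt.2 (le_of_lt hqt))
  -- pass to the limit η → 0⁺
  intro t ht
  have he : 0 < Real.exp (P.T - t) := Real.exp_pos _
  have hev : ∀ᶠ η in 𝓝[>] (0:ℝ), η ∈ Ioo (0:ℝ) η₀ := Ioo_mem_nhdsGT_of_mem ⟨le_rfl, hη₀pos⟩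
  have tendA : Tendsto (fun η : ℝ => A t + η * Real.exp (P.T - t)) (𝓝[>] 0) (𝓝 (A t)) := by
    have : Tendsto (fun η : ℝ => A t + η * Real.exp (P.T - t)) (𝓝 0) (𝓝 (A t + 0 * Real.exp (P.T - t))) :=
      (continuous_const.add (continuous_id.mul continuous_const)).tendsto 0
    simpa using this.mono_left nhdsWithin_le_nhds
  have tendC : Tendsto (fun η : ℝ => C t + η * Real.exp (P.T - t)) (𝓝[>] 0) (𝓝 (C t)) := by
    have : Tendsto (fun η : ℝ => C t + η * Real.exp (P.T - t)) (𝓝 0) (𝓝 (C t + 0 * Real.exp (P.T - t))) :=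
      (continuous_const.add (continuous_id.mul continuous_const)).tendsto 0
    simpa using this.mono_left nhdsWithin_le_nhds
  have tendD : Tendsto (fun η : ℝ => (A t + η * Real.exp (P.T - t)) * (C t + η * Real.exp (P.T - t)) - (B t)^2)
      (𝓝[>] 0) (𝓝 (A t * C t - (B t)^2)) := by
    have h0 := tendA.mul tendC
    exact h0.sub tendsto_const_nhds
  refine ⟨?_, ?_, ?_⟩
  · refine ge_of_tendsto tendA ?_
    filter_upwards [hev] with η hη
    exact le_of_lt (key η hη.1 hη.2 t ht).1
  · refine ge_of_tendsto tendC ?_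
    filter_upwards [hev] with η hη
    exact le_of_lt (key η hη.1 hη.2 t ht).2.1
  · have : 0 ≤ A t * C t - (B t)^2 := by
      refine ge_of_tendsto tendD ?_
      filter_upwards [hev] with η hη
      exact le_of_lt (key η hη.1 hη.2 t ht).2.2
    linarith only [this]

set_option maxHeartbeats 1000000 in
lemma b_pos (P : Params) (A B C : ℝ → ℝ)
    (hB : ∀ t ∈ Icc (0:ℝ) P.T,
      HasDerivAt B ((P.eps t)⁻¹ * (A t + P.lam t * B t) * (B t + P.lam t * C t)
        + P.beta t * B t) t)
    (hBT : B P.T = -1)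
    (hC : ∀ t ∈ Icc (0:ℝ) P.T,
      HasDerivAt C ((P.eps t)⁻¹ * (B t + P.lam t * C t) ^ 2 + 2 * P.beta t * C t
        - (P.lam t)⁻¹ * (2 * P.beta t + gammaDot P t)) t)
    (hCT : C P.T = (P.lam P.T)⁻¹)
    (hC0 : ∀ t ∈ Icc (0:ℝ) P.T, 0 ≤ C t)
    (hC1 : ∀ t ∈ Icc (0:ℝ) P.T, C t ≤ (P.lam t)⁻¹) :
    ∀ t ∈ Ico (0:ℝ) P.T, 0 < B t + P.lam t * C t := by
  obtain ⟨b, hb_def⟩ : ∃ b : ℝ → ℝ, b = fun t => B t + P.lam t * C t := ⟨_, rfl⟩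
  have hb_eq : ∀ t, b t = B t + P.lam t * C t := by intro t; rw [hb_def]
  have hTmem : P.T ∈ Icc (0:ℝ) P.T := ⟨le_of_lt P.hT, le_rfl⟩
  have hbT : b P.T = 0 := by
    rw [hb_eq, hBT, hCT, mul_inv_cancel₀ (ne_of_gt (P.lam_pos P.T hTmem))]
    ring
  have hb_cont : ∀ t ∈ Icc (0:ℝ) P.T, ContinuousAt b t := by
    intro t ht
    rw [hb_def]
    exact ((hB t ht).continuousAt).add (((P.hlam_deriv t).continuousAt).mul ((hC t ht).continuousAt))
  -- at any zero of b inside [0,T], the derivative of b is negative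
  have hkey : ∀ s ∈ Icc (0:ℝ) P.T, b s = 0 → ∃ W, HasDerivAt b W s ∧ W < 0 := by
    intro s hs h0
    have hlams : 0 < P.lam s := P.lam_pos s hs
    have hne : P.lam s ≠ 0 := ne_of_gt hlams
    have hβs : 0 < P.beta s := P.hbeta_pos s hs
    have hna : 0 < 2 * P.beta s + P.lam' s / P.lam s := P.hnoarb s hs
    have hb0 : B s + P.lam s * C s = 0 := by rw [← hb_eq]; exact h0
    have hC0s : 0 ≤ C s := hC0 s hs
    have hCl : C s * P.lam s ≤ 1 := by
      have h1 : C s * P.lam s ≤ (P.lam s)⁻¹ * P.lam s :=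
        mul_le_mul_of_nonneg_right (hC1 s hs) (le_of_lt hlams)
      rwa [inv_mul_cancel₀ hne] at h1
    have h7 : 0 < 2 * P.beta s * P.lam s + P.lam' s := by
      have h8 := mul_pos hna hlams
      rw [add_mul, div_mul_cancel₀ _ hne] at h8
      linarith only [h8]
    refine ⟨(P.eps s)⁻¹ * (A s + P.lam s * B s) * (B s + P.lam s * C s) + P.beta s * B s
      + (P.lam' s * C s + P.lam s * ((P.eps s)⁻¹ * (B s + P.lam s * C s) ^ 2 + 2 * P.beta s * C s
        - (P.lam s)⁻¹ * (2 * P.beta s + gammaDot P s))), ?_, ?_⟩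
    · rw [hb_def]
      exact (hB s hs).add ((P.hlam_deriv s).mul (hC s hs))
    · have hBs : B s = -(P.lam s * C s) := by linarith only [hb0]
      have hgoal : (P.eps s)⁻¹ * (A s + P.lam s * B s) * (B s + P.lam s * C s) + P.beta s * B s
          + (P.lam' s * C s + P.lam s * ((P.eps s)⁻¹ * (B s + P.lam s * C s) ^ 2 + 2 * P.beta s * C s
            - (P.lam s)⁻¹ * (2 * P.beta s + gammaDot P s)))
          = ((P.beta s * P.lam s + P.lam' s) * (C s * P.lam s)
            - (2 * P.beta s * P.lam s + P.lam' s)) / P.lam s := by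
        rw [hb0, hBs, gammaDot]
        field_simp
        ring
      rw [hgoal]
      apply div_neg_of_neg_of_pos _ hlams
      rcases le_or_gt 0 (P.beta s * P.lam s + P.lam' s) with hc | hc
      · have h9 : (P.beta s * P.lam s + P.lam' s) * (C s * P.lam s)
            ≤ (P.beta s * P.lam s + P.lam' s) * 1 := mul_le_mul_of_nonneg_left hCl hc
        have h10 : 0 < P.beta s * P.lam s := mul_pos hβs hlams
        linarith only [h9, h10]
      · have h9 : (P.beta s * P.lam s + P.lam' s) * (C s * P.lam s) ≤ 0 :=
          mul_nonpos_of_nonpos_of_nonneg (le_of_lt hc)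
            (mul_nonneg hC0s (le_of_lt hlams))
        linarith only [h9, h7]
  -- main argument
  intro t₀ ht₀
  rw [← hb_eq]
  by_contra hcon
  push_neg at hcon
  -- near T, b is positive
  obtain ⟨W, hWd, hWneg⟩ := hkey P.T hTmem hbT
  have hev := slope_neg_left hWd hWneg
  rw [hbT] at hev
  have hIooT : Ioo t₀ P.T ∈ 𝓝[<] P.T := Ioo_mem_nhdsLT_of_mem ⟨ht₀.2, le_rfl⟩
  obtain ⟨T', hbT', hT'⟩ : ∃ T', 0 < b T' ∧ T' ∈ Ioo t₀ P.T := (hev.and hIooT).exists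
  have hT'Icc : T' ∈ Icc (0:ℝ) P.T := ⟨le_trans ht₀.1 (le_of_lt hT'.1), le_of_lt hT'.2⟩
  have hsub : Icc t₀ T' ⊆ Icc (0:ℝ) P.T := Icc_subset_Icc ht₀.1 hT'Icc.2
  -- the last zero-crossing before T'
  obtain ⟨S, hS_def⟩ : ∃ S : Set ℝ, S = {t | t ∈ Icc t₀ T' ∧ b t ≤ 0} := ⟨_, rfl⟩
  have hSsub : S ⊆ Icc t₀ T' := by rw [hS_def]; exact fun t ht => ht.1
  have hScl : IsClosed S := by
    have hSeq : S = Icc t₀ T' ∩ b ⁻¹' (Iic 0) := by rw [hS_def]; ext t; simp [mem_setOf_eq]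
    rw [hSeq]
    exact ContinuousOn.preimage_isClosed_of_isClosed
      (fun t ht => (hb_cont t (hsub ht)).continuousWithinAt) isClosed_Icc isClosed_Iic
  have hScomp : IsCompact S := isCompact_Icc.of_isClosed_subset hScl hSsub
  have hSne : S.Nonempty := ⟨t₀, by
    rw [hS_def]
    exact ⟨⟨le_rfl, le_of_lt hT'.1⟩, hcon⟩⟩
  obtain ⟨s, hs_def⟩ : ∃ s : ℝ, s = sSup S := ⟨_, rfl⟩
  have hsS : s ∈ S := by rw [hs_def]; exact hScomp.sSup_mem hSne
  have hsmem : s ∈ Icc t₀ T' := hSsub hsS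
  have hsIcc : s ∈ Icc (0:ℝ) P.T := hsub hsmem
  have hsb : b s ≤ 0 := by rw [hS_def] at hsS; exact hsS.2
  have hsT' : s < T' := by
    rcases lt_or_eq_of_le hsmem.2 with h | h
    · exact h
    · exfalso; rw [h] at hsb; linarith only [hsb, hbT']
  have hup : ∀ t, s < t → t ≤ T' → 0 < b t := by
    intro t hst htT'
    by_contra h
    push_neg at h
    have htS : t ∈ S := by
      rw [hS_def]
      exact ⟨⟨le_trans hsmem.1 (le_of_lt hst), htT'⟩, h⟩
    have h9 := le_csSup hScomp.bddAbove htS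
    rw [← hs_def] at h9
    linarith only [h9, hst]
  have hIoo : Ioo s T' ∈ 𝓝[>] s := Ioo_mem_nhdsGT_of_mem ⟨le_rfl, hsT'⟩
  have hbs0 : b s = 0 := by
    refine le_antisymm hsb ?_
    refine ge_of_tendsto ((hb_cont s hsIcc).tendsto.mono_left
      (nhdsWithin_le_nhds : 𝓝[>] s ≤ 𝓝 s)) ?_
    filter_upwards [hIoo] with t ht
    exact le_of_lt (hup t ht.1 (le_of_lt ht.2))
  obtain ⟨W₂, hW₂d, hW₂neg⟩ := hkey s hsIcc hbs0
  have hev₂ := slope_neg_right hW₂d hW₂neg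
  rw [hbs0] at hev₂
  obtain ⟨t, hbt, ht⟩ : ∃ t, b t < 0 ∧ t ∈ Ioo s T' := (hev₂.and hIoo).exists
  exact absurd (hup t ht.1 (le_of_lt ht.2)) (not_lt.2 (le_of_lt hbt))

lemma psd2 {a b c : ℝ} (ha : 0 ≤ a) (hc : 0 ≤ c) (hd : b^2 ≤ a*c) :
    (!![a, b; b, c] : Matrix (Fin 2) (Fin 2) ℝ).PosSemidef := by
  rw [Matrix.posSemidef_iff_dotProduct_mulVec]
  constructor
  · ext i j
    fin_cases i <;> fin_cases j <;> simp [Matrix.conjTranspose, Matrix.vecHead, Matrix.vecTail]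
  · intro x
    have : star x ⬝ᵥ (!![a, b; b, c] : Matrix (Fin 2) (Fin 2) ℝ) *ᵥ x
        = a * (x 0)^2 + 2*b*(x 0)*(x 1) + c * (x 1)^2 := by
      simp [dotProduct, Matrix.mulVec, Fin.sum_univ_two]
      ring
    rw [this]
    rcases eq_or_lt_of_le ha with h | h
    · have hb : b = 0 := by nlinarith
      subst hb
      rw [← h]
      nlinarith [sq_nonneg (x 1)]
    · nlinarith [sq_nonneg (a*(x 0) + b*(x 1)), sq_nonneg (x 1), mul_nonneg (sub_nonneg.2 hd) (sq_nonneg (x 1))]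

/-- For every `t ∈ [0,T]` the matrix `[[A_t, B_t], [B_t, C_t]]` is
positive semidefinite and `0 ≤ C_t ≤ 1/λ_t`; moreover `B_t + λ_t C_t > 0` on `[0,T)`. -/
theorem riccati_psd (P : Params) (A B C D E F K : ℝ → ℝ)
    (hsol : IsRiccatiSol P A B C D E F K) :
    (∀ t ∈ Icc (0:ℝ) P.T,
        (!![A t, B t; B t, C t] : Matrix (Fin 2) (Fin 2) ℝ).PosSemidef ∧
        0 ≤ C t ∧ C t ≤ (P.lam t)⁻¹) ∧
    (∀ t ∈ Ico (0:ℝ) P.T, 0 < B t + P.lam t * C t) := by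
  obtain ⟨hA, hAT, hB, hBT, hC, hCT, hD, hDT, hE, hET, hF, hFT, hK, hKT⟩ := hsol
  have hC1 := C_le_inv P A B C hC hCT
  have hpsd := psd_aux P A B C hA hAT hBT hB hC hCT
  have hbpos := b_pos P A B C hB hBT hC hCT (fun t ht => (hpsd t ht).2.1) hC1
  refine ⟨?_, hbpos⟩
  intro t ht
  obtain ⟨h1, h2, h3⟩ := hpsd t ht
  exact ⟨psd2 h1 h2 h3, h2, hC1 t ht⟩
end

section
/- Let (A, B, C, D, E, F, K) solve the Riccati ODE system on [0, T] and assume additionally that β_t + γ̇_t > 0 for all t ∈ [0, T]. Then for every t ∈ [0, T): A_t + λ_t B_t > max(D_t + λ_t E_t, 0) and B_t < min(E_t, 0). -/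
open Set MeasureTheory Matrix Filter Topology

lemma slope_nonneg_right {f : ℝ → ℝ} {v s T : ℝ} (hf : HasDerivAt f v s)
    (h0 : f s = 0) (hsT : s < T) (hpos : ∀ t ∈ Ioo s T, 0 < f t) : 0 ≤ v := by
  have h1 : Tendsto (slope f s) (𝓝[>] s) (𝓝 v) :=
    (hasDerivAt_iff_tendsto_slope.1 hf).mono_left
      (nhdsWithin_mono _ fun x hx => ne_of_gt hx)
  refine ge_of_tendsto h1 ?_
  filter_upwards [Ioo_mem_nhdsGT hsT] with t ht
  rw [slope_def_field, h0, sub_zero]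
  exact div_nonneg (hpos t ht).le (by linarith [ht.1])

lemma eventually_pos_left {f : ℝ → ℝ} {v T : ℝ} (hf : HasDerivAt f v T)
    (h0 : f T = 0) (hv : v < 0) : ∀ᶠ t in 𝓝[<] T, 0 < f t := by
  have h1 : Tendsto (slope f T) (𝓝[<] T) (𝓝 v) :=
    (hasDerivAt_iff_tendsto_slope.1 hf).mono_left
      (nhdsWithin_mono _ fun x hx => ne_of_lt hx)
  have h2 : ∀ᶠ t in 𝓝[<] T, slope f T t < 0 := h1.eventually_lt_const hv
  filter_upwards [h2, self_mem_nhdsWithin] with t ht htT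
  simp only [mem_Iio] at htT
  have h3 : f t = slope f T t * (t - T) := by
    rw [slope_def_field, h0, sub_zero]
    field_simp [sub_ne_zero.2 (ne_of_lt htT)]
  rw [h3]
  exact mul_pos_of_neg_of_neg ht (by linarith)

lemma stay_nonpos {g v : ℝ → ℝ} {K a b : ℝ} (hab : a ≤ b)
    (hd : ∀ t ∈ Icc a b, HasDerivAt g (v t) t)
    (hv : ∀ t ∈ Icc a b, 0 < g t → v t ≤ K * g t)
    (ha : g a ≤ 0) : ∀ t ∈ Icc a b, g t ≤ 0 := by
  by_contra hcon
  push_neg at hcon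
  obtain ⟨u, hu, hgu⟩ := hcon
  set S := {t ∈ Icc a u | g t ≤ 0} with hS
  have hSne : a ∈ S := ⟨⟨le_refl a, hu.1⟩, ha⟩
  have hbdd : BddAbove S := ⟨u, fun t ht => ht.1.2⟩
  set r := sSup S with hr
  have hrmem : r ∈ Icc a u := ⟨le_csSup hbdd hSne, csSup_le ⟨a, hSne⟩ fun t ht => ht.1.2⟩
  have hmemab : ∀ t ∈ Icc a u, t ∈ Icc a b := fun t ht => ⟨ht.1, le_trans ht.2 hu.2⟩
  have hmemrb : ∀ t ∈ Icc r u, t ∈ Icc a b := fun t ht =>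
    ⟨le_trans hrmem.1 ht.1, le_trans ht.2 hu.2⟩
  have hgr : g r ≤ 0 := by
    have hcl : r ∈ closure S := (isLUB_csSup ⟨a, hSne⟩ hbdd).mem_closure ⟨a, hSne⟩
    have hne : (𝓝[S] r).NeBot := mem_closure_iff_nhdsWithin_neBot.1 hcl
    exact le_of_tendsto (((hd r (hmemab r hrmem)).continuousAt).continuousWithinAt (s := S))
      (eventually_mem_nhdsWithin.mono fun t ht => ht.2)
  have hru : r < u := lt_of_le_of_ne hrmem.2 (fun h => by rw [h] at hgr; linarith)
  have hpos : ∀ t ∈ Ioc r u, 0 < g t := by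
    intro t ht
    by_contra hle
    push_neg at hle
    exact absurd (le_csSup hbdd ⟨⟨le_trans hrmem.1 ht.1.le, ht.2⟩, hle⟩) (not_le.2 ht.1)
  set ψ := fun t => g t * Real.exp (-K * t) with hψ
  have hψd : ∀ t ∈ Icc a b, HasDerivAt ψ ((v t - K * g t) * Real.exp (-K * t)) t := by
    intro t ht
    have h1 : HasDerivAt (fun t : ℝ => Real.exp (-K * t)) (Real.exp (-K * t) * (-K * 1)) t :=
      ((hasDerivAt_id t).const_mul (-K)).exp
    have h2 := (hd t ht).mul h1
    exact h2.congr_deriv (by ring)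
  have hanti : AntitoneOn ψ (Icc r u) := by
    apply antitoneOn_of_deriv_nonpos (convex_Icc r u)
    · exact fun t ht => ((hψd t (hmemrb t ht)).continuousAt).continuousWithinAt
    · intro t ht
      rw [interior_Icc] at ht
      exact ((hψd t (hmemrb t ⟨ht.1.le, ht.2.le⟩)).differentiableAt).differentiableWithinAt
    · intro t ht
      rw [interior_Icc] at ht
      rw [(hψd t (hmemrb t ⟨ht.1.le, ht.2.le⟩)).deriv]
      have hgt : 0 < g t := hpos t ⟨ht.1, ht.2.le⟩
      have := hv t (hmemrb t ⟨ht.1.le, ht.2.le⟩) hgt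
      have hexp := Real.exp_pos (-K * t)
      nlinarith
  have h1 : ψ u ≤ ψ r := hanti ⟨le_refl r, hru.le⟩ ⟨hru.le, le_refl u⟩ hru.le
  have h2 : 0 < ψ u := mul_pos hgu (Real.exp_pos _)
  have h3 : ψ r ≤ 0 := mul_nonpos_of_nonpos_of_nonneg hgr (Real.exp_pos _).le
  linarith

lemma stay_nonpos_back {g v : ℝ → ℝ} {K a b : ℝ} (hab : a ≤ b)
    (hd : ∀ t ∈ Icc a b, HasDerivAt g (v t) t)
    (hv : ∀ t ∈ Icc a b, 0 < g t → -(K * g t) ≤ v t)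
    (hb : g b ≤ 0) : ∀ t ∈ Icc a b, g t ≤ 0 := by
  have key : ∀ s ∈ Icc a b, g (a + b - s) ≤ 0 := by
    apply stay_nonpos (v := fun s => -v (a + b - s)) (K := K) hab
    · intro s hs
      have hmem : a + b - s ∈ Icc a b := ⟨by linarith [hs.2], by linarith [hs.1]⟩
      have h1 : HasDerivAt (fun s : ℝ => a + b - s) (-1) s := by
        exact (hasDerivAt_id' s).const_sub (a + b)
      have h2 := (hd _ hmem).comp s h1
      exact h2.congr_deriv (by ring)
    · intro s hs hpos
      have hmem : a + b - s ∈ Icc a b := ⟨by linarith [hs.2], by linarith [hs.1]⟩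
      have := hv _ hmem hpos
      linarith
    · simpa using hb
  intro t ht
  have := key (a + b - t) ⟨by linarith [ht.2], by linarith [ht.1]⟩
  simpa using this

lemma exists_first_bad {g : ℝ → ℝ} {t₀ u T : ℝ} (h0 : t₀ ≤ u) (huT : u < T)
    (hc : ∀ t ∈ Icc t₀ u, ContinuousAt g t) (hbad : g t₀ ≤ 0)
    (hgood : ∀ t ∈ Ioo u T, 0 < g t) :
    ∃ r ∈ Icc t₀ u, g r = 0 ∧ ∀ t ∈ Ioo r T, 0 < g t := by
  set S := {t ∈ Icc t₀ u | g t ≤ 0} with hS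
  have hSne : t₀ ∈ S := ⟨⟨le_refl t₀, h0⟩, hbad⟩
  have hbdd : BddAbove S := ⟨u, fun t ht => ht.1.2⟩
  set r := sSup S with hr
  have hrmem : r ∈ Icc t₀ u := ⟨le_csSup hbdd hSne, csSup_le ⟨t₀, hSne⟩ fun t ht => ht.1.2⟩
  have hgr : g r ≤ 0 := by
    have hcl : r ∈ closure S := (isLUB_csSup ⟨t₀, hSne⟩ hbdd).mem_closure ⟨t₀, hSne⟩
    have hne : (𝓝[S] r).NeBot := mem_closure_iff_nhdsWithin_neBot.1 hcl
    exact le_of_tendsto (((hc r hrmem).continuousWithinAt (s := S)))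
      (eventually_mem_nhdsWithin.mono fun t ht => ht.2)
  have hposIoc : ∀ t ∈ Ioc r u, 0 < g t := by
    intro t ht
    by_contra hle
    push_neg at hle
    exact absurd (le_csSup hbdd ⟨⟨le_trans hrmem.1 ht.1.le, ht.2⟩, hle⟩) (not_le.2 ht.1)
  have hpos : ∀ t ∈ Ioo r T, 0 < g t := by
    intro t ht
    rcases le_or_gt t u with h | h
    · exact hposIoc t ⟨ht.1, h⟩
    · exact hgood t ⟨h, ht.2⟩
  have hrT : r < T := lt_of_le_of_lt hrmem.2 huT
  have hge : 0 ≤ g r := by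
    refine ge_of_tendsto (((hc r hrmem).continuousWithinAt (s := Ioi r))) ?_
    filter_upwards [Ioo_mem_nhdsGT hrT] with t ht
    exact (hpos t ht).le
  exact ⟨r, hrmem, le_antisymm hgr hge, hpos⟩

lemma single_pos {T : ℝ} (hT : 0 < T) {p P : ℝ → ℝ}
    (hd : ∀ t ∈ Icc 0 T, HasDerivAt p (P t) t)
    (hpT : p T = 0)
    (hcross : ∀ t ∈ Icc 0 T, p t = 0 → P t < 0) :
    ∀ t ∈ Ico 0 T, 0 < p t := by
  have hTm : T ∈ Icc (0:ℝ) T := ⟨hT.le, le_refl T⟩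
  have hnear : ∀ᶠ t in 𝓝[<] T, 0 < p t :=
    eventually_pos_left (hd T hTm) hpT (hcross T hTm hpT)
  obtain ⟨l, hl, hsub⟩ := mem_nhdsLT_iff_exists_Ioo_subset.1 hnear
  set u := max l 0 with hu
  have huT : u < T := max_lt hl hT
  have hgood : ∀ t ∈ Ioo u T, 0 < p t := fun t ht =>
    hsub ⟨lt_of_le_of_lt (le_max_left l 0) ht.1, ht.2⟩
  intro t₀ ht₀
  by_contra hle
  push_neg at hle
  have ht₀u : t₀ ≤ u := by
    by_contra h
    push_neg at h
    exact absurd (hgood t₀ ⟨h, ht₀.2⟩) (not_lt.2 hle)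
  have hsubm : ∀ t ∈ Icc t₀ u, t ∈ Icc 0 T :=
    fun t ht => ⟨le_trans ht₀.1 ht.1, le_trans ht.2 huT.le⟩
  obtain ⟨r, hrmem, hr0, hrpos⟩ := exists_first_bad ht₀u huT
    (fun t ht => (hd t (hsubm t ht)).continuousAt) hle hgood
  have hrT : r ∈ Icc 0 T := hsubm r hrmem
  have h1 : 0 ≤ P r :=
    slope_nonneg_right (hd r hrT) hr0 (lt_of_le_of_lt hrmem.2 huT) hrpos
  exact absurd (hcross r hrT hr0) (not_lt.2 h1)

lemma pair_pos {T K : ℝ} (hT : 0 < T) {p q P Q : ℝ → ℝ}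
    (hp : ∀ t ∈ Icc 0 T, HasDerivAt p (P t) t)
    (hq : ∀ t ∈ Icc 0 T, HasDerivAt q (Q t) t)
    (hpT : p T = 0) (hqT : q T < 0)
    (hP : ∀ t ∈ Icc 0 T, p t = 0 → q t < 0 → P t < 0)
    (hQ : ∀ t ∈ Icc 0 T, 0 ≤ p t → q t ≤ 0 → K * q t ≤ Q t) :
    ∀ t ∈ Ico 0 T, 0 < p t ∧ q t < 0 := by
  have hTm : T ∈ Icc (0:ℝ) T := ⟨hT.le, le_refl T⟩
  have hnearp : ∀ᶠ t in 𝓝[<] T, 0 < p t :=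
    eventually_pos_left (hp T hTm) hpT (hP T hTm hpT hqT)
  have hnearq : ∀ᶠ t in 𝓝[<] T, q t < 0 := by
    have hc : ContinuousAt q T := (hq T hTm).continuousAt
    exact (hc.eventually_lt_const hqT).filter_mono nhdsWithin_le_nhds
  set m := fun t => min (p t) (-(q t)) with hm
  have hnear : ∀ᶠ t in 𝓝[<] T, 0 < m t :=
    (hnearp.and hnearq).mono fun t ⟨h1, h2⟩ => lt_min h1 (by linarith)
  obtain ⟨l, hl, hsub⟩ := mem_nhdsLT_iff_exists_Ioo_subset.1 hnear
  set u := max l 0 with hu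
  have huT : u < T := max_lt hl hT
  have hgood : ∀ t ∈ Ioo u T, 0 < m t := fun t ht =>
    hsub ⟨lt_of_le_of_lt (le_max_left l 0) ht.1, ht.2⟩
  intro t₀ ht₀
  by_contra hcon
  have hm0 : m t₀ ≤ 0 := by
    rcases not_and_or.1 hcon with h | h
    · push_neg at h
      exact le_trans (min_le_left _ _) h
    · push_neg at h
      exact le_trans (min_le_right _ _) (by linarith)
  have ht₀u : t₀ ≤ u := by
    by_contra h
    push_neg at h
    exact absurd (hgood t₀ ⟨h, ht₀.2⟩) (not_lt.2 hm0)
  have hsubm : ∀ t ∈ Icc t₀ u, t ∈ Icc 0 T :=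
    fun t ht => ⟨le_trans ht₀.1 ht.1, le_trans ht.2 huT.le⟩
  obtain ⟨r, hrmem, hr0, hrpos⟩ := exists_first_bad ht₀u huT
    (fun t ht => ((hp t (hsubm t ht)).continuousAt).min
      ((hq t (hsubm t ht)).continuousAt.neg)) hm0 hgood
  have hrT : r ∈ Icc 0 T := hsubm r hrmem
  have hrltT : r < T := lt_of_le_of_lt hrmem.2 huT
  have hpr : 0 ≤ p r := le_trans (le_of_eq hr0.symm) (min_le_left _ _)
  have hqr : q r ≤ 0 := by
    have : 0 ≤ -q r := le_trans (le_of_eq hr0.symm) (min_le_right _ _)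
    linarith
  have hdisj : p r = 0 ∨ q r = 0 := by
    rcases min_eq_iff.1 hr0 with ⟨h, _⟩ | ⟨h, _⟩
    · exact Or.inl h
    · exact Or.inr (by have h' : -q r = 0 := h; linarith)
  by_cases hqr0 : q r = 0
  · -- apply stay_nonpos to -q on [r, T]
    have hpnn : ∀ t ∈ Icc r T, 0 ≤ p t := by
      intro t ht
      rcases eq_or_lt_of_le ht.1 with h | h
      · exact h ▸ hpr
      · rcases eq_or_lt_of_le ht.2 with h2 | h2
        · rw [h2, hpT]
        · exact (lt_min_iff.1 (hrpos t ⟨h, h2⟩)).1.le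
    have key := stay_nonpos (g := fun t => -q t) (v := fun t => -Q t) (K := K)
      hrT.2 ?_ ?_ (by simp [hqr0]) T ⟨hrT.2, le_refl T⟩
    · have key' : -q T ≤ 0 := key
      linarith
    · intro t ht
      exact (hq t ⟨le_trans hrT.1 ht.1, ht.2⟩).neg
    · intro t ht hpos
      have hpos' : 0 < -q t := hpos
      show -Q t ≤ K * -q t
      have := hQ t ⟨le_trans hrT.1 ht.1, ht.2⟩ (hpnn t ht) (by linarith)
      linarith
  · have hpr0 : p r = 0 := by
      rcases hdisj with h | h
      · exact h
      · exact absurd h hqr0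
    have hqrneg : q r < 0 := lt_of_le_of_ne hqr hqr0
    have h1 : 0 ≤ P r :=
      slope_nonneg_right (hp r hrT) hpr0 hrltT
        (fun t ht => (lt_min_iff.1 (hrpos t ht)).1)
    exact absurd (hP r hrT hpr0 hqrneg) (not_lt.2 h1)

/-- If additionally `β_t + γ̇_t > 0` on `[0,T]`, then for every
`t ∈ [0,T)`: `A_t + λ_t B_t > max(D_t + λ_t E_t, 0)` and `B_t < min(E_t, 0)`. -/
theorem riccati_strict_inequalities (P : Params)
    (hstrong : ∀ t ∈ Icc (0:ℝ) P.T, 0 < P.beta t + gammaDot P t)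
    (A B C D E F K : ℝ → ℝ) (hsol : IsRiccatiSol P A B C D E F K) :
    ∀ t ∈ Ico (0:ℝ) P.T,
      max (D t + P.lam t * E t) 0 < A t + P.lam t * B t ∧
      B t < min (E t) 0 := by
  obtain ⟨hA, hAT, hB, hBT, hC, hCT, hD, hDT, hE, hET, hF, hFT, hK, hKT⟩ := hsol
  have hT := P.hT
  have hTm : P.T ∈ Icc (0:ℝ) P.T := ⟨hT.le, le_refl _⟩
  obtain ⟨cl, hcl, hlamlb⟩ := P.hlam_lb
  have hlampos : ∀ t ∈ Icc (0:ℝ) P.T, 0 < P.lam t := fun t ht => lt_of_lt_of_le hcl (hlamlb t ht)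
  have hlamne : ∀ t ∈ Icc (0:ℝ) P.T, P.lam t ≠ 0 := fun t ht => (hlampos t ht).ne'
  obtain ⟨ce, hce, hepslb⟩ := P.heps_lb
  have hepspos : ∀ t ∈ Icc (0:ℝ) P.T, 0 < P.eps t := fun t ht => lt_of_lt_of_le hce (hepslb t ht)
  obtain ⟨Mb, hMb⟩ := P.hbeta_bdd
  obtain ⟨Mt, hMt⟩ := P.htheta_bdd
  have hγ : ∀ t ∈ Icc (0:ℝ) P.T, gammaDot P t * P.lam t = P.lam' t := by
    intro t ht
    unfold gammaDot
    exact div_mul_cancel₀ _ (hlamne t ht)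
  have hsp : ∀ t ∈ Icc (0:ℝ) P.T, 0 < P.lam t * P.beta t + P.lam' t := by
    intro t ht
    have h1 := mul_pos (hlampos t ht) (hstrong t ht)
    have h2 : P.lam t * (P.beta t + gammaDot P t) = P.lam t * P.beta t + P.lam' t := by
      rw [mul_add, mul_comm (P.lam t) (gammaDot P t), hγ t ht]
    rw [h2] at h1
    exact h1
  -- Step 1: lam * C ≤ 1 on [0, T]
  have hC1 : ∀ t ∈ Icc (0:ℝ) P.T, P.lam t * C t ≤ 1 := by
    have key := stay_nonpos_back (a := 0) (b := P.T)
      (g := fun t => P.lam t * C t - 1)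
      (v := fun t => P.lam' t * C t + P.lam t * ((P.eps t)⁻¹ * (B t + P.lam t * C t) ^ 2
        + 2 * P.beta t * C t - (P.lam t)⁻¹ * (2 * P.beta t + gammaDot P t)))
      (K := 0) hT.le ?_ ?_ ?_
    · intro t ht
      have := key t ht
      linarith
    · intro t ht
      exact ((P.hlam_deriv t).mul (hC t ht)).sub_const 1
    · intro t ht hpos
      have hne := hlamne t ht
      have hli2 : P.lam t * ((P.lam t)⁻¹ * (2 * P.beta t + gammaDot P t))
          = 2 * P.beta t + gammaDot P t := by
        rw [← mul_assoc, mul_inv_cancel₀ hne, one_mul]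
      have hγC : P.lam' t * C t = gammaDot P t * (P.lam t * C t) := by
        rw [← mul_assoc, hγ t ht]
      have hnn : 0 ≤ P.lam t * ((P.eps t)⁻¹ * (B t + P.lam t * C t) ^ 2) :=
        mul_nonneg (hlampos t ht).le (mul_nonneg (inv_pos.2 (hepspos t ht)).le (sq_nonneg _))
      have hpos2 : 0 < (2 * P.beta t + gammaDot P t) * (P.lam t * C t - 1) :=
        mul_pos (P.hnoarb t ht) hpos
      nlinarith [hnn, hpos2, hγC, hli2]
    · rw [hCT, mul_inv_cancel₀ (hlamne P.T hTm)]
      norm_num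
  -- Step 2: B + lam * C > 0 on [0, T)
  have hbt : ∀ t ∈ Ico (0:ℝ) P.T, 0 < B t + P.lam t * C t := by
    apply single_pos hT
      (P := fun t => ((P.eps t)⁻¹ * (A t + P.lam t * B t) * (B t + P.lam t * C t) + P.beta t * B t)
        + (P.lam' t * C t + P.lam t * ((P.eps t)⁻¹ * (B t + P.lam t * C t) ^ 2
            + 2 * P.beta t * C t - (P.lam t)⁻¹ * (2 * P.beta t + gammaDot P t))))
    · intro t ht
      exact (hB t ht).add ((P.hlam_deriv t).mul (hC t ht))
    · rw [hBT, hCT, mul_inv_cancel₀ (hlamne P.T hTm)]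
      norm_num
    · intro t ht h0
      have hne := hlamne t ht
      have hBC : B t = -(P.lam t * C t) := by linarith
      have hli2 : P.lam t * ((P.lam t)⁻¹ * (2 * P.beta t + gammaDot P t))
          = 2 * P.beta t + gammaDot P t := by
        rw [← mul_assoc, mul_inv_cancel₀ hne, one_mul]
      have hγC : P.lam' t * C t = gammaDot P t * (P.lam t * C t) := by
        rw [← mul_assoc, hγ t ht]
      rw [h0, hBC]
      have hint1 : 0 ≤ (P.lam t * P.beta t + P.lam' t) * (1 - P.lam t * C t) :=
        mul_nonneg (hsp t ht).le (sub_nonneg.2 (hC1 t ht))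
      nlinarith [hint1, hγ t ht, mul_pos (P.hbeta_pos t ht) (hlampos t ht), hli2,
        hlampos t ht, hγC]
  have hbtnn : ∀ t ∈ Icc (0:ℝ) P.T, 0 ≤ B t + P.lam t * C t := by
    intro t ht
    rcases eq_or_lt_of_le ht.2 with h | h
    · rw [h, hBT, hCT, mul_inv_cancel₀ (hlamne P.T hTm)]
      norm_num
    · exact (hbt t ⟨ht.1, h⟩).le
  -- Step 3: A + lam * B > 0 and B < 0 on [0, T)
  have haB : ∀ t ∈ Ico (0:ℝ) P.T, 0 < A t + P.lam t * B t ∧ B t < 0 := by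
    apply pair_pos hT (K := Mb)
      (P := fun t => (P.eps t)⁻¹ * (A t + P.lam t * B t) ^ 2
        + (P.lam' t * B t + P.lam t * ((P.eps t)⁻¹ * (A t + P.lam t * B t) * (B t + P.lam t * C t)
            + P.beta t * B t)))
      (Q := fun t => (P.eps t)⁻¹ * (A t + P.lam t * B t) * (B t + P.lam t * C t) + P.beta t * B t)
    · intro t ht
      exact (hA t ht).add ((P.hlam_deriv t).mul (hB t ht))
    · intro t ht
      exact hB t ht
    · rw [hAT, hBT]
      ring
    · rw [hBT]
      norm_num
    · intro t ht h0 hq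
      have e : (P.eps t)⁻¹ * (A t + P.lam t * B t) ^ 2
          + (P.lam' t * B t + P.lam t * ((P.eps t)⁻¹ * (A t + P.lam t * B t) * (B t + P.lam t * C t)
              + P.beta t * B t))
          = (P.eps t)⁻¹ * (A t + P.lam t * B t) * (A t + P.lam t * B t)
            + (P.eps t)⁻¹ * P.lam t * (B t + P.lam t * C t) * (A t + P.lam t * B t)
            + (P.lam t * P.beta t + P.lam' t) * B t := by
        ring
      rw [e, h0]
      simpa using mul_neg_of_pos_of_neg (hsp t ht) hq
    · intro t ht hp hq
      have h1 : 0 ≤ (P.eps t)⁻¹ * (A t + P.lam t * B t) * (B t + P.lam t * C t) :=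
        mul_nonneg (mul_nonneg (inv_pos.2 (hepspos t ht)).le hp) (hbtnn t ht)
      have hble : P.beta t - Mb ≤ 0 := by
        linarith [le_abs_self (P.beta t), hMb t ht]
      nlinarith [h1, mul_nonneg (neg_nonneg.2 hble) (neg_nonneg.2 hq)]
  -- Step 4: x > 0 and y < 0 on [0, T)
  have hxy : ∀ t ∈ Ico (0:ℝ) P.T,
      0 < A t + P.lam t * B t - (D t + P.lam t * E t) ∧ B t - E t < 0 := by
    apply pair_pos hT (K := Mb + Mt)
      (P := fun t => ((P.eps t)⁻¹ * (A t + P.lam t * B t) ^ 2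
          + (P.lam' t * B t + P.lam t * ((P.eps t)⁻¹ * (A t + P.lam t * B t) * (B t + P.lam t * C t)
              + P.beta t * B t)))
        - (((P.eps t)⁻¹ * (A t + P.lam t * B t) * (D t + P.lam t * E t) - P.theta t * (A t - D t))
          + (P.lam' t * E t + P.lam t * ((P.eps t)⁻¹ * (B t + P.lam t * C t) * (D t + P.lam t * E t)
              - P.theta t * (B t - E t) + P.beta t * E t))))
      (Q := fun t => ((P.eps t)⁻¹ * (A t + P.lam t * B t) * (B t + P.lam t * C t) + P.beta t * B t)
        - ((P.eps t)⁻¹ * (B t + P.lam t * C t) * (D t + P.lam t * E t)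
            - P.theta t * (B t - E t) + P.beta t * E t))
    · intro t ht
      exact ((hA t ht).add ((P.hlam_deriv t).mul (hB t ht))).sub
        ((hD t ht).add ((P.hlam_deriv t).mul (hE t ht)))
    · intro t ht
      exact (hB t ht).sub (hE t ht)
    · rw [hAT, hBT, hDT, hET]
      ring
    · rw [hBT, hET]
      norm_num
    · intro t ht h0 hq
      have e : ((P.eps t)⁻¹ * (A t + P.lam t * B t) ^ 2
          + (P.lam' t * B t + P.lam t * ((P.eps t)⁻¹ * (A t + P.lam t * B t) * (B t + P.lam t * C t)
              + P.beta t * B t)))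
        - (((P.eps t)⁻¹ * (A t + P.lam t * B t) * (D t + P.lam t * E t) - P.theta t * (A t - D t))
          + (P.lam' t * E t + P.lam t * ((P.eps t)⁻¹ * (B t + P.lam t * C t) * (D t + P.lam t * E t)
              - P.theta t * (B t - E t) + P.beta t * E t)))
          = ((P.eps t)⁻¹ * ((A t + P.lam t * B t) + P.lam t * (B t + P.lam t * C t)) + P.theta t)
              * (A t + P.lam t * B t - (D t + P.lam t * E t))
            + (P.lam t * P.beta t + P.lam' t) * (B t - E t) := by
        ring
      rw [e, h0]
      simpa using mul_neg_of_pos_of_neg (hsp t ht) hq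
    · intro t ht hp hq
      have e : ((P.eps t)⁻¹ * (A t + P.lam t * B t) * (B t + P.lam t * C t) + P.beta t * B t)
        - ((P.eps t)⁻¹ * (B t + P.lam t * C t) * (D t + P.lam t * E t)
            - P.theta t * (B t - E t) + P.beta t * E t)
          = (P.eps t)⁻¹ * (B t + P.lam t * C t) * (A t + P.lam t * B t - (D t + P.lam t * E t))
            + (P.theta t + P.beta t) * (B t - E t) := by
        ring
      have h1 : 0 ≤ (P.eps t)⁻¹ * (B t + P.lam t * C t)
          * (A t + P.lam t * B t - (D t + P.lam t * E t)) :=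
        mul_nonneg (mul_nonneg (inv_pos.2 (hepspos t ht)).le (hbtnn t ht)) hp
      have hble : P.theta t + P.beta t - (Mb + Mt) ≤ 0 := by
        linarith [le_abs_self (P.theta t), hMt t ht, le_abs_self (P.beta t), hMb t ht]
      nlinarith [h1, mul_nonneg (neg_nonneg.2 hble) (neg_nonneg.2 hq), e]
  -- Conclusion
  intro t ht
  obtain ⟨h1, h2⟩ := haB t ht
  obtain ⟨h3, h4⟩ := hxy t ht
  exact ⟨max_lt (by linarith) h1, lt_min (by linarith) h2⟩
end

section
/- Assume β_t + γ̇_t > 0 for all t ∈ [0, T]. Let θ̃ : [0, T] → ℝ be measurable and bounded, and let (D̃, Ẽ) be defined by the same ODEs as (D, E) in the Riccati system but with θ̃ in place of θ (and the same A, B, C), with terminal conditions D̃_T = Ẽ_T = 0. If θ_t ≥ θ̃_t for all t ∈ [0, T], then D_t + λ_t E_t ≥ D̃_t + λ_t Ẽ_t and E_t ≤ Ẽ_t for all t ∈ [0, T]. In particular, if θ_t ≥ 0 for all t ∈ [0, T], then D_t + λ_t E_t ≥ 0 and E_t ≤ 0 for all t ∈ [0, T]. -/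
open Set MeasureTheory Matrix

/-- The `(D, E)` subsystem of the Riccati system, with a general mean-reversion
function `th` in place of `θ` (and the same `A, B, C`). -/
def IsDESol (P : Params) (th : ℝ → ℝ) (A B C Dt Et : ℝ → ℝ) : Prop :=
  (∀ t ∈ Icc (0:ℝ) P.T,
      HasDerivAt Dt ((P.eps t)⁻¹ * (A t + P.lam t * B t) * (Dt t + P.lam t * Et t)
        - th t * (A t - Dt t)) t) ∧
  Dt P.T = 0 ∧
  (∀ t ∈ Icc (0:ℝ) P.T,
      HasDerivAt Et ((P.eps t)⁻¹ * (B t + P.lam t * C t) * (Dt t + P.lam t * Et t)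
        - th t * (B t - Et t) + P.beta t * Et t) t) ∧
  Et P.T = 0


set_option maxHeartbeats 1000000

open Filter

section Helpers

lemma abs_mul_le {a b Ma Mb : ℝ} (ha : |a| ≤ Ma) (hb : |b| ≤ Mb) : |a * b| ≤ Ma * Mb := by
  rw [abs_mul]
  exact mul_le_mul ha hb (abs_nonneg _) ((abs_nonneg a).trans ha)

lemma coef_mul_le {c x M : ℝ} (hc : |c| ≤ M) (hx : x ≤ 0) : c * x ≤ M * max (-x) 0 := by
  rw [max_eq_left (by linarith : (0:ℝ) ≤ -x)]
  nlinarith [(abs_le.mp hc).1, mul_nonneg (by linarith [(abs_le.mp hc).1] : (0:ℝ) ≤ c + M) (by linarith : (0:ℝ) ≤ -x)]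

lemma neg_coef_mul_le {c x M : ℝ} (h0 : 0 ≤ c) (hM : c ≤ M) : -(c * x) ≤ M * max (-x) 0 := by
  rcases le_or_gt x 0 with h | h
  · rw [max_eq_left (by linarith : (0:ℝ) ≤ -x)]
    nlinarith
  · have h1 : -(c * x) ≤ 0 := by nlinarith
    have h2 : 0 ≤ M * max (-x) 0 := mul_nonneg (h0.trans hM) (le_max_right _ _)
    linarith

lemma bdd_of_derivOn {a b : ℝ} {f f' : ℝ → ℝ}
    (hf : ∀ t ∈ Icc a b, HasDerivAt f (f' t) t) :
    ∃ M, 0 ≤ M ∧ ∀ t ∈ Icc a b, |f t| ≤ M := by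
  obtain ⟨Cc, hC⟩ := isCompact_Icc.exists_bound_of_continuousOn
    (fun u hu => ((hf u hu).continuousAt).continuousWithinAt)
  refine ⟨max Cc 0, le_max_right _ _, fun t ht => ?_⟩
  have := hC t ht
  rw [Real.norm_eq_abs] at this
  exact this.trans (le_max_left _ _)

end Helpers

/-- Backward cone invariance for a 2D cooperative differential inequality system. -/
lemma cone_inv {a b K : ℝ} (hK : 0 ≤ K) {f g f' g' : ℝ → ℝ}
    (hf : ∀ t ∈ Icc a b, HasDerivAt f (f' t) t)
    (hg : ∀ t ∈ Icc a b, HasDerivAt g (g' t) t)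
    (hfb : 0 ≤ f b) (hgb : 0 ≤ g b)
    (Hf : ∀ t ∈ Icc a b, f t ≤ 0 → f' t ≤ K * (max (-f t) 0 + max (-g t) 0))
    (Hg : ∀ t ∈ Icc a b, g t ≤ 0 → g' t ≤ K * (max (-f t) 0 + max (-g t) 0)) :
    ∀ t ∈ Icc a b, 0 ≤ f t ∧ 0 ≤ g t := by
  set M : ℝ := 2 * K + 1 with hMdef
  have hMpos : 0 < M := by positivity
  have main : ∀ δ : ℝ, 0 < δ → ∀ s ∈ Icc a b,
      0 < f s + δ * Real.exp (M * (b - s)) ∧ 0 < g s + δ * Real.exp (M * (b - s)) := by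
    intro δ hδ
    set F : ℝ → ℝ := fun s => f s + δ * Real.exp (M * (b - s)) with hFdef
    set G : ℝ → ℝ := fun s => g s + δ * Real.exp (M * (b - s)) with hGdef
    by_contra hcon
    push_neg at hcon
    obtain ⟨s₀, hs₀, hs₀'⟩ := hcon
    have hdisj : F s₀ ≤ 0 ∨ G s₀ ≤ 0 := by
      by_cases h : 0 < F s₀
      · exact Or.inr (hs₀' h)
      · exact Or.inl (not_lt.mp h)
    have hab : a ≤ b := le_trans hs₀.1 hs₀.2
    have hexpc : Continuous (fun s : ℝ => δ * Real.exp (M * (b - s))) := by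
      continuity
    have hFc : ContinuousOn F (Icc a b) := fun u hu =>
      (((hf u hu).continuousAt).add hexpc.continuousAt).continuousWithinAt
    have hGc : ContinuousOn G (Icc a b) := fun u hu =>
      (((hg u hu).continuousAt).add hexpc.continuousAt).continuousWithinAt
    have hsub : Icc s₀ b ⊆ Icc a b := Icc_subset_Icc hs₀.1 le_rfl
    set S : Set ℝ := (Icc s₀ b ∩ F ⁻¹' Iic 0) ∪ (Icc s₀ b ∩ G ⁻¹' Iic 0) with hSdef
    have hSclosed : IsClosed S :=
      ((hFc.mono hsub).preimage_isClosed_of_isClosed isClosed_Icc isClosed_Iic).union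
        ((hGc.mono hsub).preimage_isClosed_of_isClosed isClosed_Icc isClosed_Iic)
    have hSne : S.Nonempty := by
      refine ⟨s₀, ?_⟩
      rcases hdisj with h | h
      · exact Or.inl ⟨⟨le_rfl, hs₀.2⟩, h⟩
      · exact Or.inr ⟨⟨le_rfl, hs₀.2⟩, h⟩
    have hSsub : S ⊆ Icc s₀ b := by
      rintro u (⟨hu, _⟩ | ⟨hu, _⟩) <;> exact hu
    have hSbdd : BddAbove S := BddAbove.mono hSsub bddAbove_Icc
    set t₁ : ℝ := sSup S with ht₁def
    have ht₁S : t₁ ∈ S := hSclosed.csSup_mem hSne hSbdd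
    have ht₁Icc : t₁ ∈ Icc a b := hsub (hSsub ht₁S)
    have ht₁b : t₁ ≤ b := (hSsub ht₁S).2
    have hFb : 0 < F b := by
      simp only [hFdef]
      rw [sub_self, mul_zero, Real.exp_zero]
      linarith
    have hGb : 0 < G b := by
      simp only [hGdef]
      rw [sub_self, mul_zero, Real.exp_zero]
      linarith
    have ht₁ltb : t₁ < b := by
      rcases lt_or_eq_of_le ht₁b with h | h
      · exact h
      · exfalso
        rcases ht₁S with ⟨_, hF⟩ | ⟨_, hG⟩
        · rw [h] at hF; exact absurd hFb (not_lt.mpr hF)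
        · rw [h] at hG; exact absurd hGb (not_lt.mpr hG)
    have hpos : ∀ u ∈ Ioc t₁ b, 0 < F u ∧ 0 < G u := by
      intro u hu
      have hus₀ : u ∈ Icc s₀ b := ⟨le_trans (hSsub ht₁S).1 hu.1.le, hu.2⟩
      by_contra hc
      push_neg at hc
      have huS : u ∈ S := by
        by_cases h : 0 < F u
        · exact Or.inr ⟨hus₀, hc h⟩
        · exact Or.inl ⟨hus₀, not_lt.mp h⟩
      exact absurd (le_csSup hSbdd huS) (not_le.mpr hu.1)
    have hIoc : Ioc t₁ b ∈ nhdsWithin t₁ (Ioi t₁) :=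
      Ioc_mem_nhdsGT_of_mem ⟨le_rfl, ht₁ltb⟩
    have hFt₁0 : 0 ≤ F t₁ := by
      have hc : ContinuousAt F t₁ := ((hf t₁ ht₁Icc).continuousAt).add hexpc.continuousAt
      exact ge_of_tendsto (hc.tendsto.mono_left nhdsWithin_le_nhds)
        (Filter.mem_of_superset hIoc fun u hu => (hpos u hu).1.le)
    have hGt₁0 : 0 ≤ G t₁ := by
      have hc : ContinuousAt G t₁ := ((hg t₁ ht₁Icc).continuousAt).add hexpc.continuousAt
      exact ge_of_tendsto (hc.tendsto.mono_left nhdsWithin_le_nhds)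
        (Filter.mem_of_superset hIoc fun u hu => (hpos u hu).2.le)
    set Ex : ℝ := Real.exp (M * (b - t₁)) with hExdef
    have hExpos : 0 < Ex := Real.exp_pos _
    have hδEx : 0 < δ * Ex := by positivity
    have hexpd : HasDerivAt (fun s : ℝ => δ * Real.exp (M * (b - s))) (-(δ * M * Ex)) t₁ := by
      have h1 : HasDerivAt (fun s : ℝ => M * (b - s)) (-M) t₁ := by
        simpa using ((hasDerivAt_const t₁ b).sub (hasDerivAt_id t₁)).const_mul M
      have h2 := (Real.hasDerivAt_exp (M * (b - t₁))).comp t₁ h1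
      have h3 := h2.const_mul δ
      refine h3.congr_deriv ?_
      simp only [hExdef]; ring
    have key : ∀ (φ ψ φ' : ℝ → ℝ),
        (∀ t ∈ Icc a b, HasDerivAt φ (φ' t) t) →
        (∀ t ∈ Icc a b, φ t ≤ 0 → φ' t ≤ K * (max (-φ t) 0 + max (-ψ t) 0)) →
        φ t₁ + δ * Ex = 0 →
        0 ≤ ψ t₁ + δ * Ex →
        (∀ u ∈ Ioc t₁ b, 0 < φ u + δ * Real.exp (M * (b - u))) →
        False := by
      intro φ ψ φ' hφ Hφ hΦ0 hΨ0 hΦpos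
      have hφt₁ : φ t₁ = -(δ * Ex) := by linarith
      have hφneg : φ t₁ ≤ 0 := by linarith
      have hmax1 : max (-φ t₁) 0 = δ * Ex := by
        rw [hφt₁, neg_neg]; exact max_eq_left hδEx.le
      have hmax2 : max (-ψ t₁) 0 ≤ δ * Ex := by
        apply max_le _ hδEx.le; linarith
      have hbound : φ' t₁ ≤ K * (2 * (δ * Ex)) := by
        calc φ' t₁ ≤ K * (max (-φ t₁) 0 + max (-ψ t₁) 0) := Hφ t₁ ht₁Icc hφneg
          _ ≤ K * (2 * (δ * Ex)) := by
              apply mul_le_mul_of_nonneg_left _ hK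
              rw [hmax1]; linarith
      -- derivative of perturbed function
      have hΦd : HasDerivAt (fun s => φ s + δ * Real.exp (M * (b - s)))
          (φ' t₁ - δ * M * Ex) t₁ := by
        exact ((hφ t₁ ht₁Icc).add hexpd).congr_deriv (by ring)
      -- right slopes nonneg
      have hslope := hasDerivAt_iff_tendsto_slope.mp hΦd
      have hmono : nhdsWithin t₁ (Ioi t₁) ≤ nhdsWithin t₁ {t₁}ᶜ :=
        nhdsWithin_mono _ (fun u hu => ne_of_gt hu)
      have hd0 : 0 ≤ φ' t₁ - δ * M * Ex := by
        refine ge_of_tendsto (hslope.mono_left hmono)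
          (Filter.mem_of_superset hIoc fun u hu => ?_)
        have h1 : φ t₁ + δ * Real.exp (M * (b - t₁)) = 0 := by
          rw [← hExdef]; exact hΦ0
        simp only [Set.mem_setOf_eq, slope_def_field]
        rw [h1, sub_zero]
        exact div_nonneg (hΦpos u hu).le (by linarith [hu.1])
      nlinarith [hδEx, hbound, hd0]
    rcases ht₁S with ⟨_, hF⟩ | ⟨_, hG⟩
    · have hF0 : F t₁ = 0 := le_antisymm hF hFt₁0
      exact key f g f' hf Hf hF0 hGt₁0 (fun u hu => (hpos u hu).1)
    · have hG0 : G t₁ = 0 := le_antisymm hG hGt₁0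
      refine key g f g' hg ?_ hG0 hFt₁0 (fun u hu => (hpos u hu).2)
      intro t ht h
      have := Hg t ht h
      linarith
  intro t ht
  have hE : (0:ℝ) < Real.exp (M * (b - t)) := Real.exp_pos _
  constructor
  · by_contra h
    push_neg at h
    have hδ : 0 < (-(f t)) / (2 * Real.exp (M * (b - t))) := div_pos (by linarith) (by positivity)
    have h1 := (main _ hδ t ht).1
    have h2 : (-(f t)) / (2 * Real.exp (M * (b - t))) * Real.exp (M * (b - t)) = -(f t) / 2 := by
      field_simp
    rw [h2] at h1
    linarith
  · by_contra h
    push_neg at h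
    have hδ : 0 < (-(g t)) / (2 * Real.exp (M * (b - t))) := div_pos (by linarith) (by positivity)
    have h1 := (main _ hδ t ht).2
    have h2 : (-(g t)) / (2 * Real.exp (M * (b - t))) * Real.exp (M * (b - t)) = -(g t) / 2 := by
      field_simp
    rw [h2] at h1
    linarith
/-- Comparison of two `(D,E)` subsystem solutions with different mean-reversion speeds. -/
lemma riccati_DE_comparison (P : Params)
    (hstrong : ∀ t ∈ Icc (0:ℝ) P.T, 0 < P.beta t + gammaDot P t)
    (A B C : ℝ → ℝ)
    (hA : ∀ t ∈ Icc (0:ℝ) P.T,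
      HasDerivAt A ((P.eps t)⁻¹ * (A t + P.lam t * B t) ^ 2) t)
    (hAT : A P.T = P.lam P.T)
    (hB : ∀ t ∈ Icc (0:ℝ) P.T,
      HasDerivAt B ((P.eps t)⁻¹ * (A t + P.lam t * B t) * (B t + P.lam t * C t)
        + P.beta t * B t) t)
    (hBT : B P.T = -1)
    (hC : ∀ t ∈ Icc (0:ℝ) P.T,
      HasDerivAt C ((P.eps t)⁻¹ * (B t + P.lam t * C t) ^ 2 + 2 * P.beta t * C t
        - (P.lam t)⁻¹ * (2 * P.beta t + gammaDot P t)) t)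
    (hCT : C P.T = (P.lam P.T)⁻¹)
    (th th2 : ℝ → ℝ)
    (hth_bdd : ∃ M, ∀ t ∈ Icc (0:ℝ) P.T, |th t| ≤ M)
    (hth2_bdd : ∃ M, ∀ t ∈ Icc (0:ℝ) P.T, |th2 t| ≤ M)
    (D E D2 E2 : ℝ → ℝ)
    (hDE : IsDESol P th A B C D E) (hDE2 : IsDESol P th2 A B C D2 E2)
    (hcomp : ∀ t ∈ Icc (0:ℝ) P.T, th2 t ≤ th t) :
    ∀ t ∈ Icc (0:ℝ) P.T,
      D2 t + P.lam t * E2 t ≤ D t + P.lam t * E t ∧ E t ≤ E2 t := by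
  obtain ⟨hD, hDT, hE, hET⟩ := hDE
  obtain ⟨hD2, hD2T, hE2, hE2T⟩ := hDE2
  have hTmem : P.T ∈ Icc (0:ℝ) P.T := ⟨P.hT.le, le_rfl⟩
  have h0mem : (0:ℝ) ∈ Icc (0:ℝ) P.T := ⟨le_rfl, P.hT.le⟩
  obtain ⟨cε, hcε, hεlb⟩ := P.heps_lb
  obtain ⟨clm, hclm, hlmlb⟩ := P.hlam_lb
  obtain ⟨Mlm, hlmub⟩ := P.hlam_ub
  obtain ⟨Mlm', hlm'⟩ := P.hlam'_bdd
  obtain ⟨Mβ, hβb⟩ := P.hbeta_bdd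
  obtain ⟨Mθ, hθb⟩ := hth_bdd
  obtain ⟨Mθ₂, hθ₂b⟩ := hth2_bdd
  obtain ⟨MA, hMA0, hMA⟩ := bdd_of_derivOn hA
  obtain ⟨MB, hMB0, hMB⟩ := bdd_of_derivOn hB
  obtain ⟨MC, hMC0, hMC⟩ := bdd_of_derivOn hC
  -- pointwise positivity facts
  have hL : ∀ t ∈ Icc (0:ℝ) P.T, 0 < P.lam t := fun t ht => lt_of_lt_of_le hclm (hlmlb t ht)
  have hI : ∀ t ∈ Icc (0:ℝ) P.T, 0 < (P.eps t)⁻¹ :=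
    fun t ht => inv_pos.mpr (lt_of_lt_of_le hcε (hεlb t ht))
  -- nonnegativity of constants
  have hMlm0 : 0 ≤ Mlm := le_trans (le_trans hclm.le (hlmlb 0 h0mem)) (hlmub 0 h0mem)
  have hMβ0 : 0 ≤ Mβ := (abs_nonneg _).trans (hβb 0 h0mem)
  have hMθ0 : 0 ≤ Mθ := (abs_nonneg _).trans (hθb 0 h0mem)
  have hMθ₂0 : 0 ≤ Mθ₂ := (abs_nonneg _).trans (hθ₂b 0 h0mem)
  have hMlm'0 : 0 ≤ Mlm' := (abs_nonneg _).trans (hlm' 0)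
  have hMI0 : 0 ≤ cε⁻¹ := inv_nonneg.mpr hcε.le
  -- pointwise abs bounds
  have habsL : ∀ t ∈ Icc (0:ℝ) P.T, |P.lam t| ≤ Mlm := fun t ht => by
    rw [abs_of_pos (hL t ht)]; exact hlmub t ht
  have habsI : ∀ t ∈ Icc (0:ℝ) P.T, |(P.eps t)⁻¹| ≤ cε⁻¹ := fun t ht => by
    rw [abs_of_pos (hI t ht)]
    exact inv_anti₀ hcε (hεlb t ht)
  have habsAB : ∀ t ∈ Icc (0:ℝ) P.T, |A t + P.lam t * B t| ≤ MA + Mlm * MB :=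
    fun t ht => (abs_add_le _ _).trans (add_le_add (hMA t ht) (abs_mul_le (habsL t ht) (hMB t ht)))
  have habsBC : ∀ t ∈ Icc (0:ℝ) P.T, |B t + P.lam t * C t| ≤ MB + Mlm * MC :=
    fun t ht => (abs_add_le _ _).trans (add_le_add (hMB t ht) (abs_mul_le (habsL t ht) (hMC t ht)))
  set Mco : ℝ := cε⁻¹ * (MA + Mlm * MB) + Mlm * (cε⁻¹ * (MB + Mlm * MC)) with hMcodef
  clear_value Mco
  have hMco0 : 0 ≤ Mco := by
    rw [hMcodef]
    apply add_nonneg (mul_nonneg hMI0 (by positivity)) (mul_nonneg hMlm0 (mul_nonneg hMI0 (by positivity)))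
  have habsSco : ∀ t ∈ Icc (0:ℝ) P.T,
      |(P.eps t)⁻¹ * (A t + P.lam t * B t) + P.lam t * ((P.eps t)⁻¹ * (B t + P.lam t * C t))| ≤ Mco := by
    intro t ht
    rw [hMcodef]
    exact (abs_add_le _ _).trans (add_le_add (abs_mul_le (habsI t ht) (habsAB t ht))
      (abs_mul_le (habsL t ht) (abs_mul_le (habsI t ht) (habsBC t ht))))
  have habsIBC : ∀ t ∈ Icc (0:ℝ) P.T,
      |(P.eps t)⁻¹ * (B t + P.lam t * C t)| ≤ cε⁻¹ * (MB + Mlm * MC) :=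
    fun t ht => abs_mul_le (habsI t ht) (habsBC t ht)
  have habsc : ∀ t ∈ Icc (0:ℝ) P.T, |P.lam' t + P.beta t * P.lam t| ≤ Mlm' + Mβ * Mlm :=
    fun t ht => (abs_add_le _ _).trans (add_le_add (hlm' t) (abs_mul_le (hβb t ht) (habsL t ht)))
  have hc0 : ∀ t ∈ Icc (0:ℝ) P.T, 0 ≤ P.lam' t + P.beta t * P.lam t := by
    intro t ht
    have h := hstrong t ht
    have hLt := hL t ht
    have h2 : 0 < P.lam t * (P.beta t + gammaDot P t) := mul_pos hLt h
    have h3 : P.lam t * (P.beta t + gammaDot P t) = P.beta t * P.lam t + P.lam' t := by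
      simp only [gammaDot]; field_simp
    rw [h3] at h2; linarith
  -- ================= STEP 1 : lam * C ≤ 1 =================
  have hstep1 : ∀ t ∈ Icc (0:ℝ) P.T, P.lam t * C t ≤ 1 := by
    have hf₁ : ∀ t ∈ Icc (0:ℝ) P.T, HasDerivAt (fun s => 1 - P.lam s * C s)
        (-(P.lam t * ((P.eps t)⁻¹ * (B t + P.lam t * C t) ^ 2)
          + (2 * P.beta t + gammaDot P t) * (P.lam t * C t - 1))) t := by
      intro t ht
      have hd := (hasDerivAt_const t (1:ℝ)).sub ((P.hlam_deriv t).mul (hC t ht))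
      refine hd.congr_deriv ?_
      have hLne := (hL t ht).ne'
      simp only [gammaDot]
      field_simp
      ring
    have Hcond : ∀ t ∈ Icc (0:ℝ) P.T, (fun s => 1 - P.lam s * C s) t ≤ 0 →
        (fun t => -(P.lam t * ((P.eps t)⁻¹ * (B t + P.lam t * C t) ^ 2)
          + (2 * P.beta t + gammaDot P t) * (P.lam t * C t - 1))) t ≤
        (0:ℝ) * (max (-(fun s => 1 - P.lam s * C s) t) 0 + max (-(fun s => 1 - P.lam s * C s) t) 0) := by
      intro t ht hneg
      simp only [zero_mul]
      have h1 : 0 ≤ P.lam t * ((P.eps t)⁻¹ * (B t + P.lam t * C t) ^ 2) :=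
        mul_nonneg (hL t ht).le (mul_nonneg (hI t ht).le (sq_nonneg _))
      have h2 : 0 ≤ (2 * P.beta t + gammaDot P t) * (P.lam t * C t - 1) :=
        mul_nonneg (P.hnoarb t ht).le (by simp only at hneg; linarith)
      linarith
    have hfT : (0:ℝ) ≤ (fun s => 1 - P.lam s * C s) P.T := by
      simp only
      rw [hCT, mul_inv_cancel₀ (hL P.T hTmem).ne']
      norm_num
    have := cone_inv le_rfl hf₁ hf₁ hfT hfT Hcond Hcond
    intro t ht
    have h := (this t ht).1
    linarith
  -- ================= STEP 2 : 0 ≤ B + lam * C =================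
  have hstep2 : ∀ t ∈ Icc (0:ℝ) P.T, 0 ≤ B t + P.lam t * C t := by
    have hv : ∀ t ∈ Icc (0:ℝ) P.T, HasDerivAt (fun s => B s + P.lam s * C s)
        (((P.eps t)⁻¹ * (A t + P.lam t * B t) + P.lam t * ((P.eps t)⁻¹ * (B t + P.lam t * C t))
            + P.beta t) * (B t + P.lam t * C t)
          + (P.beta t + gammaDot P t) * (P.lam t * C t - 1) - P.beta t) t := by
      intro t ht
      have hd := (hB t ht).add ((P.hlam_deriv t).mul (hC t ht))
      refine hd.congr_deriv ?_
      have hLne := (hL t ht).ne'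
      simp only [gammaDot]
      field_simp
      ring
    have hK2 : (0:ℝ) ≤ Mco + Mβ := by linarith
    have Hcond : ∀ t ∈ Icc (0:ℝ) P.T, (fun s => B s + P.lam s * C s) t ≤ 0 →
        (fun t => ((P.eps t)⁻¹ * (A t + P.lam t * B t) + P.lam t * ((P.eps t)⁻¹ * (B t + P.lam t * C t))
            + P.beta t) * (B t + P.lam t * C t)
          + (P.beta t + gammaDot P t) * (P.lam t * C t - 1) - P.beta t) t ≤
        (Mco + Mβ) * (max (-(fun s => B s + P.lam s * C s) t) 0
          + max (-(fun s => B s + P.lam s * C s) t) 0) := by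
      intro t ht hneg
      simp only at hneg ⊢
      have habscoef : |(P.eps t)⁻¹ * (A t + P.lam t * B t)
          + P.lam t * ((P.eps t)⁻¹ * (B t + P.lam t * C t)) + P.beta t| ≤ Mco + Mβ :=
        (abs_add_le _ _).trans (add_le_add (habsSco t ht) (hβb t ht))
      have t1 := coef_mul_le habscoef hneg
      have t2 : (P.beta t + gammaDot P t) * (P.lam t * C t - 1) ≤ 0 :=
        mul_nonpos_iff.mpr (Or.inl ⟨(hstrong t ht).le, by linarith [hstep1 t ht]⟩)
      have t3 : 0 < P.beta t := P.hbeta_pos t ht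
      have t4 : 0 ≤ max (-(B t + P.lam t * C t)) 0 := le_max_right _ _
      nlinarith [mul_nonneg hK2 t4]
    have hfT : (0:ℝ) ≤ (fun s => B s + P.lam s * C s) P.T := by
      simp only
      rw [hBT, hCT, mul_inv_cancel₀ (hL P.T hTmem).ne']
      norm_num
    intro t ht
    exact (cone_inv hK2 hv hv hfT hfT Hcond Hcond t ht).1
  -- ================= STEP 3 : 0 ≤ (A-D2) + lam (B-E2) and 0 ≤ E2 - B ==============
  set K3 : ℝ := Mco + Mθ₂ + (Mlm' + Mβ * Mlm) + cε⁻¹ * (MB + Mlm * MC) + Mβ with hK3def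
  clear_value K3
  have hK30 : (0:ℝ) ≤ K3 := by
    have h1 : 0 ≤ cε⁻¹ * (MB + Mlm * MC) := mul_nonneg hMI0 (by positivity)
    have h2 : 0 ≤ Mβ * Mlm := mul_nonneg hMβ0 hMlm0
    rw [hK3def]; linarith
  have hstep3 : ∀ t ∈ Icc (0:ℝ) P.T,
      0 ≤ A t - D2 t + P.lam t * (B t - E2 t) ∧ 0 ≤ E2 t - B t := by
    have hf : ∀ t ∈ Icc (0:ℝ) P.T, HasDerivAt (fun s => A s - D2 s + P.lam s * (B s - E2 s))
        (((P.eps t)⁻¹ * (A t + P.lam t * B t) + P.lam t * ((P.eps t)⁻¹ * (B t + P.lam t * C t))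
            + th2 t) * (A t - D2 t + P.lam t * (B t - E2 t))
          + (P.lam' t + P.beta t * P.lam t) * (B t - E2 t)) t := by
      intro t ht
      have hd := ((hA t ht).sub (hD2 t ht)).add ((P.hlam_deriv t).mul ((hB t ht).sub (hE2 t ht)))
      refine hd.congr_deriv ?_
      rw [Pi.sub_apply]
      ring
    have hg : ∀ t ∈ Icc (0:ℝ) P.T, HasDerivAt (fun s => E2 s - B s)
        (-((P.eps t)⁻¹ * (B t + P.lam t * C t) * (A t - D2 t + P.lam t * (B t - E2 t)))
          + (th2 t + P.beta t) * (E2 t - B t)) t := by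
      intro t ht
      have hd := (hE2 t ht).sub (hB t ht)
      refine hd.congr_deriv ?_
      ring
    have hfT : (0:ℝ) ≤ (fun s => A s - D2 s + P.lam s * (B s - E2 s)) P.T := by
      have h : A P.T - D2 P.T + P.lam P.T * (B P.T - E2 P.T) = 0 := by
        rw [hAT, hBT, hD2T, hE2T]; ring
      simp only
      linarith
    have hgT : (0:ℝ) ≤ (fun s => E2 s - B s) P.T := by
      simp only
      rw [hBT, hE2T]
      norm_num
    have Hf : ∀ t ∈ Icc (0:ℝ) P.T, (fun s => A s - D2 s + P.lam s * (B s - E2 s)) t ≤ 0 →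
        (fun t => ((P.eps t)⁻¹ * (A t + P.lam t * B t) + P.lam t * ((P.eps t)⁻¹ * (B t + P.lam t * C t))
            + th2 t) * (A t - D2 t + P.lam t * (B t - E2 t))
          + (P.lam' t + P.beta t * P.lam t) * (B t - E2 t)) t ≤
        K3 * (max (-(fun s => A s - D2 s + P.lam s * (B s - E2 s)) t) 0
          + max (-(fun s => E2 s - B s) t) 0) := by
      intro t ht hneg
      simp only at hneg ⊢
      have habscoef : |(P.eps t)⁻¹ * (A t + P.lam t * B t)
          + P.lam t * ((P.eps t)⁻¹ * (B t + P.lam t * C t)) + th2 t| ≤ Mco + Mθ₂ :=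
        (abs_add_le _ _).trans (add_le_add (habsSco t ht) (hθ₂b t ht))
      have t1 := coef_mul_le habscoef hneg
      have heq : (P.lam' t + P.beta t * P.lam t) * (B t - E2 t)
          = -((P.lam' t + P.beta t * P.lam t) * (E2 t - B t)) := by ring
      have t2 : (P.lam' t + P.beta t * P.lam t) * (B t - E2 t)
          ≤ (Mlm' + Mβ * Mlm) * max (-(E2 t - B t)) 0 := by
        rw [heq]
        exact neg_coef_mul_le (hc0 t ht) (le_trans (le_abs_self _) (habsc t ht))
      have m1 : 0 ≤ max (-(A t - D2 t + P.lam t * (B t - E2 t))) 0 := le_max_right _ _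
      have m2 : 0 ≤ max (-(E2 t - B t)) 0 := le_max_right _ _
      have p1 : (Mco + Mθ₂) * max (-(A t - D2 t + P.lam t * (B t - E2 t))) 0
          ≤ K3 * max (-(A t - D2 t + P.lam t * (B t - E2 t))) 0 := by
        apply mul_le_mul_of_nonneg_right _ m1
        have h1 : 0 ≤ Mβ * Mlm := mul_nonneg hMβ0 hMlm0
        have h2 : 0 ≤ cε⁻¹ * (MB + Mlm * MC) := mul_nonneg hMI0 (by positivity)
        simp only [hK3def]; linarith
      have p2 : (Mlm' + Mβ * Mlm) * max (-(E2 t - B t)) 0 ≤ K3 * max (-(E2 t - B t)) 0 := by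
        apply mul_le_mul_of_nonneg_right _ m2
        have h2 : 0 ≤ cε⁻¹ * (MB + Mlm * MC) := mul_nonneg hMI0 (by positivity)
        simp only [hK3def]; linarith
      have expand : K3 * (max (-(A t - D2 t + P.lam t * (B t - E2 t))) 0 + max (-(E2 t - B t)) 0)
          = K3 * max (-(A t - D2 t + P.lam t * (B t - E2 t))) 0 + K3 * max (-(E2 t - B t)) 0 := by
        ring
      rw [expand]
      linarith
    have Hg : ∀ t ∈ Icc (0:ℝ) P.T, (fun s => E2 s - B s) t ≤ 0 →
        (fun t => -((P.eps t)⁻¹ * (B t + P.lam t * C t) * (A t - D2 t + P.lam t * (B t - E2 t)))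
          + (th2 t + P.beta t) * (E2 t - B t)) t ≤
        K3 * (max (-(fun s => A s - D2 s + P.lam s * (B s - E2 s)) t) 0
          + max (-(fun s => E2 s - B s) t) 0) := by
      intro t ht hneg
      simp only at hneg ⊢
      have hcoef0 : 0 ≤ (P.eps t)⁻¹ * (B t + P.lam t * C t) :=
        mul_nonneg (hI t ht).le (hstep2 t ht)
      have t1 : -((P.eps t)⁻¹ * (B t + P.lam t * C t) * (A t - D2 t + P.lam t * (B t - E2 t)))
          ≤ cε⁻¹ * (MB + Mlm * MC) * max (-(A t - D2 t + P.lam t * (B t - E2 t))) 0 :=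
        neg_coef_mul_le hcoef0 (le_trans (le_abs_self _) (habsIBC t ht))
      have habscoef : |th2 t + P.beta t| ≤ Mθ₂ + Mβ :=
        (abs_add_le _ _).trans (add_le_add (hθ₂b t ht) (hβb t ht))
      have t2 := coef_mul_le habscoef hneg
      have m1 : 0 ≤ max (-(A t - D2 t + P.lam t * (B t - E2 t))) 0 := le_max_right _ _
      have m2 : 0 ≤ max (-(E2 t - B t)) 0 := le_max_right _ _
      have p1 : cε⁻¹ * (MB + Mlm * MC) * max (-(A t - D2 t + P.lam t * (B t - E2 t))) 0
          ≤ K3 * max (-(A t - D2 t + P.lam t * (B t - E2 t))) 0 := by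
        apply mul_le_mul_of_nonneg_right _ m1
        have h1 : 0 ≤ Mβ * Mlm := mul_nonneg hMβ0 hMlm0
        simp only [hK3def]; linarith
      have p2 : (Mθ₂ + Mβ) * max (-(E2 t - B t)) 0 ≤ K3 * max (-(E2 t - B t)) 0 := by
        apply mul_le_mul_of_nonneg_right _ m2
        have h1 : 0 ≤ Mβ * Mlm := mul_nonneg hMβ0 hMlm0
        have h2 : 0 ≤ cε⁻¹ * (MB + Mlm * MC) := mul_nonneg hMI0 (by positivity)
        simp only [hK3def]; linarith
      have expand : K3 * (max (-(A t - D2 t + P.lam t * (B t - E2 t))) 0 + max (-(E2 t - B t)) 0)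
          = K3 * max (-(A t - D2 t + P.lam t * (B t - E2 t))) 0 + K3 * max (-(E2 t - B t)) 0 := by
        ring
      rw [expand]
      linarith
    exact cone_inv hK30 hf hg hfT hgT Hf Hg
  -- ================= STEP 4 : the comparison =================
  set K4 : ℝ := Mco + Mθ + (Mlm' + Mβ * Mlm) + cε⁻¹ * (MB + Mlm * MC) + Mβ with hK4def
  clear_value K4
  have hK40 : (0:ℝ) ≤ K4 := by
    have h1 : 0 ≤ cε⁻¹ * (MB + Mlm * MC) := mul_nonneg hMI0 (by positivity)
    have h2 : 0 ≤ Mβ * Mlm := mul_nonneg hMβ0 hMlm0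
    rw [hK4def]; linarith
  have hstep4 : ∀ t ∈ Icc (0:ℝ) P.T,
      0 ≤ D t + P.lam t * E t - (D2 t + P.lam t * E2 t) ∧ 0 ≤ E2 t - E t := by
    have hf : ∀ t ∈ Icc (0:ℝ) P.T,
        HasDerivAt (fun s => D s + P.lam s * E s - (D2 s + P.lam s * E2 s))
        (((P.eps t)⁻¹ * (A t + P.lam t * B t) + P.lam t * ((P.eps t)⁻¹ * (B t + P.lam t * C t))
            + th t) * (D t + P.lam t * E t - (D2 t + P.lam t * E2 t))
          + (P.lam' t + P.beta t * P.lam t) * (E t - E2 t)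
          + (th2 t - th t) * (A t - D2 t + P.lam t * (B t - E2 t))) t := by
      intro t ht
      have hd := ((hD t ht).add ((P.hlam_deriv t).mul (hE t ht))).sub
        ((hD2 t ht).add ((P.hlam_deriv t).mul (hE2 t ht)))
      refine hd.congr_deriv ?_
      ring
    have hg : ∀ t ∈ Icc (0:ℝ) P.T, HasDerivAt (fun s => E2 s - E s)
        (-((P.eps t)⁻¹ * (B t + P.lam t * C t) * (D t + P.lam t * E t - (D2 t + P.lam t * E2 t)))
          + (P.beta t + th t) * (E2 t - E t)
          + (th2 t - th t) * (E2 t - B t)) t := by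
      intro t ht
      have hd := (hE2 t ht).sub (hE t ht)
      refine hd.congr_deriv ?_
      ring
    have hfT : (0:ℝ) ≤ (fun s => D s + P.lam s * E s - (D2 s + P.lam s * E2 s)) P.T := by
      have h : D P.T + P.lam P.T * E P.T - (D2 P.T + P.lam P.T * E2 P.T) = 0 := by
        rw [hDT, hET, hD2T, hE2T]; ring
      simp only
      linarith
    have hgT : (0:ℝ) ≤ (fun s => E2 s - E s) P.T := by
      simp only
      rw [hET, hE2T]
      norm_num
    have Hf : ∀ t ∈ Icc (0:ℝ) P.T, (fun s => D s + P.lam s * E s - (D2 s + P.lam s * E2 s)) t ≤ 0 →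
        (fun t => ((P.eps t)⁻¹ * (A t + P.lam t * B t) + P.lam t * ((P.eps t)⁻¹ * (B t + P.lam t * C t))
            + th t) * (D t + P.lam t * E t - (D2 t + P.lam t * E2 t))
          + (P.lam' t + P.beta t * P.lam t) * (E t - E2 t)
          + (th2 t - th t) * (A t - D2 t + P.lam t * (B t - E2 t))) t ≤
        K4 * (max (-(fun s => D s + P.lam s * E s - (D2 s + P.lam s * E2 s)) t) 0
          + max (-(fun s => E2 s - E s) t) 0) := by
      intro t ht hneg
      simp only at hneg ⊢
      have habscoef : |(P.eps t)⁻¹ * (A t + P.lam t * B t)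
          + P.lam t * ((P.eps t)⁻¹ * (B t + P.lam t * C t)) + th t| ≤ Mco + Mθ :=
        (abs_add_le _ _).trans (add_le_add (habsSco t ht) (hθb t ht))
      have t1 := coef_mul_le habscoef hneg
      have heq : (P.lam' t + P.beta t * P.lam t) * (E t - E2 t)
          = -((P.lam' t + P.beta t * P.lam t) * (E2 t - E t)) := by ring
      have t2 : (P.lam' t + P.beta t * P.lam t) * (E t - E2 t)
          ≤ (Mlm' + Mβ * Mlm) * max (-(E2 t - E t)) 0 := by
        rw [heq]
        exact neg_coef_mul_le (hc0 t ht) (le_trans (le_abs_self _) (habsc t ht))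
      have t3 : (th2 t - th t) * (A t - D2 t + P.lam t * (B t - E2 t)) ≤ 0 :=
        mul_nonpos_iff.mpr (Or.inr ⟨by linarith [hcomp t ht], (hstep3 t ht).1⟩)
      have m1 : 0 ≤ max (-(D t + P.lam t * E t - (D2 t + P.lam t * E2 t))) 0 := le_max_right _ _
      have m2 : 0 ≤ max (-(E2 t - E t)) 0 := le_max_right _ _
      have p1 : (Mco + Mθ) * max (-(D t + P.lam t * E t - (D2 t + P.lam t * E2 t))) 0
          ≤ K4 * max (-(D t + P.lam t * E t - (D2 t + P.lam t * E2 t))) 0 := by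
        apply mul_le_mul_of_nonneg_right _ m1
        have h1 : 0 ≤ Mβ * Mlm := mul_nonneg hMβ0 hMlm0
        have h2 : 0 ≤ cε⁻¹ * (MB + Mlm * MC) := mul_nonneg hMI0 (by positivity)
        simp only [hK4def]; linarith
      have p2 : (Mlm' + Mβ * Mlm) * max (-(E2 t - E t)) 0 ≤ K4 * max (-(E2 t - E t)) 0 := by
        apply mul_le_mul_of_nonneg_right _ m2
        have h2 : 0 ≤ cε⁻¹ * (MB + Mlm * MC) := mul_nonneg hMI0 (by positivity)
        simp only [hK4def]; linarith
      have expand : K4 * (max (-(D t + P.lam t * E t - (D2 t + P.lam t * E2 t))) 0 + max (-(E2 t - E t)) 0)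
          = K4 * max (-(D t + P.lam t * E t - (D2 t + P.lam t * E2 t))) 0
            + K4 * max (-(E2 t - E t)) 0 := by ring
      rw [expand]
      linarith
    have Hg : ∀ t ∈ Icc (0:ℝ) P.T, (fun s => E2 s - E s) t ≤ 0 →
        (fun t => -((P.eps t)⁻¹ * (B t + P.lam t * C t) * (D t + P.lam t * E t - (D2 t + P.lam t * E2 t)))
          + (P.beta t + th t) * (E2 t - E t)
          + (th2 t - th t) * (E2 t - B t)) t ≤
        K4 * (max (-(fun s => D s + P.lam s * E s - (D2 s + P.lam s * E2 s)) t) 0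
          + max (-(fun s => E2 s - E s) t) 0) := by
      intro t ht hneg
      simp only at hneg ⊢
      have hcoef0 : 0 ≤ (P.eps t)⁻¹ * (B t + P.lam t * C t) :=
        mul_nonneg (hI t ht).le (hstep2 t ht)
      have t1 : -((P.eps t)⁻¹ * (B t + P.lam t * C t)
            * (D t + P.lam t * E t - (D2 t + P.lam t * E2 t)))
          ≤ cε⁻¹ * (MB + Mlm * MC) * max (-(D t + P.lam t * E t - (D2 t + P.lam t * E2 t))) 0 :=
        neg_coef_mul_le hcoef0 (le_trans (le_abs_self _) (habsIBC t ht))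
      have habscoef : |P.beta t + th t| ≤ Mβ + Mθ :=
        (abs_add_le _ _).trans (add_le_add (hβb t ht) (hθb t ht))
      have t2 := coef_mul_le habscoef hneg
      have t3 : (th2 t - th t) * (E2 t - B t) ≤ 0 :=
        mul_nonpos_iff.mpr (Or.inr ⟨by linarith [hcomp t ht], (hstep3 t ht).2⟩)
      have m1 : 0 ≤ max (-(D t + P.lam t * E t - (D2 t + P.lam t * E2 t))) 0 := le_max_right _ _
      have m2 : 0 ≤ max (-(E2 t - E t)) 0 := le_max_right _ _
      have p1 : cε⁻¹ * (MB + Mlm * MC) * max (-(D t + P.lam t * E t - (D2 t + P.lam t * E2 t))) 0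
          ≤ K4 * max (-(D t + P.lam t * E t - (D2 t + P.lam t * E2 t))) 0 := by
        apply mul_le_mul_of_nonneg_right _ m1
        have h1 : 0 ≤ Mβ * Mlm := mul_nonneg hMβ0 hMlm0
        simp only [hK4def]; linarith
      have p2 : (Mβ + Mθ) * max (-(E2 t - E t)) 0 ≤ K4 * max (-(E2 t - E t)) 0 := by
        apply mul_le_mul_of_nonneg_right _ m2
        have h1 : 0 ≤ Mβ * Mlm := mul_nonneg hMβ0 hMlm0
        have h2 : 0 ≤ cε⁻¹ * (MB + Mlm * MC) := mul_nonneg hMI0 (by positivity)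
        simp only [hK4def]; linarith
      have expand : K4 * (max (-(D t + P.lam t * E t - (D2 t + P.lam t * E2 t))) 0 + max (-(E2 t - E t)) 0)
          = K4 * max (-(D t + P.lam t * E t - (D2 t + P.lam t * E2 t))) 0
            + K4 * max (-(E2 t - E t)) 0 := by ring
      rw [expand]
      linarith
    exact cone_inv hK40 hf hg hfT hgT Hf Hg
  intro t ht
  obtain ⟨h1, h2⟩ := hstep4 t ht
  exact ⟨by linarith, by linarith⟩

/-- Comparison in `θ`: if `β_t + γ̇_t > 0` and `θ_t ≥ θ̃_t` on `[0,T]`,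
then `D_t + λ_t E_t ≥ D̃_t + λ_t Ẽ_t` and `E_t ≤ Ẽ_t` on `[0,T]`. In particular,
`θ ≥ 0` implies `D_t + λ_t E_t ≥ 0` and `E_t ≤ 0` on `[0,T]`. -/
theorem riccati_theta_comparison (P : Params)
    (hstrong : ∀ t ∈ Icc (0:ℝ) P.T, 0 < P.beta t + gammaDot P t)
    (A B C D E F K : ℝ → ℝ) (hsol : IsRiccatiSol P A B C D E F K)
    (thetaTil : ℝ → ℝ) (hthetaTil_meas : Measurable thetaTil)
    (hthetaTil_bdd : ∃ M, ∀ t ∈ Icc (0:ℝ) P.T, |thetaTil t| ≤ M)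
    (Dtil Etil : ℝ → ℝ) (htil : IsDESol P thetaTil A B C Dtil Etil)
    (hcomp : ∀ t ∈ Icc (0:ℝ) P.T, thetaTil t ≤ P.theta t) :
    (∀ t ∈ Icc (0:ℝ) P.T,
        Dtil t + P.lam t * Etil t ≤ D t + P.lam t * E t ∧ E t ≤ Etil t) ∧
    ((∀ t ∈ Icc (0:ℝ) P.T, 0 ≤ P.theta t) →
        ∀ t ∈ Icc (0:ℝ) P.T, 0 ≤ D t + P.lam t * E t ∧ E t ≤ 0) := by
  obtain ⟨hA, hAT, hB, hBT, hC, hCT, hD, hDT, hE, hET, _, _, _, _⟩ := hsol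
  have hDEsol : IsDESol P P.theta A B C D E := ⟨hD, hDT, hE, hET⟩
  constructor
  · exact riccati_DE_comparison P hstrong A B C hA hAT hB hBT hC hCT P.theta thetaTil
      P.htheta_bdd hthetaTil_bdd D E Dtil Etil hDEsol htil hcomp
  · intro hθ
    have h0 : IsDESol P (fun _ => 0) A B C (fun _ => 0) (fun _ => 0) := by
      refine ⟨fun t ht => ?_, rfl, fun t ht => ?_, rfl⟩ <;>
        simpa using hasDerivAt_const t (0:ℝ)
    have res := riccati_DE_comparison P hstrong A B C hA hAT hB hBT hC hCT P.theta (fun _ => 0)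
      P.htheta_bdd ⟨0, fun t _ => by simp⟩ D E (fun _ => 0) (fun _ => 0) hDEsol h0
      (fun t ht => hθ t ht)
    intro t ht
    have hres := res t ht
    exact ⟨by have := hres.1; simpa using this, by simpa using hres.2⟩
end

section
/- Assume β_t + γ̇_t > 0 for all t ∈ [0, T]. Then the feedback coefficient for the outstanding position satisfies f_t := −ε_t⁻¹(A_t + λ_t B_t) < 0 for every t ∈ [0, T) (a larger outstanding position causes faster selling). -/
open Set MeasureTheory Matrix Filter Topology

lemma deriv_nonneg_of_frequently_slope {f : ℝ → ℝ} {d s : ℝ}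
    (hf : HasDerivAt f d s) (h : ∃ᶠ t in 𝓝[≠] s, 0 ≤ slope f s t) : 0 ≤ d := by
  by_contra hd
  push_neg at hd
  have ht := hasDerivAt_iff_tendsto_slope.mp hf
  have hev : ∀ᶠ t in 𝓝[≠] s, slope f s t < 0 := ht.eventually_lt_const hd
  obtain ⟨t, h1, h2⟩ := (h.and_eventually hev).exists
  linarith

lemma nonpos_of_barrier {φ φ' : ℝ → ℝ} {a b : ℝ}
    (hd : ∀ t ∈ Icc a b, HasDerivAt φ (φ' t) t)
    (hpos : ∀ t ∈ Icc a b, 0 ≤ φ t → 0 ≤ φ' t)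
    (hb : φ b ≤ 0) : ∀ t ∈ Icc a b, φ t ≤ 0 := by
  intro t₀ ht₀
  by_contra hφ
  push_neg at hφ
  have hab : a ≤ b := ht₀.1.trans ht₀.2
  have ht₀b : t₀ < b := lt_of_le_of_ne ht₀.2 (by rintro rfl; linarith)
  set c := φ t₀ with hc
  set S := {t : ℝ | t ∈ Icc t₀ b ∧ φ t ≤ c / 2} with hSdef
  have hbS : b ∈ S := ⟨⟨ht₀b.le, le_rfl⟩, by linarith⟩
  have hne : S.Nonempty := ⟨b, hbS⟩
  have hbdd : BddBelow S := ⟨t₀, fun x hx => hx.1.1⟩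
  set s₂ := sInf S with hs₂def
  have hs₂lb : t₀ ≤ s₂ := le_csInf hne fun x hx => hx.1.1
  have hs₂ub : s₂ ≤ b := csInf_le hbdd hbS
  have hs₂mem : s₂ ∈ Icc a b := ⟨ht₀.1.trans hs₂lb, hs₂ub⟩
  -- φ s₂ ≤ c/2 via closure
  have hcl : s₂ ∈ closure S := csInf_mem_closure hne hbdd
  have hconts : ContinuousAt φ s₂ := (hd s₂ hs₂mem).continuousAt
  have hφs₂ : φ s₂ ≤ c / 2 := by
    have h1 : φ s₂ ∈ closure (φ '' S) :=
      hconts.continuousWithinAt.mem_closure_image hcl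
    have h2 : closure (φ '' S) ⊆ closure (Iic (c/2)) :=
      closure_mono (by rintro x ⟨y, hy, rfl⟩; exact hy.2)
    have := h2 h1
    rwa [closure_Iic] at this
  -- φ > c/2 on [t₀, s₂)
  have hgt : ∀ x ∈ Ico t₀ s₂, c / 2 < φ x := by
    intro x hx
    by_contra hle
    push_neg at hle
    exact absurd (csInf_le hbdd ⟨⟨hx.1, hx.2.le.trans hs₂ub⟩, hle⟩) (not_le.2 hx.2)
  -- monotone on [t₀, s₂]
  have hmono : MonotoneOn φ (Icc t₀ s₂) := by
    apply monotoneOn_of_deriv_nonneg (convex_Icc _ _)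
    · intro x hx
      exact ((hd x ⟨ht₀.1.trans hx.1, hx.2.trans (hs₂ub.trans le_rfl)⟩).continuousAt).continuousWithinAt
    · intro x hx
      rw [interior_Icc] at hx
      exact ((hd x ⟨ht₀.1.trans hx.1.le, hx.2.le.trans hs₂ub⟩).differentiableAt).differentiableWithinAt
    · intro x hx
      rw [interior_Icc] at hx
      have hxm : x ∈ Icc a b := ⟨ht₀.1.trans hx.1.le, hx.2.le.trans hs₂ub⟩
      rw [(hd x hxm).deriv]
      exact hpos x hxm (le_of_lt ((by linarith : (0:ℝ) < c/2).trans (hgt x ⟨hx.1.le, hx.2⟩)))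
  have := hmono ⟨le_rfl, hs₂lb⟩ ⟨hs₂lb, le_rfl⟩ hs₂lb
  simp only [← hc] at this
  linarith


lemma quad_bound {x y a b c d Ka Kb Kc Kd : ℝ}
    (ha : |a| ≤ Ka) (hb : |b| ≤ Kb) (hc : |c| ≤ Kc) (hd : |d| ≤ Kd) :
    2 * x * (a * x + b * y) + 2 * y * (c * x + d * y)
      ≤ (2 * Ka + Kb + Kc + 2 * Kd) * (x * x + y * y) := by
  obtain ⟨ha1, ha2⟩ := abs_le.1 ha
  obtain ⟨hb1, hb2⟩ := abs_le.1 hb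
  obtain ⟨hc1, hc2⟩ := abs_le.1 hc
  obtain ⟨hd1, hd2⟩ := abs_le.1 hd
  have h1 : a * (x * x) ≤ Ka * (x * x) :=
    mul_le_mul_of_nonneg_right ha2 (mul_self_nonneg x)
  have h2 : d * (y * y) ≤ Kd * (y * y) :=
    mul_le_mul_of_nonneg_right hd2 (mul_self_nonneg y)
  have h3 : 2 * (b * (x * y)) ≤ Kb * (x * x + y * y) := by
    nlinarith [mul_nonneg (by linarith : (0:ℝ) ≤ Kb - b) (sq_nonneg (x - y)),
      mul_nonneg (by linarith : (0:ℝ) ≤ Kb + b) (sq_nonneg (x + y))]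
  have h4 : 2 * (c * (x * y)) ≤ Kc * (x * x + y * y) := by
    nlinarith [mul_nonneg (by linarith : (0:ℝ) ≤ Kc - c) (sq_nonneg (x - y)),
      mul_nonneg (by linarith : (0:ℝ) ≤ Kc + c) (sq_nonneg (x + y))]
  nlinarith [h1, h2, h3, h4]

set_option maxHeartbeats 2000000 in
/-- If `β_t + γ̇_t > 0` on `[0,T]`, then the feedback coefficient for
the outstanding position satisfies `f_t := −ε_t⁻¹(A_t + λ_t B_t) < 0` on `[0,T)`. -/
theorem feedback_f_neg (P : Params)
    (hstrong : ∀ t ∈ Icc (0:ℝ) P.T, 0 < P.beta t + gammaDot P t)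
    (A B C D E F K : ℝ → ℝ) (hsol : IsRiccatiSol P A B C D E F K) :
    ∀ t ∈ Ico (0:ℝ) P.T, -(P.eps t)⁻¹ * (A t + P.lam t * B t) < 0 := by

  classical
  obtain ⟨hA, hAT, hB, hBT, hC, hCT, -, -, -, -, -, -, -, -⟩ := hsol
  obtain ⟨cε, hcε, hεlb⟩ := P.heps_lb
  obtain ⟨cl, hcl, hllb⟩ := P.hlam_lb
  obtain ⟨Ml, hMl⟩ := P.hlam_ub
  obtain ⟨Mβ, hMβ⟩ := P.hbeta_bdd
  obtain ⟨Ml2, hMl2⟩ := P.hlam'_bdd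
  have hTmem : P.T ∈ Icc (0:ℝ) P.T := ⟨P.hT.le, le_rfl⟩
  have hlpos : ∀ t ∈ Icc (0:ℝ) P.T, 0 < P.lam t := fun t ht => hcl.trans_le (hllb t ht)
  have hεipos : ∀ t ∈ Icc (0:ℝ) P.T, 0 < (P.eps t)⁻¹ :=
    fun t ht => inv_pos.2 (hcε.trans_le (hεlb t ht))
  have hgbd : ∀ t ∈ Icc (0:ℝ) P.T, |gammaDot P t| ≤ Ml2 / cl := by
    intro t ht
    have h1 : |gammaDot P t| = |P.lam' t| / P.lam t := by
      rw [gammaDot, abs_div, abs_of_pos (hlpos t ht)]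
    rw [h1]
    exact div_le_div₀ (le_trans (abs_nonneg _) (hMl2 t)) (hMl2 t) hcl (hllb t ht)
  -- derivative of λ C
  have hm' : ∀ t ∈ Icc (0:ℝ) P.T, HasDerivAt (fun t => P.lam t * C t)
      ((P.eps t)⁻¹ * P.lam t * (B t + P.lam t * C t) ^ 2
        + (2 * P.beta t + gammaDot P t) * (P.lam t * C t - 1)) t := by
    intro t ht
    have h1 := (P.hlam_deriv t).fun_mul (hC t ht)
    refine h1.congr_deriv ?_
    have hlne : P.lam t ≠ 0 := (hlpos t ht).ne'
    rw [gammaDot]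
    field_simp
    ring
  set K : ℝ := 2 * Mβ + Ml2 / cl with hKdef
  have hK : ∀ t ∈ Icc (0:ℝ) P.T, 0 ≤ 2 * P.beta t + gammaDot P t + K := by
    intro t ht
    have h1 := abs_le.1 (hMβ t ht)
    have h2 := abs_le.1 (hgbd t ht)
    simp only [hKdef]
    linarith
  -- Step 1 : λ C ≤ 1 on [0,T]
  have step1 : ∀ t ∈ Icc (0:ℝ) P.T, P.lam t * C t ≤ 1 := by
    have key : ∀ t ∈ Icc (0:ℝ) P.T, (P.lam t * C t - 1) * Real.exp (K * t) ≤ 0 := by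
      apply nonpos_of_barrier (φ' := fun t =>
        ((P.eps t)⁻¹ * P.lam t * (B t + P.lam t * C t) ^ 2
          + (2 * P.beta t + gammaDot P t) * (P.lam t * C t - 1)
          + K * (P.lam t * C t - 1)) * Real.exp (K * t))
      · intro t ht
        have h1 := ((hm' t ht).sub_const 1).fun_mul
          (((hasDerivAt_id t).const_mul K).exp)
        simp only [id_eq, mul_one] at h1
        refine h1.congr_deriv ?_
        ring
      · intro t ht hge
        have hexp : (0:ℝ) < Real.exp (K * t) := Real.exp_pos _
        have hm0 : 0 ≤ P.lam t * C t - 1 := by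
          by_contra hx
          push_neg at hx
          nlinarith [mul_neg_of_neg_of_pos hx hexp]
        have h1 : 0 ≤ (P.eps t)⁻¹ * P.lam t * (B t + P.lam t * C t) ^ 2 :=
          mul_nonneg (mul_nonneg (hεipos t ht).le (hlpos t ht).le) (sq_nonneg _)
        have h2 : 0 ≤ (2 * P.beta t + gammaDot P t + K) * (P.lam t * C t - 1) :=
          mul_nonneg (hK t ht) hm0
        nlinarith [mul_nonneg (add_nonneg h1 h2) hexp.le]
      · have hlT : P.lam P.T ≠ 0 := (hlpos P.T hTmem).ne'
        rw [hCT, mul_inv_cancel₀ hlT]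
        simp
    intro t ht
    have h1 := key t ht
    have hexp : (0:ℝ) < Real.exp (K * t) := Real.exp_pos _
    nlinarith
  -- derivative of u = A + λ B
  have hu' : ∀ t ∈ Icc (0:ℝ) P.T, HasDerivAt (fun t => A t + P.lam t * B t)
      ((P.eps t)⁻¹ * ((A t + P.lam t * B t) + P.lam t * (B t + P.lam t * C t))
          * (A t + P.lam t * B t)
        + P.lam t * (P.beta t + gammaDot P t) * B t) t := by
    intro t ht
    have h1 := (hA t ht).fun_add ((P.hlam_deriv t).fun_mul (hB t ht))
    refine h1.congr_deriv ?_
    have hlne : P.lam t ≠ 0 := (hlpos t ht).ne'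
    rw [gammaDot]
    field_simp
    ring
  -- derivative of v = B + λ C
  have hv' : ∀ t ∈ Icc (0:ℝ) P.T, HasDerivAt (fun t => B t + P.lam t * C t)
      ((P.eps t)⁻¹ * ((A t + P.lam t * B t) + P.lam t * (B t + P.lam t * C t))
          * (B t + P.lam t * C t)
        + (2 * P.beta t + gammaDot P t) * (B t + P.lam t * C t)
        - (P.beta t + gammaDot P t) * B t - (2 * P.beta t + gammaDot P t)) t := by
    intro t ht
    have h1 := (hB t ht).fun_add ((P.hlam_deriv t).fun_mul (hC t ht))
    refine h1.congr_deriv ?_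
    have hlne : P.lam t ≠ 0 := (hlpos t ht).ne'
    rw [gammaDot]
    field_simp
    ring
  have hvT : B P.T + P.lam P.T * C P.T = 0 := by
    rw [hBT, hCT, mul_inv_cancel₀ (hlpos P.T hTmem).ne']
    ring
  have huT : A P.T + P.lam P.T * B P.T = 0 := by
    rw [hAT, hBT]; ring
  -- Step 2 : v > 0 on [0,T)
  have step2 : ∀ t ∈ Ico (0:ℝ) P.T, 0 < B t + P.lam t * C t := by
    by_contra hcon
    push_neg at hcon
    obtain ⟨t₀, ht₀, hv0⟩ := hcon
    set S := {t : ℝ | t ∈ Ico t₀ P.T ∧ B t + P.lam t * C t ≤ 0} with hSdef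
    have hne : S.Nonempty := ⟨t₀, ⟨le_rfl, ht₀.2⟩, hv0⟩
    have hbdd : BddAbove S := ⟨P.T, fun x hx => hx.1.2.le⟩
    set s := sSup S with hsdef
    have hst₀ : t₀ ≤ s := le_csSup hbdd ⟨⟨le_rfl, ht₀.2⟩, hv0⟩
    have hsT : s ≤ P.T := csSup_le hne fun x hx => hx.1.2.le
    have hs_mem : s ∈ Icc (0:ℝ) P.T := ⟨ht₀.1.trans hst₀, hsT⟩
    have hvd := hv' s hs_mem
    have hcont : ContinuousAt (fun t => B t + P.lam t * C t) s := hvd.continuousAt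
    have hscl : s ∈ closure S := csSup_mem_closure hne hbdd
    -- right positivity when s < T
    have hright : ∀ r ∈ Ioo s P.T, 0 < B r + P.lam r * C r := by
      intro r hr
      by_contra hc
      push_neg at hc
      exact absurd (le_csSup hbdd ⟨⟨hst₀.trans hr.1.le, hr.2⟩, hc⟩) (not_le.2 hr.1)
    -- v s = 0
    have hvs_le : B s + P.lam s * C s ≤ 0 := by
      have h1 : B s + P.lam s * C s ∈ closure ((fun t => B t + P.lam t * C t) '' S) :=
        hcont.continuousWithinAt.mem_closure_image hscl
      have h2 : closure ((fun t => B t + P.lam t * C t) '' S) ⊆ closure (Iic 0) :=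
        closure_mono (by rintro x ⟨y, hy, rfl⟩; exact hy.2)
      have := h2 h1
      rwa [closure_Iic] at this
    have hvs : B s + P.lam s * C s = 0 := by
      rcases eq_or_lt_of_le hsT with heq | hlt
      · rw [heq]; exact hvT
      · refine le_antisymm hvs_le ?_
        have htend : Tendsto (fun t => B t + P.lam t * C t) (𝓝[>] s)
            (𝓝 (B s + P.lam s * C s)) := hcont.continuousWithinAt
        refine ge_of_tendsto htend ?_
        filter_upwards [Ioo_mem_nhdsGT_of_mem ⟨le_rfl, hlt⟩] with r hr
        exact (hright r hr).le
    -- the derivative at s is nonnegative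
    have hslope : ∃ᶠ r in 𝓝[≠] s, 0 ≤ slope (fun t => B t + P.lam t * C t) s r := by
      rcases eq_or_lt_of_le hsT with heq | hlt
      · -- s = T : frequently points of S to the left
        have hfr : ∃ᶠ r in 𝓝 s, r ∈ S := mem_closure_iff_frequently.1 hscl
        rw [frequently_nhdsWithin_iff]
        refine hfr.mono ?_
        intro r hr
        have hrT : r < s := by rw [heq]; exact hr.1.2
        constructor
        · rw [slope_def_field, hvs]
          have h1 : B r + P.lam r * C r ≤ 0 := hr.2
          have h2 : r - s < 0 := by linarith
          have h3 : (r - s)⁻¹ ≤ 0 := inv_nonpos.2 h2.le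
          rw [div_eq_mul_inv]
          nlinarith
        · exact hrT.ne
      · -- s < T : eventually positive slope on the right
        have hev : ∀ᶠ r in 𝓝[>] s, 0 ≤ slope (fun t => B t + P.lam t * C t) s r := by
          filter_upwards [Ioo_mem_nhdsGT_of_mem ⟨le_rfl, hlt⟩] with r hr
          rw [slope_def_field, hvs]
          have h2 : 0 < r - s := by linarith [hr.1]
          simp only [sub_zero]
          exact div_nonneg (hright r hr).le h2.le
        exact (hev.frequently).filter_mono (nhdsWithin_mono s (fun x hx => ne_of_gt hx))
    have hd0 : 0 ≤ (P.eps s)⁻¹ * ((A s + P.lam s * B s) + P.lam s * (B s + P.lam s * C s))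
          * (B s + P.lam s * C s)
        + (2 * P.beta s + gammaDot P s) * (B s + P.lam s * C s)
        - (P.beta s + gammaDot P s) * B s - (2 * P.beta s + gammaDot P s) :=
      deriv_nonneg_of_frequently_slope hvd hslope
    rw [hvs] at hd0
    have hBs : B s = -(P.lam s * C s) := by linarith
    have hmle : P.lam s * C s ≤ 1 := step1 s hs_mem
    have hstr : 0 < P.beta s + gammaDot P s := hstrong s hs_mem
    have hβpos : 0 < P.beta s := P.hbeta_pos s hs_mem
    rw [hBs] at hd0
    have h5 : (P.beta s + gammaDot P s) * (P.lam s * C s) ≤ P.beta s + gammaDot P s :=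
      mul_le_of_le_one_right hstr.le hmle
    nlinarith
  -- continuity facts
  have hlcont : Continuous P.lam :=
    Differentiable.continuous (fun t => (P.hlam_deriv t).differentiableAt)
  have hAc : ContinuousOn A (Icc (0:ℝ) P.T) :=
    fun x hx => ((hA x hx).continuousAt).continuousWithinAt
  have hBc : ContinuousOn B (Icc (0:ℝ) P.T) :=
    fun x hx => ((hB x hx).continuousAt).continuousWithinAt
  have hCc : ContinuousOn C (Icc (0:ℝ) P.T) :=
    fun x hx => ((hC x hx).continuousAt).continuousWithinAt
  -- bounds for the Gronwall argument
  obtain ⟨N1, hN1⟩ := isCompact_Icc.exists_bound_of_continuousOn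
    (f := fun t => (A t + P.lam t * B t) + P.lam t * (B t + P.lam t * C t))
    (by fun_prop)
  obtain ⟨N2, hN2⟩ := isCompact_Icc.exists_bound_of_continuousOn
    (f := fun t => B t + P.lam t * C t) (by fun_prop)
  have hεinv_le : ∀ t ∈ Icc (0:ℝ) P.T, (P.eps t)⁻¹ ≤ cε⁻¹ :=
    fun t ht => inv_anti₀ hcε (hεlb t ht)
  obtain ⟨Ka, hKa⟩ : ∃ k : ℝ, k = cε⁻¹ * N1 := ⟨_, rfl⟩
  obtain ⟨Kb, hKb⟩ : ∃ k : ℝ, k = Ml * (Mβ + Ml2 / cl) := ⟨_, rfl⟩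
  obtain ⟨Kc, hKcdef⟩ : ∃ k : ℝ, k = cε⁻¹ * N2 := ⟨_, rfl⟩
  obtain ⟨M, hMdef⟩ : ∃ k : ℝ, k = 2 * Ka + Kb + Kc + 2 * Mβ := ⟨_, rfl⟩
  have habs : ∀ t ∈ Icc (0:ℝ) P.T,
      |(P.eps t)⁻¹ * ((A t + P.lam t * B t) + P.lam t * (B t + P.lam t * C t))| ≤ Ka ∧
      |P.lam t * (P.beta t + gammaDot P t)| ≤ Kb ∧
      |(P.eps t)⁻¹ * (B t + P.lam t * C t)| ≤ Kc ∧ |P.beta t| ≤ Mβ := by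
    intro t ht
    have hε1 : 0 ≤ (P.eps t)⁻¹ := (hεipos t ht).le
    have hε2 : (P.eps t)⁻¹ ≤ cε⁻¹ := hεinv_le t ht
    have hc1 : (0:ℝ) ≤ cε⁻¹ := (inv_pos.2 hcε).le
    have h1 := hN1 t ht
    have h2 := hN2 t ht
    rw [Real.norm_eq_abs] at h1 h2
    refine ⟨?_, ?_, ?_, hMβ t ht⟩
    · rw [hKa, abs_mul, abs_of_nonneg hε1]
      exact mul_le_mul hε2 h1 (abs_nonneg _) hc1
    · rw [hKb, abs_mul, abs_of_pos (hlpos t ht)]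
      have h3 : |P.beta t + gammaDot P t| ≤ Mβ + Ml2 / cl :=
        (abs_add_le _ _).trans (add_le_add (hMβ t ht) (hgbd t ht))
      exact mul_le_mul (hMl t ht) h3 (abs_nonneg _)
        ((hcl.trans_le (hllb t ht)).le.trans (hMl t ht))
    · rw [hKcdef, abs_mul, abs_of_nonneg hε1]
      exact mul_le_mul hε2 h2 (abs_nonneg _) hc1
  -- Gronwall: if u and B vanish simultaneously, contradiction
  have hgron : ∀ s ∈ Icc (0:ℝ) P.T, A s + P.lam s * B s = 0 → B s = 0 → False := by
    intro s hs hus hBs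
    set ψ : ℝ → ℝ := fun t =>
      ((A t + P.lam t * B t) * (A t + P.lam t * B t) + B t * B t) * Real.exp (-M * t)
      with hψdef
    have hψd : ∀ t ∈ Icc (0:ℝ) P.T, HasDerivAt ψ
        ((2 * (A t + P.lam t * B t) *
            ((P.eps t)⁻¹ * ((A t + P.lam t * B t) + P.lam t * (B t + P.lam t * C t))
              * (A t + P.lam t * B t) + P.lam t * (P.beta t + gammaDot P t) * B t)
          + 2 * B t *
            ((P.eps t)⁻¹ * (A t + P.lam t * B t) * (B t + P.lam t * C t) + P.beta t * B t)
          - M * ((A t + P.lam t * B t) * (A t + P.lam t * B t) + B t * B t))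
          * Real.exp (-M * t)) t := by
      intro t ht
      have h1 := (((hu' t ht).fun_mul (hu' t ht)).fun_add ((hB t ht).fun_mul (hB t ht))).fun_mul
        (((hasDerivAt_id t).const_mul (-M)).exp)
      simp only [id_eq, mul_one] at h1
      refine h1.congr_deriv ?_
      ring
    have hψle : ∀ t ∈ Icc (0:ℝ) P.T,
        (2 * (A t + P.lam t * B t) *
            ((P.eps t)⁻¹ * ((A t + P.lam t * B t) + P.lam t * (B t + P.lam t * C t))
              * (A t + P.lam t * B t) + P.lam t * (P.beta t + gammaDot P t) * B t)
          + 2 * B t *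
            ((P.eps t)⁻¹ * (A t + P.lam t * B t) * (B t + P.lam t * C t) + P.beta t * B t)
          - M * ((A t + P.lam t * B t) * (A t + P.lam t * B t) + B t * B t))
          * Real.exp (-M * t) ≤ 0 := by
      intro t ht
      obtain ⟨ha, hb, hc, hd⟩ := habs t ht
      apply mul_nonpos_of_nonpos_of_nonneg _ (Real.exp_pos _).le
      have key := quad_bound (x := A t + P.lam t * B t) (y := B t) ha hb hc hd
      rw [← hMdef] at key
      linarith [key]
    have hanti : AntitoneOn ψ (Icc s P.T) := by
      have hsub : Icc s P.T ⊆ Icc (0:ℝ) P.T := Icc_subset_Icc hs.1 le_rfl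
      apply antitoneOn_of_deriv_nonpos (convex_Icc _ _)
      · exact fun x hx => ((hψd x (hsub hx)).continuousAt).continuousWithinAt
      · intro x hx
        rw [interior_Icc] at hx
        exact ((hψd x (hsub (Ioo_subset_Icc_self hx))).differentiableAt).differentiableWithinAt
      · intro x hx
        rw [interior_Icc] at hx
        have hxm := hsub (Ioo_subset_Icc_self hx)
        rw [(hψd x hxm).deriv]
        exact hψle x hxm
    have h1 : ψ P.T ≤ ψ s := hanti ⟨le_rfl, hs.2⟩ ⟨hs.2, le_rfl⟩ hs.2
    have hAs : A s = 0 := by rw [hBs] at hus; simpa using hus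
    have h2 : ψ s = 0 := by simp only [hψdef, hAs, hBs]; ring
    have hATz : A P.T = P.lam P.T := hAT
    have h3 : ψ P.T = Real.exp (-M * P.T) := by
      simp only [hψdef, hATz, hBT]; ring
    have h4 : (0:ℝ) < Real.exp (-M * P.T) := Real.exp_pos _
    rw [h2, h3] at h1
    linarith
  -- Step 3 : u > 0 and B < 0 on [0,T)
  have step3 : ∀ t ∈ Ico (0:ℝ) P.T, 0 < A t + P.lam t * B t ∧ B t < 0 := by
    by_contra hcon
    push_neg at hcon
    obtain ⟨t₀, ht₀, hbad⟩ := hcon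
    have ht₀Q : A t₀ + P.lam t₀ * B t₀ ≤ 0 ∨ 0 ≤ B t₀ := by
      rcases le_or_gt (A t₀ + P.lam t₀ * B t₀) 0 with h | h
      · exact Or.inl h
      · exact Or.inr (hbad h)
    set S := {t : ℝ | t ∈ Ico t₀ P.T ∧ (A t + P.lam t * B t ≤ 0 ∨ 0 ≤ B t)} with hSdef
    have hne : S.Nonempty := ⟨t₀, ⟨le_rfl, ht₀.2⟩, ht₀Q⟩
    have hbdd : BddAbove S := ⟨P.T, fun x hx => hx.1.2.le⟩
    set s := sSup S with hsdef
    have hst₀ : t₀ ≤ s := le_csSup hbdd ⟨⟨le_rfl, ht₀.2⟩, ht₀Q⟩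
    have hsT : s ≤ P.T := csSup_le hne fun x hx => hx.1.2.le
    have hs_mem : s ∈ Icc (0:ℝ) P.T := ⟨ht₀.1.trans hst₀, hsT⟩
    have hud := hu' s hs_mem
    have hBd := hB s hs_mem
    have hcontu : ContinuousAt (fun t => A t + P.lam t * B t) s := hud.continuousAt
    have hcontB : ContinuousAt B s := hBd.continuousAt
    have hscl : s ∈ closure S := csSup_mem_closure hne hbdd
    have hright : ∀ r ∈ Ioo s P.T, 0 < A r + P.lam r * B r ∧ B r < 0 := by
      intro r hr
      by_contra hc
      push_neg at hc
      have hQ : A r + P.lam r * B r ≤ 0 ∨ 0 ≤ B r := by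
        rcases le_or_gt (A r + P.lam r * B r) 0 with h | h
        · exact Or.inl h
        · exact Or.inr (hc h)
      exact absurd (le_csSup hbdd ⟨⟨hst₀.trans hr.1.le, hr.2⟩, hQ⟩) (not_le.2 hr.1)
    have hfr : ∃ᶠ r in 𝓝 s, r ∈ S := mem_closure_iff_frequently.1 hscl
    have hfr2 : (∃ᶠ r in 𝓝 s, r ∈ Ico t₀ P.T ∧ A r + P.lam r * B r ≤ 0) ∨
        (∃ᶠ r in 𝓝 s, r ∈ Ico t₀ P.T ∧ 0 ≤ B r) := by
      rw [← frequently_or_distrib]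
      exact hfr.mono fun r hr => hr.2.elim (fun h => Or.inl ⟨hr.1, h⟩)
        (fun h => Or.inr ⟨hr.1, h⟩)
    rcases eq_or_lt_of_le hsT with heq | hlt
    · -- s = T
      have hBsT : B s = -1 := by rw [heq]; exact hBT
      have husT : A s + P.lam s * B s = 0 := by rw [heq]; exact huT
      have hfru : ∃ᶠ r in 𝓝 s, r ∈ Ico t₀ P.T ∧ A r + P.lam r * B r ≤ 0 := by
        rcases hfr2 with h | h
        · exact h
        · exfalso
          have hev : ∀ᶠ r in 𝓝 s, B r < 0 :=
            hcontB.eventually_lt_const (by rw [hBsT]; norm_num)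
          obtain ⟨r, h1, h2⟩ := (h.and_eventually hev).exists
          linarith [h1.2]
      have hslope : ∃ᶠ r in 𝓝[≠] s, 0 ≤ slope (fun t => A t + P.lam t * B t) s r := by
        rw [frequently_nhdsWithin_iff]
        refine hfru.mono ?_
        intro r hr
        have hrT : r < s := by rw [heq]; exact hr.1.2
        refine ⟨?_, hrT.ne⟩
        rw [slope_def_field]
        simp only [husT, sub_zero]
        have h2 : r - s < 0 := by linarith
        have h3 : (r - s)⁻¹ ≤ 0 := inv_nonpos.2 h2.le
        rw [div_eq_mul_inv, ← neg_mul_neg]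
        exact mul_nonneg (by linarith [hr.2]) (by linarith)
      have hd0 := deriv_nonneg_of_frequently_slope hud hslope
      rw [husT, hBsT] at hd0
      have hpos := mul_pos (hlpos s hs_mem) (hstrong s hs_mem)
      linarith [hd0, hpos]
    · -- s < T
      have hu_ge : 0 ≤ A s + P.lam s * B s := by
        have htend : Tendsto (fun t => A t + P.lam t * B t) (𝓝[>] s)
            (𝓝 (A s + P.lam s * B s)) := hcontu.continuousWithinAt
        refine ge_of_tendsto htend ?_
        filter_upwards [Ioo_mem_nhdsGT_of_mem ⟨le_rfl, hlt⟩] with r hr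
        exact (hright r hr).1.le
      have hB_le : B s ≤ 0 := by
        have htend : Tendsto B (𝓝[>] s) (𝓝 (B s)) := hcontB.continuousWithinAt
        refine le_of_tendsto htend ?_
        filter_upwards [Ioo_mem_nhdsGT_of_mem ⟨le_rfl, hlt⟩] with r hr
        exact (hright r hr).2.le
      have hQs : A s + P.lam s * B s ≤ 0 ∨ 0 ≤ B s := by
        rcases hfr2 with h | h
        · left
          by_contra hgt
          push_neg at hgt
          have hev : ∀ᶠ r in 𝓝 s, 0 < A r + P.lam r * B r :=
            hcontu.eventually_const_lt hgt
          obtain ⟨r, h1, h2⟩ := (h.and_eventually hev).exists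
          linarith [h1.2]
        · right
          by_contra hgt
          push_neg at hgt
          have hev : ∀ᶠ r in 𝓝 s, B r < 0 := hcontB.eventually_lt_const hgt
          obtain ⟨r, h1, h2⟩ := (h.and_eventually hev).exists
          linarith [h1.2]
      have hsIco : s ∈ Ico (0:ℝ) P.T := ⟨hs_mem.1, hlt⟩
      have hvpos := step2 s hsIco
      rcases hQs with hu0 | hB0
      · have hus : A s + P.lam s * B s = 0 := le_antisymm hu0 hu_ge
        rcases eq_or_lt_of_le hB_le with hBs0 | hBneg
        · exact hgron s hs_mem hus hBs0
        · -- u s = 0, B s < 0 : derivative of u at s must be ≥ 0, but it is < 0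
          have hslope : ∃ᶠ r in 𝓝[≠] s, 0 ≤ slope (fun t => A t + P.lam t * B t) s r := by
            have hev : ∀ᶠ r in 𝓝[>] s, 0 ≤ slope (fun t => A t + P.lam t * B t) s r := by
              filter_upwards [Ioo_mem_nhdsGT_of_mem ⟨le_rfl, hlt⟩] with r hr
              rw [slope_def_field]
              simp only [hus, sub_zero]
              have h2 : 0 < r - s := by linarith [hr.1]
              exact div_nonneg (hright r hr).1.le h2.le
            exact (hev.frequently).filter_mono (nhdsWithin_mono s fun x hx => ne_of_gt hx)
          have hd0 := deriv_nonneg_of_frequently_slope hud hslope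
          rw [hus] at hd0
          have hpos := mul_pos (hlpos s hs_mem) (hstrong s hs_mem)
          linarith [hd0, mul_neg_of_pos_of_neg hpos hBneg]
      · have hBs : B s = 0 := le_antisymm hB_le hB0
        rcases eq_or_lt_of_le hu_ge with hus0 | hupos
        · exact hgron s hs_mem hus0.symm hBs
        · -- B s = 0, u s > 0 : derivative of B at s must be ≤ 0, but it is > 0
          have hslope : ∃ᶠ r in 𝓝[≠] s, 0 ≤ slope (fun t => -B t) s r := by
            have hev : ∀ᶠ r in 𝓝[>] s, 0 ≤ slope (fun t => -B t) s r := by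
              filter_upwards [Ioo_mem_nhdsGT_of_mem ⟨le_rfl, hlt⟩] with r hr
              rw [slope_def_field]
              simp only [hBs, neg_zero, sub_zero]
              have h2 : 0 < r - s := by linarith [hr.1]
              exact div_nonneg (by linarith [(hright r hr).2]) h2.le
            exact (hev.frequently).filter_mono (nhdsWithin_mono s fun x hx => ne_of_gt hx)
          have hd0 := deriv_nonneg_of_frequently_slope hBd.neg hslope
          rw [hBs] at hd0
          simp only [mul_zero, add_zero, zero_add] at hd0
          have hAs : 0 < A s := by
            have := hupos; rw [hBs, mul_zero, add_zero] at this; exact this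
          have hlCs : 0 < P.lam s * C s := by
            have := hvpos; rwa [hBs, zero_add] at this
          have h5 : 0 < (P.eps s)⁻¹ * A s * (P.lam s * C s) :=
            mul_pos (mul_pos (hεipos s hs_mem) hAs) hlCs
          linarith [hd0, h5]
  -- conclusion
  intro t ht
  have h1 := (step3 t ht).1
  have h2 := hεipos t ⟨ht.1, ht.2.le⟩
  nlinarith [mul_pos h2 h1]
end

section
/- The feedback coefficient for the impact state satisfies g_t := −ε_t⁻¹(B_t + λ_t C_t) < 0 for every t ∈ [0, T) (a higher impact state causes slower selling). -/
open Set MeasureTheory Matrix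

private lemma stay_nonpos_s6 {f f' : ℝ → ℝ} {a b Kc : ℝ}
    (hd : ∀ t ∈ Icc a b, HasDerivAt f (f' t) t)
    (hb : f b = 0)
    (hgrow : ∀ t ∈ Icc a b, 0 < f t → 0 ≤ f' t + Kc * f t) :
    ∀ t ∈ Icc a b, f t ≤ 0 := by
  intro t ht
  by_contra hpos
  push_neg at hpos
  have htb : t ≤ b := ht.2
  have hsub : Icc t b ⊆ Icc a b := Icc_subset_Icc ht.1 le_rfl
  have hc : ContinuousOn f (Icc t b) := fun r hr =>
    ((hd r (hsub hr)).continuousAt).continuousWithinAt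
  have hclosed : IsClosed {r ∈ Icc t b | f r ≤ 0} := by
    have : {r ∈ Icc t b | f r ≤ 0} = Icc t b ∩ f ⁻¹' (Iic 0) := by
      ext r; simp [Set.mem_sep_iff, Set.mem_inter_iff]
    rw [this]
    exact hc.preimage_isClosed_of_isClosed isClosed_Icc isClosed_Iic
  have hbS : b ∈ {r ∈ Icc t b | f r ≤ 0} := ⟨⟨htb, le_rfl⟩, hb.le⟩
  have hSne : Set.Nonempty {r ∈ Icc t b | f r ≤ 0} := ⟨b, hbS⟩
  have hSbdd : BddBelow {r ∈ Icc t b | f r ≤ 0} := ⟨t, fun r hr => hr.1.1⟩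
  set s₁ := sInf {r ∈ Icc t b | f r ≤ 0} with hs₁def
  have hs₁S : s₁ ∈ {r ∈ Icc t b | f r ≤ 0} := hclosed.csInf_mem hSne hSbdd
  have hts₁ : t ≤ s₁ := le_csInf hSne (fun r hr => hr.1.1)
  have hlt : t < s₁ := by
    rcases eq_or_lt_of_le hts₁ with h | h
    · exact absurd (h ▸ hs₁S.2) (not_le.2 hpos)
    · exact h
  have hposleft : ∀ r ∈ Ico t s₁, 0 < f r := by
    intro r hr
    by_contra h
    push_neg at h
    have hrS : r ∈ {r ∈ Icc t b | f r ≤ 0} := ⟨⟨hr.1, hr.2.le.trans hs₁S.1.2⟩, h⟩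
    exact absurd (csInf_le hSbdd hrS) (not_le.2 hr.2)
  have hsub2 : Icc t s₁ ⊆ Icc a b := fun r hr =>
    hsub ⟨hr.1, hr.2.trans hs₁S.1.2⟩
  have hud : ∀ r ∈ Icc t s₁,
      HasDerivAt (fun x => f x * Real.exp (Kc * x))
        ((f' r + Kc * f r) * Real.exp (Kc * r)) r := by
    intro r hr
    have h1 := (hd r (hsub2 hr)).mul (((hasDerivAt_id r).const_mul Kc).exp)
    refine h1.congr_deriv ?_
    simp [id]
    ring
  have hmono : MonotoneOn (fun x => f x * Real.exp (Kc * x)) (Icc t s₁) := by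
    apply monotoneOn_of_deriv_nonneg (convex_Icc t s₁)
      (fun r hr => ((hud r hr).continuousAt).continuousWithinAt)
      (fun r hr => ((hud r (interior_subset hr)).differentiableAt).differentiableWithinAt)
    intro r hr
    rw [interior_Icc] at hr
    rw [(hud r ⟨hr.1.le, hr.2.le⟩).deriv]
    have hfr : 0 < f r := hposleft r ⟨hr.1.le, hr.2⟩
    have := hgrow r (hsub2 ⟨hr.1.le, hr.2.le⟩) hfr
    positivity
  have h1 := hmono ⟨le_rfl, hlt.le⟩ ⟨hlt.le, le_rfl⟩ hlt.le
  simp only at h1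
  nlinarith [Real.exp_pos (Kc * t), Real.exp_pos (Kc * s₁), hs₁S.2, hpos]

private lemma pos_propagate {f f' : ℝ → ℝ} {a b Kc : ℝ} (hab : a ≤ b)
    (hd : ∀ t ∈ Icc a b, HasDerivAt f (f' t) t)
    (hcond : ∀ t ∈ Ioo a b, f' t ≤ Kc * f t)
    (hb : 0 < f b) : 0 < f a := by
  rcases eq_or_lt_of_le hab with rfl | hab'
  · exact hb
  have hud : ∀ r ∈ Icc a b,
      HasDerivAt (fun x => f x * Real.exp (-(Kc * x)))
        ((f' r - Kc * f r) * Real.exp (-(Kc * r))) r := by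
    intro r hr
    have h1 := (hd r hr).mul ((((hasDerivAt_id r).const_mul Kc).neg).exp)
    refine h1.congr_deriv ?_
    simp [id]
    ring
  have hanti : AntitoneOn (fun x => f x * Real.exp (-(Kc * x))) (Icc a b) := by
    apply antitoneOn_of_deriv_nonpos (convex_Icc a b)
      (fun r hr => ((hud r hr).continuousAt).continuousWithinAt)
      (fun r hr => ((hud r (interior_subset hr)).differentiableAt).differentiableWithinAt)
    intro r hr
    rw [interior_Icc] at hr
    rw [(hud r ⟨hr.1.le, hr.2.le⟩).deriv]
    have := hcond r hr
    nlinarith [Real.exp_pos (-(Kc * r))]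
  have h1 := hanti ⟨le_rfl, hab⟩ ⟨hab, le_rfl⟩ hab
  simp only at h1
  nlinarith [Real.exp_pos (-(Kc * a)), Real.exp_pos (-(Kc * b))]

private lemma exists_neg_right {f : ℝ → ℝ} {d s b : ℝ} (h : HasDerivAt f d s)
    (hfs : f s = 0) (hd : d < 0) (hsb : s < b) :
    ∃ r, r ∈ Ioo s b ∧ f r < 0 := by
  have hs := hasDerivAt_iff_tendsto_slope.mp h
  have h1 : ∀ᶠ r in nhdsWithin s {s}ᶜ, slope f s r < 0 := hs.eventually_lt_const hd
  have h2 : ∀ᶠ r in nhdsWithin s (Ioi s), slope f s r < 0 :=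
    h1.filter_mono (nhdsWithin_mono s (fun x hx => ne_of_gt hx))
  have h3 : Ioo s b ∈ nhdsWithin s (Ioi s) := Ioo_mem_nhdsGT_of_mem ⟨le_rfl, hsb⟩
  obtain ⟨r, hr1, hr2⟩ := (h2.and (Filter.eventually_of_mem h3 (fun x hx => hx))).exists
  refine ⟨r, hr2, ?_⟩
  have hne : r - s ≠ 0 := sub_ne_zero.2 (ne_of_gt hr2.1)
  have : slope f s r = f r / (r - s) := by rw [slope_def_field, hfs, sub_zero]
  rw [this] at hr1
  have hrs : 0 < r - s := sub_pos.2 hr2.1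
  nlinarith [div_mul_cancel₀ (f r) hne]

private lemma eventually_pos_left_s6 {f : ℝ → ℝ} {d s : ℝ} (h : HasDerivAt f d s)
    (hfs : f s = 0) (hd : d < 0) :
    ∀ᶠ r in nhdsWithin s (Iio s), 0 < f r := by
  have hs := hasDerivAt_iff_tendsto_slope.mp h
  have h1 : ∀ᶠ r in nhdsWithin s {s}ᶜ, slope f s r < 0 := hs.eventually_lt_const hd
  have h2 : ∀ᶠ r in nhdsWithin s (Iio s), slope f s r < 0 :=
    h1.filter_mono (nhdsWithin_mono s (fun x hx => ne_of_lt hx))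
  have h3 : ∀ᶠ r in nhdsWithin s (Iio s), r < s := eventually_mem_nhdsWithin
  filter_upwards [h2, h3] with r hr1 hr2
  have hne : r - s ≠ 0 := sub_ne_zero.2 (ne_of_lt hr2)
  have hsl : slope f s r = f r / (r - s) := by rw [slope_def_field, hfs, sub_zero]
  rw [hsl] at hr1
  have hrs : r - s < 0 := sub_neg.2 hr2
  nlinarith [div_mul_cancel₀ (f r) hne]


set_option maxHeartbeats 1600000 in
/-- The feedback coefficient for the impact state satisfies
`g_t := −ε_t⁻¹(B_t + λ_t C_t) < 0` for every `t ∈ [0,T)`. -/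
theorem feedback_g_neg (P : Params)
    (A B C D E F K : ℝ → ℝ) (hsol : IsRiccatiSol P A B C D E F K) :
    ∀ t ∈ Ico (0:ℝ) P.T, -(P.eps t)⁻¹ * (B t + P.lam t * C t) < 0 := by
  obtain ⟨hA, hAT, hB, hBT, hC, hCT, hD, hDT, hE, hET, hF, hFT, hK, hKT⟩ := hsol
  clear hD hDT hE hET hF hFT hK hKT
  obtain ⟨cε, hcε, hεlb⟩ := P.heps_lb
  obtain ⟨clam, hclam, hllb⟩ := P.hlam_lb
  obtain ⟨Mb, hMb⟩ := P.hbeta_bdd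
  obtain ⟨Ml', hMl'⟩ := P.hlam'_bdd
  have hT0 : (0:ℝ) ≤ P.T := P.hT.le
  have h0m : (0:ℝ) ∈ Icc (0:ℝ) P.T := ⟨le_rfl, hT0⟩
  have hTm : P.T ∈ Icc (0:ℝ) P.T := ⟨hT0, le_rfl⟩
  have hlpos : ∀ t ∈ Icc (0:ℝ) P.T, 0 < P.lam t := fun t ht => lt_of_lt_of_le hclam (hllb t ht)
  have hlne : ∀ t ∈ Icc (0:ℝ) P.T, P.lam t ≠ 0 := fun t ht => ne_of_gt (hlpos t ht)
  have hεpos : ∀ t ∈ Icc (0:ℝ) P.T, 0 < P.eps t := fun t ht => lt_of_lt_of_le hcε (hεlb t ht)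
  have hεne : ∀ t ∈ Icc (0:ℝ) P.T, P.eps t ≠ 0 := fun t ht => ne_of_gt (hεpos t ht)
  have hεinv : ∀ t ∈ Icc (0:ℝ) P.T, (P.eps t)⁻¹ ≤ cε⁻¹ := fun t ht =>
    inv_anti₀ hcε (hεlb t ht)
  have hεinvpos : ∀ t ∈ Icc (0:ℝ) P.T, 0 < (P.eps t)⁻¹ := fun t ht =>
    inv_pos.2 (hεpos t ht)
  -- continuity
  have hAc : ContinuousOn A (Icc 0 P.T) := fun t ht => (hA t ht).continuousAt.continuousWithinAt
  have hBc : ContinuousOn B (Icc 0 P.T) := fun t ht => (hB t ht).continuousAt.continuousWithinAt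
  have hCc : ContinuousOn C (Icc 0 P.T) := fun t ht => (hC t ht).continuousAt.continuousWithinAt
  have hldiff : Differentiable ℝ P.lam := fun t => (P.hlam_deriv t).differentiableAt
  have hlc : Continuous P.lam := hldiff.continuous
  -- bounds
  obtain ⟨MA, hMA⟩ := isCompact_Icc.exists_bound_of_continuousOn hAc
  obtain ⟨MB, hMB⟩ := isCompact_Icc.exists_bound_of_continuousOn hBc
  obtain ⟨MC, hMC⟩ := isCompact_Icc.exists_bound_of_continuousOn hCc
  obtain ⟨ML, hML⟩ := isCompact_Icc.exists_bound_of_continuousOn (hlc.continuousOn (s := Icc 0 P.T))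
  simp only [Real.norm_eq_abs] at hMA hMB hMC hML
  have hMA0 : 0 ≤ MA := le_trans (abs_nonneg _) (hMA 0 h0m)
  have hMB0 : 0 ≤ MB := le_trans (abs_nonneg _) (hMB 0 h0m)
  have hMC0 : 0 ≤ MC := le_trans (abs_nonneg _) (hMC 0 h0m)
  have hML0 : 0 ≤ ML := le_trans (abs_nonneg _) (hML 0 h0m)
  have hMb0 : 0 ≤ Mb := le_trans (abs_nonneg _) (hMb 0 h0m)
  have hMl'0 : 0 ≤ Ml' := le_trans (abs_nonneg _) (hMl' 0)
  have hγb : ∀ t ∈ Icc (0:ℝ) P.T, |gammaDot P t| ≤ Ml' / clam := by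
    intro t ht
    rw [gammaDot, abs_div, abs_of_pos (hlpos t ht)]
    exact div_le_div₀ hMl'0 (hMl' t) hclam (hllb t ht)
  -- the functions
  set yF : ℝ → ℝ := fun s => B s + P.lam s * C s with hyF
  set aF : ℝ → ℝ := fun s =>
    (P.eps s)⁻¹ * ((A s + P.lam s * B s) + P.lam s * (B s + P.lam s * C s)) + P.beta s with haF
  set cF : ℝ → ℝ := fun s =>
    (P.eps s)⁻¹ * ((A s + P.lam s * B s) + P.lam s * (B s + P.lam s * C s)) + 2 * P.beta s
    with hcF
  set rF : ℝ → ℝ := fun s =>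
    -P.beta s + (P.beta s + gammaDot P s) * (P.lam s * C s - 1) with hrF
  set mF : ℝ → ℝ := fun s => A s * C s - B s * B s with hmF
  set qF : ℝ → ℝ := fun s => A s * (P.lam s)⁻¹ * (2 * P.beta s + gammaDot P s) with hqF
  -- constants
  obtain ⟨Kg, hKg0, hKgb⟩ : ∃ Kg : ℝ, 0 ≤ Kg ∧
      ∀ t ∈ Icc (0:ℝ) P.T, |2 * P.beta t + gammaDot P t| ≤ Kg := by
    refine ⟨2 * Mb + Ml' / clam, by positivity, fun t ht => ?_⟩
    have h2 := hMb t ht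
    have h3 := hγb t ht
    calc |2 * P.beta t + gammaDot P t| ≤ |2 * P.beta t| + |gammaDot P t| := abs_add_le _ _
      _ ≤ 2 * Mb + Ml' / clam := by
          rw [abs_mul, abs_two]; linarith
  have hXb : ∀ t ∈ Icc (0:ℝ) P.T,
      |(P.eps t)⁻¹ * ((A t + P.lam t * B t) + P.lam t * (B t + P.lam t * C t))|
        ≤ cε⁻¹ * ((MA + ML * MB) + ML * (MB + ML * MC)) := by
    intro t ht
    have e1 := hMA t ht
    have e2 := hMB t ht
    have e3 := hMC t ht
    have e4 := hML t ht
    have t2 : |B t + P.lam t * C t| ≤ MB + ML * MC := by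
      calc |B t + P.lam t * C t| ≤ |B t| + |P.lam t| * |C t| := by
            rw [← abs_mul]; exact abs_add_le _ _
        _ ≤ MB + ML * MC := add_le_add e2 (mul_le_mul e4 e3 (abs_nonneg _) hML0)
    have t1 : |A t + P.lam t * B t| ≤ MA + ML * MB := by
      calc |A t + P.lam t * B t| ≤ |A t| + |P.lam t| * |B t| := by
            rw [← abs_mul]; exact abs_add_le _ _
        _ ≤ MA + ML * MB := add_le_add e1 (mul_le_mul e4 e2 (abs_nonneg _) hML0)
    have t3 : |(A t + P.lam t * B t) + P.lam t * (B t + P.lam t * C t)|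
        ≤ (MA + ML * MB) + ML * (MB + ML * MC) := by
      calc |(A t + P.lam t * B t) + P.lam t * (B t + P.lam t * C t)|
          ≤ |A t + P.lam t * B t| + |P.lam t| * |B t + P.lam t * C t| := by
            rw [← abs_mul]; exact abs_add_le _ _
        _ ≤ (MA + ML * MB) + ML * (MB + ML * MC) :=
            add_le_add t1 (mul_le_mul e4 t2 (abs_nonneg _) hML0)
    rw [abs_mul, abs_of_pos (hεinvpos t ht)]
    exact mul_le_mul (hεinv t ht) t3 (abs_nonneg _) (inv_nonneg.2 hcε.le)
  obtain ⟨Kc, hKcb⟩ : ∃ Kc : ℝ,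
      ∀ t ∈ Icc (0:ℝ) P.T, |aF t| ≤ Kc ∧ |cF t| ≤ Kc := by
    refine ⟨cε⁻¹ * ((MA + ML * MB) + ML * (MB + ML * MC)) + 2 * Mb, fun t ht => ?_⟩
    have h1 := hXb t ht
    have h2 := hMb t ht
    have h3 : |2 * P.beta t| ≤ 2 * Mb := by rw [abs_mul, abs_two]; linarith
    constructor
    · simp only [haF]
      calc |(P.eps t)⁻¹ * ((A t + P.lam t * B t) + P.lam t * (B t + P.lam t * C t)) + P.beta t|
          ≤ |(P.eps t)⁻¹ * ((A t + P.lam t * B t) + P.lam t * (B t + P.lam t * C t))|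
            + |P.beta t| := abs_add_le _ _
        _ ≤ cε⁻¹ * ((MA + ML * MB) + ML * (MB + ML * MC)) + 2 * Mb := by linarith
    · simp only [hcF]
      calc |(P.eps t)⁻¹ * ((A t + P.lam t * B t) + P.lam t * (B t + P.lam t * C t))
            + 2 * P.beta t|
          ≤ |(P.eps t)⁻¹ * ((A t + P.lam t * B t) + P.lam t * (B t + P.lam t * C t))|
            + |2 * P.beta t| := abs_add_le _ _
        _ ≤ cε⁻¹ * ((MA + ML * MB) + ML * (MB + ML * MC)) + 2 * Mb := by linarith
  -- derivative of yF
  have hyd : ∀ t ∈ Icc (0:ℝ) P.T, HasDerivAt yF (aF t * yF t + rF t) t := by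
    intro t ht
    have h1 := (hB t ht).add ((P.hlam_deriv t).mul (hC t ht))
    rw [hyF]
    refine h1.congr_deriv ?_
    simp only [haF, hrF, hyF, gammaDot]
    field_simp [hlne t ht]
    ring
  -- derivative of mF
  have hmd : ∀ t ∈ Icc (0:ℝ) P.T, HasDerivAt mF (cF t * mF t - qF t) t := by
    intro t ht
    have h1 := ((hA t ht).mul (hC t ht)).sub ((hB t ht).mul (hB t ht))
    rw [hmF]
    refine h1.congr_deriv ?_
    simp only [hcF, hmF, hqF, gammaDot]
    field_simp [hlne t ht]
    ring
  
  -- λ·C ≤ 1 on [0,T]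
  have hwT : P.lam P.T * C P.T - 1 = 0 := by
    rw [hCT]; field_simp [hlne P.T hTm]; ring
  have key_w : ∀ t ∈ Icc (0:ℝ) P.T, P.lam t * C t ≤ 1 := by
    have hwd : ∀ t ∈ Icc (0:ℝ) P.T, HasDerivAt (fun s => P.lam s * C s - 1)
        ((2 * P.beta t + gammaDot P t) * (P.lam t * C t - 1)
          + P.lam t * ((P.eps t)⁻¹ * (B t + P.lam t * C t) ^ 2)) t := by
      intro t ht
      have h1 := ((P.hlam_deriv t).mul (hC t ht)).sub_const 1
      refine h1.congr_deriv ?_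
      simp only [gammaDot]
      field_simp [hlne t ht]
      ring
    have h := stay_nonpos_s6 (f := fun s => P.lam s * C s - 1)
      (f' := fun t => (2 * P.beta t + gammaDot P t) * (P.lam t * C t - 1)
          + P.lam t * ((P.eps t)⁻¹ * (B t + P.lam t * C t) ^ 2))
      (a := 0) (b := P.T) (Kc := Kg) hwd hwT ?_
    · intro t ht; have := h t ht; linarith
    · intro t ht hpos
      have h1 : 0 ≤ 2 * P.beta t + gammaDot P t + Kg := by
        have := abs_le.mp (hKgb t ht); linarith
      have h2 : 0 ≤ P.lam t * ((P.eps t)⁻¹ * (B t + P.lam t * C t) ^ 2) :=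
        mul_nonneg (hlpos t ht).le (mul_nonneg (hεinvpos t ht).le (sq_nonneg _))
      nlinarith [mul_nonneg h1 hpos.le]
  -- rF is nonpositive wherever λ·C is positive
  have hrFle : ∀ t ∈ Icc (0:ℝ) P.T, 0 < P.lam t * C t → rF t ≤ 0 := by
    intro t ht hz
    have hw := key_w t ht
    have hbp := P.hbeta_pos t ht
    have hna' : 0 < 2 * P.beta t + gammaDot P t := by
      simpa only [gammaDot] using P.hnoarb t ht
    simp only [hrF]
    nlinarith [mul_nonneg (by linarith : (0:ℝ) ≤ 1 - P.lam t * C t) hna'.le,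
      mul_pos hz hbp]
  -- terminal values
  have hyT : yF P.T = 0 := by
    simp only [hyF]; rw [hBT, hCT, mul_inv_cancel₀ (hlne P.T hTm)]; ring
  have hmT : mF P.T = 0 := by
    simp only [hmF]; rw [hAT, hBT, hCT, mul_inv_cancel₀ (hlne P.T hTm)]; ring
  have hwT' : P.lam P.T * C P.T = 1 := by linarith
  -- behaviour near T
  have hydT : HasDerivAt yF (-P.beta P.T) P.T := by
    have h := hyd P.T hTm
    have heq : aF P.T * yF P.T + rF P.T = -P.beta P.T := by
      rw [hyT]; simp only [hrF]; rw [hwT]; ring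
    rwa [heq] at h
  have hβT : 0 < P.beta P.T := P.hbeta_pos P.T hTm
  have hyev : ∀ᶠ r in nhdsWithin P.T (Iio P.T), 0 < yF r :=
    eventually_pos_left_s6 hydT hyT (by linarith)
  have hATpos : 0 < A P.T := by rw [hAT]; exact hlpos P.T hTm
  have hAev : ∀ᶠ r in nhdsWithin P.T (Iio P.T), 0 < A r :=
    (((hA P.T hTm).continuousAt).eventually (eventually_gt_nhds hATpos)).filter_mono
      nhdsWithin_le_nhds
  have hzc : ∀ t ∈ Icc (0:ℝ) P.T, ContinuousAt (fun s => P.lam s * C s) t := fun t ht =>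
    (hlc.continuousAt).mul (hC t ht).continuousAt
  have hzev : ∀ᶠ r in nhdsWithin P.T (Iio P.T), 0 < P.lam r * C r := by
    have h1 : (0:ℝ) < P.lam P.T * C P.T := by rw [hwT']; norm_num
    exact (((hzc P.T hTm).eventually (eventually_gt_nhds h1)).filter_mono nhdsWithin_le_nhds)
  -- the bootstrap set
  set S : Set ℝ := {t | t ∈ Icc (0:ℝ) P.T ∧
    ∀ s ∈ Ico t P.T, 0 < A s ∧ 0 < P.lam s * C s ∧ 0 < yF s} with hSdef
  have hTS : P.T ∈ S := ⟨hTm, fun s hs => absurd hs.2 (not_lt.2 hs.1)⟩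
  have hSne : S.Nonempty := ⟨P.T, hTS⟩
  have hSbdd : BddBelow S := ⟨0, fun r hr => hr.1.1⟩
  set τ := sInf S with hτdef
  have hτ0le : 0 ≤ τ := le_csInf hSne (fun r hr => hr.1.1)
  have hτleT : τ ≤ P.T := csInf_le hSbdd hTS
  have hτm : τ ∈ Icc (0:ℝ) P.T := ⟨hτ0le, hτleT⟩
  have hgood : ∀ s ∈ Ioo τ P.T, 0 < A s ∧ 0 < P.lam s * C s ∧ 0 < yF s := by
    intro s hs
    obtain ⟨t, htS, hts⟩ := exists_lt_of_csInf_lt hSne hs.1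
    exact htS.2 s ⟨hts.le, hs.2⟩
  -- τ < T
  have hτT : τ < P.T := by
    have hev := (hAev.and (hzev.and hyev))
    obtain ⟨u, huT, hsub⟩ := mem_nhdsLT_iff_exists_Ioo_subset.mp hev
    rw [mem_Iio] at huT
    have hu2 : u < max 0 ((u + P.T)/2) :=
      lt_of_lt_of_le (by linarith) (le_max_right _ _)
    have hmem : max 0 ((u + P.T)/2) ∈ S := by
      refine ⟨⟨le_max_left _ _, max_le hT0 (by linarith)⟩, ?_⟩
      intro s hs
      exact hsub ⟨lt_of_lt_of_le hu2 hs.1, hs.2⟩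
    have h1 : τ ≤ max 0 ((u + P.T)/2) := csInf_le hSbdd hmem
    have h2 : max 0 ((u + P.T)/2) < P.T := max_lt P.hT (by linarith)
    linarith
  -- q is positive inside, nonnegative at T
  have hqpos : ∀ s ∈ Ioo τ P.T, 0 < qF s := by
    intro s hs
    have hs' : s ∈ Icc (0:ℝ) P.T := ⟨hτ0le.trans hs.1.le, hs.2.le⟩
    have hna' : 0 < 2 * P.beta s + gammaDot P s := by
      simpa only [gammaDot] using P.hnoarb s hs'
    simp only [hqF]
    exact mul_pos (mul_pos (hgood s hs).1 (inv_pos.2 (hlpos s hs'))) hna'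
  have hqT : 0 ≤ qF P.T := by
    have hna' : 0 < 2 * P.beta P.T + gammaDot P P.T := by
      simpa only [gammaDot] using P.hnoarb P.T hTm
    simp only [hqF]
    exact le_of_lt (mul_pos (mul_pos hATpos (inv_pos.2 (hlpos P.T hTm))) hna')
  -- m ≥ 0 and then m > 0 on (τ, T)
  have hmnonneg : ∀ s ∈ Ioo τ P.T, 0 ≤ mF s := by
    intro s hs
    by_contra hneg
    push_neg at hneg
    have hsub2 : Icc s P.T ⊆ Icc (0:ℝ) P.T := fun r hr =>
      ⟨(hτ0le.trans hs.1.le).trans hr.1, hr.2⟩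
    have happ := stay_nonpos_s6 (f := fun r => -(mF r))
      (f' := fun r => -(cF r * mF r - qF r)) (a := s) (b := P.T) (Kc := Kc)
      (fun r hr => (hmd r (hsub2 hr)).neg)
      (by rw [hmT]; ring) ?_
    · have := happ s ⟨le_rfl, hs.2.le⟩
      linarith
    · intro r hr hfpos
      have hr' := hsub2 hr
      have hq : 0 ≤ qF r := by
        rcases eq_or_lt_of_le hr.2 with h | h
        · rw [h]; exact hqT
        · exact (hqpos r ⟨lt_of_lt_of_le hs.1 hr.1, h⟩).le
      have hcb := (abs_le.mp (hKcb r hr').2).1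
      nlinarith [mul_nonneg (by linarith : (0:ℝ) ≤ cF r + Kc)
        (by linarith : (0:ℝ) ≤ -(mF r))]
  have hmposIoo : ∀ s ∈ Ioo τ P.T, 0 < mF s := by
    intro s hs
    rcases (hmnonneg s hs).lt_or_eq with h | h
    · exact h
    · exfalso
      have hs' : s ∈ Icc (0:ℝ) P.T := ⟨hτ0le.trans hs.1.le, hs.2.le⟩
      have hds : HasDerivAt mF (-(qF s)) s := by
        have h1 := hmd s hs'
        rw [show cF s * mF s - qF s = -(qF s) by rw [← h]; ring] at h1
        exact h1
      obtain ⟨r, hr, hrneg⟩ := exists_neg_right hds h.symm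
        (by have := hqpos s hs; linarith) hs.2
      exact absurd (hmnonneg r ⟨hs.1.trans hr.1, hr.2⟩) (not_le.2 hrneg)
  -- propagate positivity back to τ
  set s₀ := (τ + P.T)/2 with hs₀def
  have hs₀ : s₀ ∈ Ioo τ P.T := ⟨by rw [hs₀def]; linarith, by rw [hs₀def]; linarith⟩
  have hsubτ : Icc τ s₀ ⊆ Icc (0:ℝ) P.T := fun r hr =>
    ⟨hτ0le.trans hr.1, hr.2.trans hs₀.2.le⟩
  have hmτ : 0 < mF τ := by
    apply pos_propagate (f := mF) (f' := fun r => cF r * mF r - qF r) (Kc := Kc)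
      hs₀.1.le (fun r hr => hmd r (hsubτ hr)) ?_ (hmposIoo s₀ hs₀)
    intro r hr
    have hrIoo : r ∈ Ioo τ P.T := ⟨hr.1, hr.2.trans hs₀.2⟩
    have hm := hmposIoo r hrIoo
    have hq := hqpos r hrIoo
    have hcb := (abs_le.mp (hKcb r (hsubτ ⟨hr.1.le, hr.2.le⟩)).2).2
    show cF r * mF r - qF r ≤ Kc * mF r
    nlinarith [mul_nonneg (sub_nonneg.2 hcb) hm.le]
  have hAτ : 0 < A τ := by
    have htd : Filter.Tendsto A (nhdsWithin τ (Ioi τ)) (nhds (A τ)) :=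
      ((hA τ hτm).continuousAt).tendsto.mono_left nhdsWithin_le_nhds
    have hAτnn : 0 ≤ A τ := by
      refine ge_of_tendsto htd ?_
      filter_upwards [Ioo_mem_nhdsGT_of_mem (⟨le_rfl, hτT⟩ : τ ∈ Ico τ P.T)] with r hr
      exact (hgood r hr).1.le
    rcases hAτnn.lt_or_eq with h | h
    · exact h
    · exfalso
      have hmν : mF τ = A τ * C τ - B τ * B τ := by simp only [hmF]
      rw [← h, zero_mul] at hmν
      nlinarith [mul_self_nonneg (B τ)]
  have hCτ : 0 < C τ := by
    have h1 : 0 < A τ * C τ := by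
      have hmν : mF τ = A τ * C τ - B τ * B τ := by simp only [hmF]
      nlinarith [mul_self_nonneg (B τ)]
    by_contra h
    push_neg at h
    nlinarith [mul_nonneg hAτ.le (neg_nonneg.2 h)]
  have hzτ : 0 < P.lam τ * C τ := mul_pos (hlpos τ hτm) hCτ
  have hyτ : 0 < yF τ := by
    apply pos_propagate (f := yF) (f' := fun r => aF r * yF r + rF r) (Kc := Kc)
      hs₀.1.le (fun r hr => hyd r (hsubτ hr)) ?_ ((hgood s₀ hs₀).2.2)
    intro r hr
    have hrIoo : r ∈ Ioo τ P.T := ⟨hr.1, hr.2.trans hs₀.2⟩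
    have hr' : r ∈ Icc (0:ℝ) P.T := ⟨hτ0le.trans hr.1.le, hr.2.le.trans hs₀.2.le⟩
    have hy := (hgood r hrIoo).2.2
    have hz := (hgood r hrIoo).2.1
    have hrle := hrFle r hr' hz
    have hab := (abs_le.mp (hKcb r hr').1).2
    show aF r * yF r + rF r ≤ Kc * yF r
    nlinarith [mul_nonneg (sub_nonneg.2 hab) hy.le]
  -- τ must be 0
  have hτ0 : τ = 0 := by
    by_contra hne
    have hτpos : 0 < τ := hτ0le.lt_of_ne (Ne.symm hne)
    have e1 : ∀ᶠ r in nhds τ, 0 < A r :=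
      ((hA τ hτm).continuousAt).eventually (eventually_gt_nhds hAτ)
    have e2 : ∀ᶠ r in nhds τ, 0 < P.lam r * C r :=
      (hzc τ hτm).eventually (eventually_gt_nhds hzτ)
    have e3 : ∀ᶠ r in nhds τ, 0 < yF r := by
      have hyc : ContinuousAt yF τ := by
        rw [hyF]
        exact ((hB τ hτm).continuousAt.add
          ((hlc.continuousAt).mul (hC τ hτm).continuousAt))
      exact hyc.eventually (eventually_gt_nhds hyτ)
    obtain ⟨δ, hδ, hball⟩ := Metric.eventually_nhds_iff.mp ((e1.and e2).and e3)
    have hmem : max 0 (τ - δ/2) ∈ S := by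
      refine ⟨⟨le_max_left _ _, max_le hT0 (by linarith)⟩, ?_⟩
      intro s hs
      rcases lt_or_ge τ s with h | h
      · exact hgood s ⟨h, hs.2⟩
      · have hs1 : τ - δ/2 ≤ s := le_trans (le_max_right _ _) hs.1
        have hd : dist s τ < δ := by
          rw [Real.dist_eq, abs_lt]
          constructor <;> linarith
        obtain ⟨⟨g1, g2⟩, g3⟩ := hball hd
        exact ⟨g1, g2, g3⟩
    have h1 : τ ≤ max 0 (τ - δ/2) := csInf_le hSbdd hmem
    have h2 : max 0 (τ - δ/2) < τ := max_lt hτpos (by linarith)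
    linarith
  -- conclusion
  intro t ht
  have ht' : t ∈ Icc (0:ℝ) P.T := ⟨ht.1, ht.2.le⟩
  have hy : 0 < yF t := by
    rcases eq_or_lt_of_le ht.1 with h | h
    · have hteq : t = τ := by rw [hτ0]; exact h.symm
      rw [hteq]; exact hyτ
    · exact (hgood t ⟨by rw [hτ0]; exact h, ht.2⟩).2.2
  have hεi : 0 < (P.eps t)⁻¹ := hεinvpos t ht'
  have hyy : yF t = B t + P.lam t * C t := by simp only [hyF]
  rw [← hyy]
  nlinarith [mul_pos hεi hy]
end

section
/- Assume the boundary case β_t + γ̇_t = 0 for all t ∈ [0, T]. Then f_t := −ε_t⁻¹(A_t + λ_t B_t) = 0 and h_t := −ε_t⁻¹(D_t + λ_t E_t) = 0 for all t ∈ [0, T], while g_t := −ε_t⁻¹(B_t + λ_t C_t) < 0 for all t ∈ [0, T): the optimal trading speed depends only on the current impact state and not on the outstanding position or the in-flow. -/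
open Set MeasureTheory Matrix Topology Filter

private lemma gronwall_zero {T : ℝ} (hT : 0 ≤ T) {φ ψ : ℝ → ℝ} {L : ℝ}
    (hd : ∀ t ∈ Icc (0:ℝ) T, HasDerivAt φ (ψ t) t)
    (hbd : ∀ t ∈ Icc (0:ℝ) T, |ψ t| ≤ L * |φ t|)
    (hend : φ T = 0) : ∀ t ∈ Icc (0:ℝ) T, φ t = 0 := by
  have hmem : ∀ t ∈ Icc (0:ℝ) T, T - t ∈ Icc (0:ℝ) T := fun t ht =>
    ⟨by linarith [ht.2], by linarith [ht.1]⟩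
  have hg : ∀ t ∈ Icc (0:ℝ) T, HasDerivAt (fun u => φ (T - u)) (ψ (T - t) * (-1)) t := by
    intro t ht
    exact (hd (T - t) (hmem t ht)).comp t ((hasDerivAt_id t).const_sub T)
  have key := norm_le_gronwallBound_of_norm_deriv_right_le
    (f := fun u => φ (T - u)) (f' := fun u => ψ (T - u) * (-1)) (δ := 0) (K := max L 0)
    (ε := 0) (a := 0) (b := T)
    (fun t ht => (hg t ht).continuousAt.continuousWithinAt)
    (fun t ht => (hg t (Ico_subset_Icc_self ht)).hasDerivWithinAt)
    (by simp [hend])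
    (fun t ht => by
      have h1 := hbd (T - t) (hmem t (Ico_subset_Icc_self ht))
      have h2 : (0:ℝ) ≤ |φ (T - t)| := abs_nonneg _
      have h3 : L * |φ (T - t)| ≤ max L 0 * |φ (T - t)| :=
        mul_le_mul_of_nonneg_right (le_max_left _ _) h2
      simp only [Real.norm_eq_abs, abs_mul, abs_neg, abs_one, mul_one]
      linarith)
  intro t ht
  have h := key (T - t) (hmem t ht)
  rw [gronwallBound_ε0, zero_mul] at h
  have h' : |φ t| ≤ 0 := by simpa [sub_sub_cancel] using h
  exact abs_eq_zero.mp (le_antisymm h' (abs_nonneg _))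


/-- In the boundary case `β_t + γ̇_t = 0` on `[0,T]`, one has
`f_t := −ε_t⁻¹(A_t + λ_t B_t) = 0` and `h_t := −ε_t⁻¹(D_t + λ_t E_t) = 0` on `[0,T]`,
while `g_t := −ε_t⁻¹(B_t + λ_t C_t) < 0` on `[0,T)`. -/
theorem feedback_boundary_case (P : Params)
    (hbdry : ∀ t ∈ Icc (0:ℝ) P.T, P.beta t + gammaDot P t = 0)
    (A B C D E F K : ℝ → ℝ) (hsol : IsRiccatiSol P A B C D E F K) :
    (∀ t ∈ Icc (0:ℝ) P.T, -(P.eps t)⁻¹ * (A t + P.lam t * B t) = 0) ∧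
    (∀ t ∈ Icc (0:ℝ) P.T, -(P.eps t)⁻¹ * (D t + P.lam t * E t) = 0) ∧
    (∀ t ∈ Ico (0:ℝ) P.T, -(P.eps t)⁻¹ * (B t + P.lam t * C t) < 0) := by
  obtain ⟨hA, hAT, hB, hBT, hC, hCT, hD, hDT, hE, hET, hF, hFT, hK, hKT⟩ := hsol
  obtain ⟨cε, hcε, hεlb⟩ := P.heps_lb
  obtain ⟨clam, hclam, hlamlb⟩ := P.hlam_lb
  obtain ⟨Mθ, hMθ⟩ := P.htheta_bdd
  have hT0 : (0:ℝ) ≤ P.T := le_of_lt P.hT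
  have hTmem : P.T ∈ Icc (0:ℝ) P.T := ⟨hT0, le_refl _⟩
  have hlamne : ∀ t ∈ Icc (0:ℝ) P.T, P.lam t ≠ 0 := fun t ht =>
    ne_of_gt (lt_of_lt_of_le hclam (hlamlb t ht))
  have hεpos : ∀ t ∈ Icc (0:ℝ) P.T, 0 < P.eps t := fun t ht =>
    lt_of_lt_of_le hcε (hεlb t ht)
  have hlam'eq : ∀ t ∈ Icc (0:ℝ) P.T, P.lam' t = -P.beta t * P.lam t := by
    intro t ht
    have h := hbdry t ht
    unfold gammaDot at h
    have hne := hlamne t ht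
    field_simp at h
    linarith
  have hγ : ∀ t ∈ Icc (0:ℝ) P.T, gammaDot P t = -P.beta t := by
    intro t ht
    unfold gammaDot
    rw [hlam'eq t ht]
    field_simp [hlamne t ht]
  -- the coefficient c t
  set c : ℝ → ℝ := fun t =>
    (P.eps t)⁻¹ * ((A t + P.lam t * B t) + P.lam t * (B t + P.lam t * C t)) with hcdef
  -- derivative of φ = A + λB
  have hφd : ∀ t ∈ Icc (0:ℝ) P.T,
      HasDerivAt (fun u => A u + P.lam u * B u) (c t * (A t + P.lam t * B t)) t := by
    intro t ht
    have h := (hA t ht).add ((P.hlam_deriv t).mul (hB t ht))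
    refine (h.congr_deriv ?_).congr_deriv rfl
    symm
    rw [hcdef]
    simp only
    rw [hlam'eq t ht]
    ring
  -- bound on c
  have hcontlam : ∀ t, ContinuousAt P.lam t := fun t => (P.hlam_deriv t).continuousAt
  have hcontOn : ContinuousOn
      (fun t => (A t + P.lam t * B t) + P.lam t * (B t + P.lam t * C t))
      (Icc (0:ℝ) P.T) := by
    intro t ht
    exact (((hA t ht).continuousAt.add ((hcontlam t).mul (hB t ht).continuousAt)).add
      ((hcontlam t).mul ((hB t ht).continuousAt.add
        ((hcontlam t).mul (hC t ht).continuousAt)))).continuousWithinAt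
  obtain ⟨Cu, hCu⟩ := isCompact_Icc.exists_bound_of_continuousOn hcontOn
  set L : ℝ := cε⁻¹ * max Cu 0 with hLdef
  have hL0 : 0 ≤ L := mul_nonneg (inv_nonneg.mpr hcε.le) (le_max_right _ _)
  have hcL : ∀ t ∈ Icc (0:ℝ) P.T, |c t| ≤ L := by
    intro t ht
    rw [hcdef]
    simp only
    rw [abs_mul]
    have h1 : |(P.eps t)⁻¹| ≤ cε⁻¹ := by
      rw [abs_of_pos (inv_pos.mpr (hεpos t ht))]
      exact inv_anti₀ hcε (hεlb t ht)
    have h2 : |(A t + P.lam t * B t) + P.lam t * (B t + P.lam t * C t)| ≤ max Cu 0 := by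
      refine le_trans ?_ (le_max_left _ _)
      simpa using hCu t ht
    exact mul_le_mul h1 h2 (abs_nonneg _) (inv_nonneg.mpr hcε.le)
  -- φ ≡ 0
  have hφ0 : ∀ t ∈ Icc (0:ℝ) P.T, A t + P.lam t * B t = 0 := by
    refine gronwall_zero hT0 (ψ := fun t => c t * (A t + P.lam t * B t)) (L := L) hφd ?_ ?_
    · intro t ht
      rw [abs_mul]
      exact mul_le_mul_of_nonneg_right (hcL t ht) (abs_nonneg _)
    · rw [hAT, hBT]; ring
  -- derivative of ψ = D + λE
  have hψd : ∀ t ∈ Icc (0:ℝ) P.T,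
      HasDerivAt (fun u => D u + P.lam u * E u)
        ((c t + P.theta t) * (D t + P.lam t * E t)) t := by
    intro t ht
    have h := (hD t ht).add ((P.hlam_deriv t).mul (hE t ht))
    refine (h.congr_deriv ?_).congr_deriv rfl
    symm
    have h0 := hφ0 t ht
    have hA' : A t = -(P.lam t * B t) := by linarith
    rw [hcdef]
    simp only
    rw [hlam'eq t ht, hA']
    ring
  have hψ0 : ∀ t ∈ Icc (0:ℝ) P.T, D t + P.lam t * E t = 0 := by
    refine gronwall_zero hT0 (ψ := fun t => (c t + P.theta t) * (D t + P.lam t * E t))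
      (L := L + max Mθ 0) hψd ?_ ?_
    · intro t ht
      rw [abs_mul]
      refine mul_le_mul_of_nonneg_right ?_ (abs_nonneg _)
      calc |c t + P.theta t| ≤ |c t| + |P.theta t| := abs_add_le _ _
        _ ≤ L + max Mθ 0 := add_le_add (hcL t ht) (le_trans (hMθ t ht) (le_max_left _ _))
    · rw [hDT, hET]; ring
  refine ⟨fun t ht => by rw [hφ0 t ht, mul_zero],
    fun t ht => by rw [hψ0 t ht, mul_zero], ?_⟩
  -- Part 3: χ = B + λC is positive on [0,T)
  have hχT : B P.T + P.lam P.T * C P.T = 0 := by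
    rw [hBT, hCT, mul_inv_cancel₀ (hlamne P.T hTmem)]; ring
  have hχcont : ∀ t ∈ Icc (0:ℝ) P.T, ContinuousAt (fun u => B u + P.lam u * C u) t :=
    fun t ht => (hB t ht).continuousAt.add ((hcontlam t).mul (hC t ht).continuousAt)
  have hχd : ∀ t ∈ Icc (0:ℝ) P.T, B t + P.lam t * C t = 0 →
      HasDerivAt (fun u => B u + P.lam u * C u) (-P.beta t) t := by
    intro t ht hz
    have h := (hB t ht).add ((P.hlam_deriv t).mul (hC t ht))
    refine (h.congr_deriv ?_).congr_deriv rfl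
    symm
    have hinv : P.lam t * (P.lam t)⁻¹ = 1 := mul_inv_cancel₀ (hlamne t ht)
    rw [hγ t ht, hlam'eq t ht, hφ0 t ht, hz]
    linear_combination (-P.beta t) * hz + P.beta t * hinv
  have hχpos : ∀ t ∈ Ico (0:ℝ) P.T, 0 < B t + P.lam t * C t := by
    by_contra hcon
    push_neg at hcon
    obtain ⟨t₀, ht₀, ht₀le⟩ := hcon
    -- χ > 0 just to the left of T
    have hderivT := hχd P.T hTmem hχT
    have hslopeT : ∀ᶠ u in 𝓝[≠] P.T,
        slope (fun u => B u + P.lam u * C u) P.T u < 0 :=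
      (hasDerivAt_iff_tendsto_slope.mp hderivT).eventually_lt_const
        (neg_neg_of_pos (P.hbeta_pos P.T hTmem))
    have hnear : ∀ᶠ u in 𝓝[<] P.T, 0 < B u + P.lam u * C u := by
      have hmonoT : 𝓝[<] P.T ≤ 𝓝[≠] P.T :=
        nhdsWithin_mono P.T (fun x hx => mem_compl_singleton_iff.mpr (ne_of_lt hx))
      filter_upwards [hslopeT.filter_mono hmonoT, self_mem_nhdsWithin] with u hu hu'
      rw [slope_def_field, hχT] at hu
      have hd : u - P.T < 0 := sub_neg.mpr (mem_Iio.mp hu')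
      rcases div_neg_iff.mp hu with ⟨h1, h2⟩ | ⟨h1, h2⟩
      · linarith
      · linarith
    obtain ⟨t₁, ht₁pos, ht₁mem⟩ :=
      (hnear.and (eventually_of_mem
        (Ioo_mem_nhdsLT_of_mem (⟨ht₀.2, le_refl P.T⟩ : P.T ∈ Ioc t₀ P.T))
        (fun x hx => hx))).exists
    have hsub : Icc t₀ t₁ ⊆ Icc (0:ℝ) P.T := fun x hx =>
      ⟨le_trans ht₀.1 hx.1, le_trans hx.2 (le_of_lt ht₁mem.2)⟩
    set S : Set ℝ := {u | u ∈ Icc t₀ t₁ ∧ B u + P.lam u * C u ≤ 0} with hSdef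
    have hSne : S.Nonempty := ⟨t₀, ⟨le_refl _, le_of_lt ht₁mem.1⟩, ht₀le⟩
    have hSbdd : BddAbove S := ⟨t₁, fun x hx => hx.1.2⟩
    have hSclosed : IsClosed S := by
      rw [← isOpen_compl_iff, isOpen_iff_mem_nhds]
      intro u hu
      by_cases h1 : u ∈ Icc t₀ t₁
      · have h2 : 0 < B u + P.lam u * C u := by
          by_contra h3
          push_neg at h3
          exact hu ⟨h1, h3⟩
        filter_upwards [Filter.Tendsto.eventually_const_lt h2 (hχcont u (hsub h1))]
          with v hv
        exact fun hvS => absurd hvS.2 (not_le.mpr hv)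
      · filter_upwards [isClosed_Icc.isOpen_compl.mem_nhds h1] with v hv
        exact fun hvS => hv hvS.1
    set s := sSup S with hsdef
    have hsS : s ∈ S := hSclosed.csSup_mem hSne hSbdd
    have hs1 : s < t₁ := lt_of_le_of_ne hsS.1.2 (fun h => by
      rw [h] at hsS; linarith [hsS.2, ht₁pos])
    have hsIcc : s ∈ Icc (0:ℝ) P.T := hsub hsS.1
    have hpos : ∀ u, s < u → u ≤ t₁ → 0 < B u + P.lam u * C u := by
      intro u h1 h2
      by_contra hle
      push_neg at hle
      have huS : u ∈ S := ⟨⟨le_trans hsS.1.1 h1.le, h2⟩, hle⟩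
      exact absurd (le_csSup hSbdd huS) (not_le.mpr h1)
    have hχs : B s + P.lam s * C s = 0 := by
      refine le_antisymm hsS.2 ?_
      by_contra hlt
      push_neg at hlt
      have hev : ∀ᶠ u in 𝓝 s, B u + P.lam u * C u < 0 :=
        Filter.Tendsto.eventually_lt_const hlt (hχcont s hsIcc)
      obtain ⟨u, hu1, hu2⟩ := ((hev.filter_mono (nhdsWithin_le_nhds (s := Ioi s))).and
        (eventually_of_mem
          (Ioo_mem_nhdsGT_of_mem (⟨le_refl s, hs1⟩ : s ∈ Ico s t₁))
          (fun x hx => hx))).exists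
      exact absurd hu1 (not_lt.mpr (hpos u hu2.1 hu2.2.le).le)
    have hds := hχd s hsIcc hχs
    have hslopes : ∀ᶠ u in 𝓝[≠] s,
        slope (fun u => B u + P.lam u * C u) s u < 0 :=
      (hasDerivAt_iff_tendsto_slope.mp hds).eventually_lt_const
        (neg_neg_of_pos (P.hbeta_pos s hsIcc))
    have hmono : 𝓝[>] s ≤ 𝓝[≠] s :=
      nhdsWithin_mono s (fun x hx => mem_compl_singleton_iff.mpr (ne_of_gt hx))
    obtain ⟨u, hsu, huIoo⟩ := ((hslopes.filter_mono hmono).and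
      (eventually_of_mem
        (Ioo_mem_nhdsGT_of_mem (⟨le_refl s, hs1⟩ : s ∈ Ico s t₁))
        (fun x hx => hx))).exists
    rw [slope_def_field, hχs] at hsu
    have hd : 0 < u - s := sub_pos.mpr huIoo.1
    have hnum : B u + P.lam u * C u < 0 := by
      rcases div_neg_iff.mp hsu with ⟨h1, h2⟩ | ⟨h1, h2⟩
      · linarith
      · linarith
    exact absurd hnum (not_lt.mpr (hpos u huIoo.1 huIoo.2.le).le)
  intro t ht
  have hχ := hχpos t ht
  have hε := hεpos t (Ico_subset_Icc_self ht)
  have hprod : 0 < (P.eps t)⁻¹ * (B t + P.lam t * C t) :=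
    mul_pos (inv_pos.mpr hε) hχ
  rw [neg_mul]
  exact neg_neg_of_pos hprod
end
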